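/- arXiv:2512.09857 — 12 statements merged into one kernel-verified Lean document; each statement's English description precedes it below -/
import Mathlib

section
/- Let H be an infinite-dimensional real Hilbert space, Y a locally convex topological vector space over ℝ, and 𝒯 a set of linear maps from H to Y. Then the set ⋃_{T ∈ 𝒯} T(B_H) is von Neumann bounded in Y if and only if for every orthonormal sequence (x_n) in H the set {T x_n : T ∈ 𝒯, n ∈ ℕ} is von Neumann bounded in Y. -/
open Set Submodule Metric Bornology Filter Finset Pointwise

section auxH

variable {H : Type*} [NormedAddCommGroup H] [InnerProductSpace ℝ H] [CompleteSpace H]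

local notation "⟪" x ", " y "⟫" => @inner ℝ _ _ x y

private lemma range_snoc' {n : ℕ} (v : Fin n → H) (w : H) :
    Set.range (Fin.snoc v w : Fin (n + 1) → H) = insert w (Set.range v) := by
  ext z
  constructor
  · rintro ⟨i, rfl⟩
    refine Fin.lastCases ?_ (fun j => ?_) i
    · rw [Fin.snoc_last]; exact Set.mem_insert _ _
    · rw [Fin.snoc_castSucc]; exact Set.mem_insert_of_mem _ ⟨j, rfl⟩
  · rintro (rfl | ⟨i, rfl⟩)
    · exact ⟨Fin.last n, Fin.snoc_last ..⟩
    · exact ⟨i.castSucc, Fin.snoc_castSucc ..⟩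

private lemma snoc_step (hH : ¬ FiniteDimensional ℝ H) {n : ℕ} (v : Fin n → H)
    (hv : Orthonormal ℝ v) (x : H) :
    ∃ w : H, Orthonormal ℝ (Fin.snoc v w : Fin (n + 1) → H) ∧
      x ∈ span ℝ (Set.range (Fin.snoc v w : Fin (n + 1) → H)) := by
  set F : Submodule ℝ H := span ℝ (Set.range v) with hF
  haveI : FiniteDimensional ℝ F := FiniteDimensional.span_of_finite ℝ (Set.finite_range v)
  have hFtop : F ≠ ⊤ := by
    intro htop
    apply hH
    have h1 : FiniteDimensional ℝ (⊤ : Submodule ℝ H) := htop ▸ inferInstance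
    exact Submodule.topEquiv.finiteDimensional
  obtain ⟨w, hw1, hwF, hxw⟩ : ∃ w : H, ‖w‖ = 1 ∧ w ∈ Fᗮ ∧ x ∈ F ⊔ (ℝ ∙ w) := by
    by_cases hq : x - (orthogonalProjection F x : H) = 0
    · obtain ⟨w', hw'F, hw'0⟩ := (Submodule.ne_bot_iff _).mp
        (fun hbot => hFtop (Submodule.orthogonal_eq_bot_iff.mp hbot))
      refine ⟨‖w'‖⁻¹ • w', norm_smul_inv_norm hw'0, Fᗮ.smul_mem _ hw'F, ?_⟩
      have hx : x = (orthogonalProjection F x : H) := by rwa [sub_eq_zero] at hq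
      exact Submodule.mem_sup_left (hx ▸ (orthogonalProjection F x).2)
    · set q := x - (orthogonalProjection F x : H) with hqdef
      have hqF : q ∈ Fᗮ := Submodule.sub_starProjection_mem_orthogonal (K := F) x
      refine ⟨‖q‖⁻¹ • q, norm_smul_inv_norm hq, Fᗮ.smul_mem _ hqF, ?_⟩
      have hx : x = (orthogonalProjection F x : H) + ‖q‖ • (‖q‖⁻¹ • q) := by
        rw [smul_smul, mul_inv_cancel₀ (norm_ne_zero_iff.mpr hq), one_smul, hqdef,
          add_sub_cancel]
      rw [hx]
      exact Submodule.add_mem_sup (orthogonalProjection F x).2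
        (Submodule.smul_mem _ _ (Submodule.mem_span_singleton_self _))
  have hwinner : ∀ u ∈ F, ⟪u, w⟫ = 0 := (Submodule.mem_orthogonal F w).mp hwF
  refine ⟨w, ?_, ?_⟩
  · rw [orthonormal_iff_ite] at hv ⊢
    intro i j
    refine Fin.lastCases ?_ (fun i' => ?_) i
    · refine Fin.lastCases ?_ (fun j' => ?_) j
      · simp [Fin.snoc_last, real_inner_self_eq_norm_mul_norm, hw1]
      · rw [Fin.snoc_last, Fin.snoc_castSucc, real_inner_comm,
          hwinner (v j') (subset_span ⟨j', rfl⟩), if_neg (Fin.castSucc_lt_last j').ne']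
    · refine Fin.lastCases ?_ (fun j' => ?_) j
      · rw [Fin.snoc_last, Fin.snoc_castSucc,
          hwinner (v i') (subset_span ⟨i', rfl⟩), if_neg (Fin.castSucc_lt_last i').ne]
      · rw [Fin.snoc_castSucc, Fin.snoc_castSucc, hv i' j']
        simp [Fin.castSucc_inj]
  · rw [range_snoc', Submodule.span_insert]
    rw [sup_comm]
    exact hxw

private noncomputable def chainAux (hH : ¬ FiniteDimensional ℝ H) (x : ℕ → H) :
    ∀ n : ℕ, {v : Fin n → H // Orthonormal ℝ v ∧ ∀ k, k < n → x k ∈ span ℝ (Set.range v)}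
  | 0 => ⟨Fin.elim0, by rw [orthonormal_iff_ite]; exact fun i => i.elim0,
      fun k hk => absurd hk (Nat.not_lt_zero k)⟩
  | n + 1 =>
    let p := chainAux hH x n
    let hstep := snoc_step hH p.1 p.2.1 (x n)
    ⟨Fin.snoc p.1 hstep.choose, hstep.choose_spec.1, by
      intro k hk
      rcases Nat.lt_succ_iff_lt_or_eq.mp hk with hk' | hk'
      · refine span_mono ?_ (p.2.2 k hk')
        rw [range_snoc']
        exact Set.subset_insert _ _
      · rw [hk']
        exact hstep.choose_spec.2⟩

private lemma chainAux_succ (hH : ¬ FiniteDimensional ℝ H) (x : ℕ → H) (n : ℕ) :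
    (chainAux hH x (n + 1)).1 =
      Fin.snoc (chainAux hH x n).1
        (snoc_step hH (chainAux hH x n).1 (chainAux hH x n).2.1 (x n)).choose := by
  rw [chainAux]

private lemma exists_orthonormal_capturing (hH : ¬ FiniteDimensional ℝ H) (x : ℕ → H) :
    ∃ e : ℕ → H, Orthonormal ℝ e ∧
      ∀ n, x n ∈ span ℝ (Set.range (fun i : Fin (n + 1) => e i.1)) := by
  set g := chainAux hH x with hg
  set E : ℕ → H := fun n => (g (n + 1)).1 (Fin.last n) with hE
  have hcoh : ∀ n (i : Fin n), (g n).1 i = E i.1 := by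
    intro n
    induction n with
    | zero => exact fun i => i.elim0
    | succ n ih =>
      intro i
      refine Fin.lastCases ?_ (fun j => ?_) i
      · rfl
      · have h1 : (g (n + 1)).1 j.castSucc = (g n).1 j := by
          rw [hg, chainAux_succ, Fin.snoc_castSucc]
        rw [h1]
        simpa using ih j
  have hfun : ∀ n, (g n).1 = fun i : Fin n => E i.1 := fun n => funext (hcoh n)
  have hkey : ∀ i j : ℕ, i ≤ j → ⟪E i, E j⟫ = if i = j then 1 else 0 := by
    intro i j hij
    have h1 := orthonormal_iff_ite.mp (g (j + 1)).2.1 ⟨i, by omega⟩ ⟨j, by omega⟩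
    rw [hcoh, hcoh] at h1
    simpa [Fin.mk.injEq] using h1
  refine ⟨E, ?_, ?_⟩
  · rw [orthonormal_iff_ite]
    intro i j
    rcases le_total i j with hij | hij
    · exact hkey i j hij
    · rw [real_inner_comm, hkey j i hij]
      simp [eq_comm]
  · intro n
    have := (g (n + 1)).2.2 n (Nat.lt_succ_self n)
    rwa [hfun] at this

end auxH

private lemma sum_mem_smul_of_absConvex {Y : Type*} [AddCommGroup Y] [Module ℝ Y]
    {W : Set Y} (hWb : Balanced ℝ W) (hWc : Convex ℝ W) (h0 : (0 : Y) ∈ W)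
    {ι : Type*} (s : Finset ι) (c : ι → ℝ) (y : ι → Y) (hy : ∀ i, y i ∈ W) :
    (∑ i ∈ s, c i • y i) ∈ ((∑ i ∈ s, |c i|) • W : Set Y) := by
  classical
  induction s using Finset.induction with
  | empty =>
    rw [Finset.sum_empty, Finset.sum_empty, Set.zero_smul_set ⟨0, h0⟩]
    exact rfl
  | @insert a s ha ih =>
    rw [Finset.sum_insert ha, Finset.sum_insert ha,
      hWc.add_smul (abs_nonneg _) (Finset.sum_nonneg fun i _ => abs_nonneg _)]
    exact Set.add_mem_add
      (hWb.smul_mono (le_of_eq (by simp)) (smul_mem_smul_set (hy a))) ih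

/-- A set `𝒯` of linear maps from an infinite-dimensional real Hilbert
space `H` to a locally convex TVS `Y` has `⋃_{T ∈ 𝒯} T(B_H)` von Neumann bounded
iff `{T xₙ : T ∈ 𝒯, n ∈ ℕ}` is von Neumann bounded for every orthonormal sequence. -/
theorem set_of_operators_vonNBounded_iff_bounded_along_orthonormal
    {H : Type*} [NormedAddCommGroup H] [InnerProductSpace ℝ H] [CompleteSpace H]
    (hH : ¬ FiniteDimensional ℝ H)
    {Y : Type*} [AddCommGroup Y] [Module ℝ Y] [TopologicalSpace Y]
    [IsTopologicalAddGroup Y] [ContinuousSMul ℝ Y] [LocallyConvexSpace ℝ Y]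
    (𝒯 : Set (H →ₗ[ℝ] Y)) :
    Bornology.IsVonNBounded ℝ (⋃ T ∈ 𝒯, T '' Metric.closedBall (0 : H) 1) ↔
      ∀ x : ℕ → H, Orthonormal ℝ x →
        Bornology.IsVonNBounded ℝ {y : Y | ∃ T ∈ 𝒯, ∃ n : ℕ, y = T (x n)} := by
  constructor
  · intro hU x hx
    refine hU.subset ?_
    rintro y ⟨T, hT, n, rfl⟩
    exact Set.mem_iUnion₂.mpr ⟨T, hT, ⟨x n, mem_closedBall_zero_iff.mpr (hx.1 n).le, rfl⟩⟩
  · intro h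
    by_contra hU
    simp only [Bornology.IsVonNBounded] at hU
    push_neg at hU
    obtain ⟨V, hV, hVabs⟩ := hU
    obtain ⟨W, ⟨hW0, hWb, hWc⟩, hWV⟩ := (nhds_hasBasis_absConvex ℝ Y).mem_iff.mp hV
    have hWabs : ¬ Absorbs ℝ W (⋃ T ∈ 𝒯, T '' Metric.closedBall (0 : H) 1) :=
      fun habs => hVabs (habs.mono_left hWV)
    have h0W : (0 : Y) ∈ W := mem_of_mem_nhds hW0
    have h1 : ∀ r : ℝ, ∃ T ∈ 𝒯, ∃ z : H, ‖z‖ ≤ 1 ∧ T z ∉ (r • W : Set Y) := by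
      intro r
      by_contra hcon
      push_neg at hcon
      apply hWabs
      rw [absorbs_iff_norm]
      refine ⟨|r|, fun c hc u hu => ?_⟩
      simp only [Set.mem_iUnion, Set.mem_image] at hu
      obtain ⟨T, hT, z, hz, rfl⟩ := hu
      exact hWb.smul_mono (by simpa using hc)
        (hcon T hT z (mem_closedBall_zero_iff.mp hz))
    choose T hT z hz hbad using fun n : ℕ => h1 (((n : ℝ) + 1) ^ 2)
    obtain ⟨e, he, hespan⟩ := exists_orthonormal_capturing hH z
    have key : ∀ n : ℕ, ∃ i : ℕ, T n (e i) ∉ (((n : ℝ) + 1) • W : Set Y) := by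
      intro n
      by_contra hcon
      push_neg at hcon
      apply hbad n
      obtain ⟨c, hc⟩ := (mem_span_range_iff_exists_fun ℝ).mp (hespan n)
      have heo : Orthonormal ℝ (fun i : Fin (n + 1) => e i.1) :=
        he.comp _ Fin.val_injective
      have hcb : ∀ i : Fin (n + 1), |c i| ≤ 1 := by
        intro i
        have h2 : c i = @inner ℝ _ _ (e i.1) (z n) := by
          rw [← hc]
          exact (heo.inner_right_fintype c i).symm
        rw [h2]
        calc |@inner ℝ _ _ (e i.1) (z n)| ≤ ‖e i.1‖ * ‖z n‖ := abs_real_inner_le_norm _ _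
          _ ≤ 1 * 1 := by
              have := he.1 i.1
              exact mul_le_mul this.le (hz n) (norm_nonneg _) zero_le_one
          _ = 1 := mul_one 1
      have hTz : T n (z n) = ∑ i : Fin (n + 1), c i • T n (e i.1) := by
        rw [← hc, map_sum]
        simp [map_smul]
      have hmem := sum_mem_smul_of_absConvex (hWb.smul ((n : ℝ) + 1)) (hWc.smul _)
        (by simpa using smul_mem_smul_set (a := ((n : ℝ) + 1)) h0W)
        (Finset.univ : Finset (Fin (n + 1))) c (fun i => T n (e i.1))
        (fun i => hcon i.1)
      rw [← hTz] at hmem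
      have hsub : ((∑ i : Fin (n + 1), |c i|) • (((n : ℝ) + 1) • W) : Set Y) ⊆
          ((((n : ℝ) + 1) ^ 2) • W : Set Y) := by
        rw [smul_smul]
        refine hWb.smul_mono ?_
        have hsum : (∑ i : Fin (n + 1), |c i|) ≤ (n : ℝ) + 1 := by
          calc (∑ i : Fin (n + 1), |c i|) ≤ ∑ _i : Fin (n + 1), (1 : ℝ) :=
              Finset.sum_le_sum fun i _ => hcb i
            _ = (n : ℝ) + 1 := by simp
        have hsumnn : (0 : ℝ) ≤ ∑ i : Fin (n + 1), |c i| :=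
          Finset.sum_nonneg fun i _ => abs_nonneg _
        have hn1 : (0 : ℝ) ≤ (n : ℝ) + 1 := by positivity
        rw [Real.norm_eq_abs, Real.norm_eq_abs, abs_of_nonneg (by positivity),
          abs_of_nonneg (by positivity)]
        calc (∑ i : Fin (n + 1), |c i|) * ((n : ℝ) + 1)
            ≤ ((n : ℝ) + 1) * ((n : ℝ) + 1) := by
              exact mul_le_mul_of_nonneg_right hsum hn1
          _ = ((n : ℝ) + 1) ^ 2 := (sq ((n : ℝ) + 1)).symm
      exact hsub hmem
    obtain ⟨R, hR⟩ := absorbs_iff_norm.mp (h e he hW0)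
    obtain ⟨n, hn⟩ := exists_nat_ge R
    obtain ⟨i, hi⟩ := key n
    refine hi (hR ((n : ℝ) + 1) ?_ ?_)
    · rw [Real.norm_eq_abs, abs_of_nonneg (by positivity)]
      linarith
    · exact ⟨T n, hT n, i, rfl⟩
end

section
/- Let H be an infinite-dimensional real Hilbert space, Y a locally convex topological vector space over ℝ, and 𝒯 a set of linear maps from H to Y. Then the set ⋃_{T ∈ 𝒯} T(B_H) is von Neumann bounded in Y if and only if for every norm-bounded pairwise orthogonal sequence (x_n) in H the set {T x_n : T ∈ 𝒯, n ∈ ℕ} is von Neumann bounded in Y. -/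
open Set Bornology Pointwise

section aux

lemma seminorm_sum_le' {Y : Type*} [AddCommGroup Y] [Module ℝ Y] {ι : Type*}
    (p : Seminorm ℝ Y) (s : Finset ι) (f : ι → Y) :
    p (∑ i ∈ s, f i) ≤ ∑ i ∈ s, p (f i) := by
  classical
  induction s using Finset.induction_on with
  | empty => simp
  | @insert a s h ih =>
    rw [Finset.sum_insert h, Finset.sum_insert h]
    exact (map_add_le_add p _ _).trans (by linarith)

lemma isVonNBounded_smul_of' {Y : Type*} [AddCommGroup Y] [Module ℝ Y] [TopologicalSpace Y]
    {s : Set Y} (c : ℝ) (hc : c ≠ 0) (h : IsVonNBounded ℝ s) :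
    IsVonNBounded ℝ (c • s) := by
  intro V hV
  rcases absorbs_iff_norm.1 (h hV) with ⟨r, hr⟩
  refine absorbs_iff_norm.2 ⟨|r| * ‖c‖, fun a ha => ?_⟩
  have hc0 : (0:ℝ) < ‖c‖ := norm_pos_iff.2 hc
  have h1 : s ⊆ (c⁻¹ * a) • V := by
    refine hr _ ?_
    rw [norm_mul, norm_inv]
    have h4 : |r| = ‖c‖⁻¹ * (|r| * ‖c‖) := by
      rw [mul_comm (|r|) ‖c‖, inv_mul_cancel_left₀ (ne_of_gt hc0)]
    have h5 : ‖c‖⁻¹ * (|r| * ‖c‖) ≤ ‖c‖⁻¹ * ‖a‖ :=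
      mul_le_mul_of_nonneg_left ha (by positivity)
    linarith [le_abs_self r]
  calc c • s ⊆ c • ((c⁻¹ * a) • V) := smul_set_mono h1
    _ = (c * (c⁻¹ * a)) • V := (smul_smul _ _ _)
    _ = a • V := by rw [mul_inv_cancel_left₀ hc]

/-- Key step: find a unit vector orthogonal to a given finite set on which some operator
is large in the seminorm `p`. -/
lemma key_step' {H : Type*} [NormedAddCommGroup H] [InnerProductSpace ℝ H] [CompleteSpace H]
    {Y : Type*} [AddCommGroup Y] [Module ℝ Y]
    (𝒯 : Set (H →ₗ[ℝ] Y)) (p : Seminorm ℝ Y)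
    (hpt : ∀ y : H, ∃ M, ∀ T ∈ 𝒯, p (T y) ≤ M)
    (hunb : ∀ r : ℝ, ∃ T ∈ 𝒯, ∃ x : H, ‖x‖ ≤ 1 ∧ r < p (T x))
    (s : Finset H) (r : ℝ) :
    ∃ T ∈ 𝒯, ∃ y : H, ‖y‖ ≤ 1 ∧ (∀ z ∈ s, inner ℝ z y = (0:ℝ)) ∧ r < p (T y) := by
  classical
  set K : Submodule ℝ H := Submodule.span ℝ (s : Set H) with hK
  haveI : FiniteDimensional ℝ K := FiniteDimensional.span_finset ℝ s
  obtain ⟨M, hM0, hM⟩ : ∃ M, 0 ≤ M ∧ ∀ T ∈ 𝒯, ∀ x : H, x ∈ K → ‖x‖ ≤ 1 → p (T x) ≤ M := by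
    let b := stdOrthonormalBasis ℝ K
    choose Mf hMf using hpt
    refine ⟨∑ i, max (Mf (b i : H)) 0, Finset.sum_nonneg fun i _ => le_max_right _ _,
      fun T hT x hxK hx1 => ?_⟩
    have hx : (⟨x, hxK⟩ : K) = ∑ i, b.repr ⟨x, hxK⟩ i • b i := (b.sum_repr _).symm
    have hxH : x = ∑ i, b.repr ⟨x, hxK⟩ i • (b i : H) := by
      have := congrArg (Submodule.subtype K) hx
      simpa using this
    rw [hxH, map_sum]
    refine (seminorm_sum_le' p _ _).trans ?_
    refine Finset.sum_le_sum fun i _ => ?_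
    rw [map_smul, map_smul_eq_mul]
    have h1 : |b.repr ⟨x, hxK⟩ i| ≤ 1 := by
      have h2 : |b.repr ⟨x, hxK⟩ i| ≤ ‖(⟨x, hxK⟩ : K)‖ := by
        rw [b.repr_apply_apply]
        have h4 := abs_real_inner_le_norm (b i) (⟨x, hxK⟩ : K)
        rwa [b.orthonormal.1 i, one_mul] at h4
      have h3 : ‖(⟨x, hxK⟩ : K)‖ = ‖x‖ := rfl
      rw [h3] at h2
      exact h2.trans hx1
    calc |b.repr ⟨x, hxK⟩ i| * p (T (b i : H)) ≤ 1 * max (Mf (b i : H)) 0 := by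
          refine mul_le_mul h1 ((hMf _ T hT).trans (le_max_left _ _)) (apply_nonneg p _) one_pos.le
      _ = max (Mf (b i : H)) 0 := one_mul _
  obtain ⟨T, hT, x, hx1, hpx⟩ := hunb (r + M)
  set v : H := (K.orthogonalProjectionOnto x : H) with hv
  have hvK : v ∈ K := (K.orthogonalProjectionOnto x).2
  have hyo : x - v ∈ Kᗮ := K.sub_starProjection_mem_orthogonal x
  have hvn : ‖v‖ ≤ ‖x‖ := by
    have := (K.orthogonalProjectionOnto).le_of_opNorm_le (Submodule.orthogonalProjectionOnto_norm_le K) x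
    exact (by simpa using this : ‖K.starProjection x‖ ≤ ‖x‖)
  have hsub : ‖x - v‖ ≤ ‖x‖ := by
    have hz : (inner ℝ v (x - v) : ℝ) = 0 :=
      (Submodule.mem_orthogonal K (x - v)).1 hyo v hvK
    have h2 : ‖x - v‖ * ‖x - v‖ ≤ ‖x - v‖ * ‖x‖ := by
      have e1 : (inner ℝ (x - v) (x - v) : ℝ) = (inner ℝ (x - v) x : ℝ) - (inner ℝ (x - v) v : ℝ) :=
        inner_sub_right _ _ _
      have e2 : (inner ℝ (x - v) v : ℝ) = 0 := by rw [real_inner_comm]; exact hz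
      have e3 : (inner ℝ (x - v) x : ℝ) ≤ ‖x - v‖ * ‖x‖ := real_inner_le_norm _ _
      calc ‖x - v‖ * ‖x - v‖ = (inner ℝ (x - v) (x - v) : ℝ) :=
            (real_inner_self_eq_norm_mul_norm _).symm
        _ = (inner ℝ (x - v) x : ℝ) - (inner ℝ (x - v) v : ℝ) := e1
        _ = (inner ℝ (x - v) x : ℝ) := by rw [e2, sub_zero]
        _ ≤ ‖x - v‖ * ‖x‖ := e3
    rcases eq_or_lt_of_le (norm_nonneg (x - v)) with h0 | h0
    · rw [← h0]; exact norm_nonneg x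
    · exact le_of_mul_le_mul_left (by linarith [h2]) h0
  refine ⟨T, hT, x - v, hsub.trans hx1, fun z hz => ?_, ?_⟩
  · exact (Submodule.mem_orthogonal K (x - v)).1 hyo z (Submodule.subset_span hz)
  · have hv1 : ‖v‖ ≤ 1 := hvn.trans hx1
    have hMv : p (T v) ≤ M := hM T hT v hvK hv1
    have htri : p (T x) ≤ p (T (x - v)) + p (T v) := by
      have : T (x - v) + T v = T x := by rw [map_sub, sub_add_cancel]
      calc p (T x) = p (T (x - v) + T v) := by rw [this]
        _ ≤ p (T (x - v)) + p (T v) := map_add_le_add p _ _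
    linarith

lemma exists_orthogonal_seq' {H : Type*} [NormedAddCommGroup H] [InnerProductSpace ℝ H]
    [CompleteSpace H] {Y : Type*} [AddCommGroup Y] [Module ℝ Y]
    (𝒯 : Set (H →ₗ[ℝ] Y)) (p : Seminorm ℝ Y)
    (hpt : ∀ y : H, ∃ M, ∀ T ∈ 𝒯, p (T y) ≤ M)
    (hunb : ∀ r : ℝ, ∃ T ∈ 𝒯, ∃ x : H, ‖x‖ ≤ 1 ∧ r < p (T x)) :
    ∃ f : ℕ → H × (H →ₗ[ℝ] Y), (∀ n, ‖(f n).1‖ ≤ 1 ∧ (f n).2 ∈ 𝒯) ∧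
      (∀ n m, n ≠ m → inner ℝ ((f n).1) ((f m).1) = (0:ℝ)) ∧
      (∀ n : ℕ, (n:ℝ) ≤ p ((f n).2 (f n).1)) := by
  classical
  obtain ⟨f, hfP, hfr⟩ := exists_seq_of_forall_finset_exists
    (fun a : H × (H →ₗ[ℝ] Y) => ‖a.1‖ ≤ 1 ∧ a.2 ∈ 𝒯)
    (fun a b => inner ℝ a.1 b.1 = (0:ℝ) ∧ p (a.2 a.1) + 1 ≤ p (b.2 b.1))
    (by
      intro s hs
      obtain ⟨r₀, hr₀⟩ := (s.image fun a => p (a.2 a.1)).exists_le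
      obtain ⟨T, hT, y, hy1, hyo, hyp⟩ := key_step' 𝒯 p hpt hunb (s.image Prod.fst) (r₀ + 1)
      refine ⟨(y, T), ⟨hy1, hT⟩, fun a ha => ⟨?_, ?_⟩⟩
      · exact hyo a.1 (Finset.mem_image_of_mem _ ha)
      · have h5 := hr₀ _ (Finset.mem_image_of_mem (fun a => p (a.2 a.1)) ha)
        show p (a.2 a.1) + 1 ≤ p (T y)
        linarith)
  refine ⟨f, hfP, ?_, ?_⟩
  · intro n m hnm
    rcases hnm.lt_or_gt with h | h
    · exact (hfr n m h).1
    · rw [real_inner_comm]; exact (hfr m n h).1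
  · intro n
    induction n with
    | zero => simpa using apply_nonneg p _
    | succ n ih =>
      have h2 := (hfr n (n+1) (Nat.lt_succ_self n)).2
      push_cast
      linarith

end aux

set_option maxHeartbeats 1000000 in
/-- `⋃_{T ∈ 𝒯} T(B_H)` is von Neumann bounded iff `{T xₙ}` is von Neumann
bounded for every norm-bounded pairwise orthogonal sequence `(xₙ)` in `H`. -/
theorem set_of_operators_vonNBounded_iff_bounded_along_orthogonal
    {H : Type*} [NormedAddCommGroup H] [InnerProductSpace ℝ H] [CompleteSpace H]
    (hH : ¬ FiniteDimensional ℝ H)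
    {Y : Type*} [AddCommGroup Y] [Module ℝ Y] [TopologicalSpace Y]
    [IsTopologicalAddGroup Y] [ContinuousSMul ℝ Y] [LocallyConvexSpace ℝ Y]
    (𝒯 : Set (H →ₗ[ℝ] Y)) :
    Bornology.IsVonNBounded ℝ (⋃ T ∈ 𝒯, T '' Metric.closedBall (0 : H) 1) ↔
      ∀ x : ℕ → H, (∀ n m, n ≠ m → inner ℝ (x n) (x m) = (0 : ℝ)) →
        (∃ C : ℝ, ∀ n, ‖x n‖ ≤ C) →
        Bornology.IsVonNBounded ℝ {y : Y | ∃ T ∈ 𝒯, ∃ n : ℕ, y = T (x n)} := by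
  classical
  constructor
  · rintro h x - ⟨C, hC⟩
    set c := max C 1 with hc
    have hc1 : (1:ℝ) ≤ c := le_max_right _ _
    have hcpos : (0:ℝ) < c := lt_of_lt_of_le one_pos hc1
    have hc0 : c ≠ 0 := ne_of_gt hcpos
    have hsub : {y : Y | ∃ T ∈ 𝒯, ∃ n : ℕ, y = T (x n)} ⊆
        c • (⋃ T ∈ 𝒯, T '' Metric.closedBall (0 : H) 1) := by
      rintro y ⟨T, hT, n, rfl⟩
      refine ⟨T (c⁻¹ • x n), ?_, ?_⟩
      · simp only [mem_iUnion, mem_image]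
        refine ⟨T, hT, c⁻¹ • x n, ?_, rfl⟩
        rw [Metric.mem_closedBall, dist_zero_right, norm_smul, norm_inv, Real.norm_eq_abs,
          abs_of_pos hcpos]
        have hxc : ‖x n‖ ≤ c := (hC n).trans (le_max_left _ _)
        rw [inv_mul_le_iff₀ hcpos, mul_one]
        exact hxc
      · show c • T (c⁻¹ • x n) = T (x n)
        rw [← map_smul, smul_inv_smul₀ hc0]
    exact Bornology.IsVonNBounded.subset hsub (isVonNBounded_smul_of' c hc0 h)
  · intro hseq
    by_contra hS
    rw [Bornology.isVonNBounded_iff] at hS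
    push_neg at hS
    obtain ⟨V₀, hV₀, hnA₀⟩ := hS
    obtain ⟨V, ⟨hVmem, hVbal, hVconv⟩, hVsub⟩ := (nhds_hasBasis_absConvex ℝ Y).mem_iff.1 hV₀
    have hnA : ¬ Absorbs ℝ V (⋃ T ∈ 𝒯, T '' Metric.closedBall (0 : H) 1) :=
      fun h => hnA₀ (h.mono_left hVsub)
    have habs : Absorbent ℝ V := absorbent_nhds_zero hVmem
    set p : Seminorm ℝ Y := gaugeSeminorm hVbal hVconv habs with hp
    have hpg : ∀ y : Y, p y = gauge V y := fun y => rfl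
    -- membership from small gauge
    have hG2 : ∀ (x : Y) (c : ℝ), c ≠ 0 → p x < ‖c‖ → x ∈ c • V := by
      intro x c hc hpc
      have hc0 : (0:ℝ) < ‖c‖ := norm_pos_iff.2 hc
      have h1 : gauge V (c⁻¹ • x) < 1 := by
        rw [gauge_smul hVbal, norm_inv]
        rw [inv_mul_lt_iff₀ hc0, mul_one]
        rw [← hpg]
        exact hpc
      have h2 : c⁻¹ • x ∈ V := gauge_lt_one_subset_self hVconv (mem_of_mem_nhds hVmem) habs h1
      exact ⟨c⁻¹ • x, h2, smul_inv_smul₀ hc x⟩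
    -- bounded sets have bounded gauge
    have hbd : ∀ S' : Set Y, IsVonNBounded ℝ S' → ∃ M, ∀ y ∈ S', p y ≤ M := by
      intro S' h
      obtain ⟨r, hr0, hr⟩ := (h hVmem).exists_pos
      refine ⟨r, fun y hy => ?_⟩
      have hmem : y ∈ (r : ℝ) • V := hr r (by rw [Real.norm_eq_abs, abs_of_pos hr0]) hy
      rw [hpg]
      exact gauge_le_of_mem hr0.le hmem
    -- pointwise bounds
    have hpt : ∀ y : H, ∃ M, ∀ T ∈ 𝒯, p (T y) ≤ M := by
      intro y
      have horth : ∀ n m : ℕ, n ≠ m →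
          inner ℝ ((fun n => if n = 0 then y else 0) n) ((fun n => if n = 0 then y else 0) m)
            = (0:ℝ) := by
        intro n m hnm
        by_cases hn : n = 0
        · have hm : m ≠ 0 := by rw [hn] at hnm; exact fun h => hnm h.symm
          simp [hn, hm]
        · simp [hn]
      have hbound : ∃ C : ℝ, ∀ n : ℕ, ‖(fun n => if n = 0 then y else 0) n‖ ≤ C := by
        refine ⟨‖y‖, fun n => ?_⟩
        by_cases hn : n = 0 <;> simp [hn]
      have hb := hseq _ horth hbound
      obtain ⟨M, hM⟩ := hbd _ hb
      exact ⟨M, fun T hT => hM _ ⟨T, hT, 0, by simp⟩⟩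
    -- unboundedness in the seminorm
    have hunb : ∀ r : ℝ, ∃ T ∈ 𝒯, ∃ x : H, ‖x‖ ≤ 1 ∧ r < p (T x) := by
      intro r
      by_contra hcon
      push_neg at hcon
      apply hnA
      refine absorbs_iff_norm.2 ⟨|r| + 1, fun c hcnorm => ?_⟩
      intro y hy
      simp only [mem_iUnion, mem_image] at hy
      obtain ⟨T, hT, x, hx, rfl⟩ := hy
      have hc0 : c ≠ 0 := by
        intro h
        rw [h, norm_zero] at hcnorm
        linarith [abs_nonneg r]
      refine hG2 _ c hc0 ?_
      have hx1 : ‖x‖ ≤ 1 := by rwa [Metric.mem_closedBall, dist_zero_right] at hx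
      have hple : p (T x) ≤ r := hcon T hT x hx1
      calc p (T x) ≤ r := hple
        _ ≤ |r| := le_abs_self r
        _ < |r| + 1 := by linarith
        _ ≤ ‖c‖ := hcnorm
    -- build the orthogonal sequence
    obtain ⟨f, hfP, horth, hgrow⟩ := exists_orthogonal_seq' 𝒯 p hpt hunb
    have hb := hseq (fun n => (f n).1) horth ⟨1, fun n => (hfP n).1⟩
    obtain ⟨M, hM⟩ := hbd _ hb
    obtain ⟨n, hn⟩ := exists_nat_gt M
    have hmemset : (f n).2 ((f n).1) ∈ {y : Y | ∃ T ∈ 𝒯, ∃ k : ℕ, y = T ((fun m => (f m).1) k)} :=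
      ⟨(f n).2, (hfP n).2, n, rfl⟩
    have hmem := hM _ hmemset
    linarith [hgrow n]
end

section
/- Let H be an infinite-dimensional real Hilbert space, Y a locally convex topological vector space over ℝ, and T : H → Y a linear map. Then T(B_H) is von Neumann bounded in Y if and only if for every orthonormal sequence (x_n) in H the set {T x_n : n ∈ ℕ} is von Neumann bounded in Y. -/
open Set Filter Bornology Pointwise

section Aux

variable {H : Type*} [NormedAddCommGroup H] [InnerProductSpace ℝ H] [CompleteSpace H]

local notation "⟪" x ", " y "⟫" => @inner ℝ _ _ x y

private lemma orthonormal_snoc' {n : ℕ} {v : Fin n → H} (hv : Orthonormal ℝ v) {u : H}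
    (hu : ‖u‖ = 1) (hvu : ∀ i, ⟪v i, u⟫ = 0) : Orthonormal ℝ (Fin.snoc v u) := by
  constructor
  · intro i
    induction i using Fin.lastCases with
    | last => simpa using hu
    | cast i => simpa using hv.1 i
  · intro i j hij
    induction i using Fin.lastCases with
    | last =>
      induction j using Fin.lastCases with
      | last => exact absurd rfl hij
      | cast j => simpa [real_inner_comm] using hvu j
    | cast i =>
      induction j using Fin.lastCases with
      | last => simpa using hvu i
      | cast j =>
        have hij' : i ≠ j := fun h => hij (by rw [h])
        simpa using hv.2 hij'

private lemma step_lemma (q : Seminorm ℝ H) (hq : ∀ M : ℝ, ∃ z : H, ‖z‖ ≤ 1 ∧ M < q z)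
    {n : ℕ} (v : Fin n → H) (hv : Orthonormal ℝ v) (M : ℝ) :
    ∃ u : H, ‖u‖ = 1 ∧ (∀ i, ⟪v i, u⟫ = 0) ∧ M < q u := by
  classical
  obtain ⟨z, hz1, hz2⟩ := hq (|M| + ∑ i, q (v i))
  haveI : FiniteDimensional ℝ (Submodule.span ℝ (Set.range v)) :=
    FiniteDimensional.span_of_finite ℝ (Set.finite_range v)
  set F : Submodule ℝ H := Submodule.span ℝ (Set.range v) with hFdef
  set f : H := (F.orthogonalProjectionOnto z : H) with hfdef
  set g : H := z - f with hgdef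
  have hgF : g ∈ Fᗮ := by
    have := Submodule.sub_starProjection_mem_orthogonal (K := F) z
    rwa [Submodule.starProjection_apply] at this
  have hfF : f ∈ F := (F.orthogonalProjectionOnto z).2
  have hfg : ⟪f, g⟫ = 0 := Submodule.inner_right_of_mem_orthogonal hfF hgF
  have hpyth : ‖z‖ ^ 2 = ‖f‖ ^ 2 + ‖g‖ ^ 2 := by
    have hz : z = f + g := by rw [hgdef]; abel
    rw [hz, norm_add_sq_real, hfg]; ring
  have hf1 : ‖f‖ ≤ 1 := by nlinarith [norm_nonneg f, norm_nonneg g, norm_nonneg z, sq_nonneg ‖g‖]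
  have hg1 : ‖g‖ ≤ 1 := by nlinarith [norm_nonneg f, norm_nonneg g, norm_nonneg z, sq_nonneg ‖f‖]
  -- bound q f
  have hfF' : f ∈ Submodule.span ℝ (Set.range v) := hFdef ▸ hfF
  obtain ⟨c, hc⟩ := (Submodule.mem_span_range_iff_exists_fun ℝ).mp hfF'
  have hcoef : ∀ i, |c i| ≤ 1 := by
    intro i
    have h1 : ⟪v i, f⟫ = c i := by rw [← hc]; exact hv.inner_right_fintype c i
    calc |c i| = |⟪v i, f⟫| := by rw [h1]
      _ ≤ ‖v i‖ * ‖f‖ := abs_real_inner_le_norm _ _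
      _ ≤ 1 := by rw [hv.1 i, one_mul]; exact hf1
  have hqf : q f ≤ ∑ i, q (v i) := by
    calc q f = q (∑ i, c i • v i) := by rw [hc]
      _ ≤ ∑ i, q (c i • v i) :=
          Finset.le_sum_of_subadditive q (map_zero q).le (map_add_le_add q) _ _
      _ ≤ ∑ i, q (v i) := by
          refine Finset.sum_le_sum fun i _ => ?_
          rw [map_smul_eq_mul]
          calc ‖c i‖ * q (v i) ≤ 1 * q (v i) := by
                apply mul_le_mul_of_nonneg_right _ (apply_nonneg q _)
                simpa [Real.norm_eq_abs] using hcoef i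
            _ = q (v i) := one_mul _
  have hqg : |M| < q g := by
    have hadd : q z ≤ q f + q g := by
      have hz : z = f + g := by rw [hgdef]; abel
      calc q z = q (f + g) := by rw [← hz]
        _ ≤ q f + q g := map_add_le_add q f g
    linarith
  have hg0 : g ≠ 0 := by
    intro h
    rw [h, map_zero] at hqg
    exact absurd hqg (not_lt.mpr (abs_nonneg M))
  have hgpos : 0 < ‖g‖ := norm_pos_iff.mpr hg0
  refine ⟨‖g‖⁻¹ • g, norm_smul_inv_norm hg0, ?_, ?_⟩
  · intro i
    have hvi : (v i : H) ∈ F := hFdef ▸ Submodule.subset_span ⟨i, rfl⟩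
    have h0 : ⟪v i, g⟫ = 0 := Submodule.inner_right_of_mem_orthogonal hvi hgF
    rw [inner_smul_right, h0, mul_zero]
  · have hinv : (1 : ℝ) ≤ ‖g‖⁻¹ := (one_le_inv₀ hgpos).mpr hg1
    have : q (‖g‖⁻¹ • g) = ‖g‖⁻¹ * q g := by
      rw [map_smul_eq_mul, Real.norm_eq_abs, abs_of_nonneg (inv_nonneg.mpr hgpos.le)]
    rw [this]
    have h2 : q g ≤ ‖g‖⁻¹ * q g := le_mul_of_one_le_left (apply_nonneg q g) hinv
    calc M ≤ |M| := le_abs_self M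
      _ < q g := hqg
      _ ≤ ‖g‖⁻¹ * q g := h2


private noncomputable def seqAux (q : Seminorm ℝ H)
    (hq : ∀ M : ℝ, ∃ z : H, ‖z‖ ≤ 1 ∧ M < q z) :
    (n : ℕ) → { v : Fin n → H // Orthonormal ℝ v ∧ ∀ i : Fin n, (i : ℝ) < q (v i) }
  | 0 => ⟨fun i => i.elim0, ⟨fun i => i.elim0, fun i _ _ => i.elim0⟩, fun i => i.elim0⟩
  | (n + 1) =>
    let p := seqAux q hq n
    let h := Classical.choose_spec (step_lemma q hq p.1 p.2.1 (n : ℝ))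
    ⟨Fin.snoc p.1 (Classical.choose (step_lemma q hq p.1 p.2.1 (n : ℝ))),
      orthonormal_snoc' p.2.1 h.1 h.2.1,
      fun i => by
        induction i using Fin.lastCases with
        | last => simpa using h.2.2
        | cast i => simpa using p.2.2 i⟩

private lemma seqAux_castSucc (q : Seminorm ℝ H)
    (hq : ∀ M : ℝ, ∃ z : H, ‖z‖ ≤ 1 ∧ M < q z) (n : ℕ) (i : Fin n) :
    (seqAux q hq (n + 1)).1 i.castSucc = (seqAux q hq n).1 i := by
  simp only [seqAux]
  exact Fin.snoc_castSucc _ _ _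

private noncomputable def seqFun (q : Seminorm ℝ H)
    (hq : ∀ M : ℝ, ∃ z : H, ‖z‖ ≤ 1 ∧ M < q z) : ℕ → H :=
  fun n => (seqAux q hq (n + 1)).1 (Fin.last n)

private lemma seqFun_eq (q : Seminorm ℝ H)
    (hq : ∀ M : ℝ, ∃ z : H, ‖z‖ ≤ 1 ∧ M < q z) :
    ∀ (N n : ℕ) (h : n < N), seqFun q hq n = (seqAux q hq N).1 ⟨n, h⟩ := by
  intro N
  induction N with
  | zero => exact fun n h => absurd h (Nat.not_lt_zero n)
  | succ N ih =>
    intro n h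
    rcases Nat.lt_succ_iff_lt_or_eq.mp h with h' | rfl
    · rw [ih n h']
      have he : (⟨n, h⟩ : Fin (N + 1)) = (⟨n, h'⟩ : Fin N).castSucc := rfl
      rw [he, seqAux_castSucc]
    · rfl

private lemma exists_orthonormal_seq (q : Seminorm ℝ H)
    (hq : ∀ M : ℝ, ∃ z : H, ‖z‖ ≤ 1 ∧ M < q z) :
    ∃ x : ℕ → H, Orthonormal ℝ x ∧ ∀ n : ℕ, (n : ℝ) < q (x n) := by
  refine ⟨seqFun q hq, ⟨?_, ?_⟩, ?_⟩
  · intro n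
    exact (seqAux q hq (n + 1)).2.1.1 (Fin.last n)
  · intro m n hmn
    have hm : m < max m n + 1 := by omega
    have hn : n < max m n + 1 := by omega
    rw [seqFun_eq q hq _ m hm, seqFun_eq q hq _ n hn]
    exact (seqAux q hq (max m n + 1)).2.1.2 (by simpa using hmn)
  · intro n
    simpa [seqFun] using (seqAux q hq (n + 1)).2.2 (Fin.last n)

end Aux

/-- A linear map `T` from an infinite-dimensional real Hilbert space to a
locally convex TVS has `T(B_H)` von Neumann bounded iff `{T xₙ}` is von Neumann bounded
for every orthonormal sequence `(xₙ)`. -/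
theorem operator_vonNBounded_iff_bounded_along_orthonormal
    {H : Type*} [NormedAddCommGroup H] [InnerProductSpace ℝ H] [CompleteSpace H]
    (hH : ¬ FiniteDimensional ℝ H)
    {Y : Type*} [AddCommGroup Y] [Module ℝ Y] [TopologicalSpace Y]
    [IsTopologicalAddGroup Y] [ContinuousSMul ℝ Y] [LocallyConvexSpace ℝ Y]
    (T : H →ₗ[ℝ] Y) :
    Bornology.IsVonNBounded ℝ (T '' Metric.closedBall (0 : H) 1) ↔
      ∀ x : ℕ → H, Orthonormal ℝ x →
        Bornology.IsVonNBounded ℝ (Set.range fun n => T (x n)) := by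
  constructor
  · intro hB x hx
    refine hB.subset ?_
    rintro - ⟨n, rfl⟩
    exact ⟨x n, by simp [Metric.mem_closedBall, dist_zero_right, hx.1 n], rfl⟩
  · intro hall
    by_contra hB
    rw [(nhds_hasBasis_absConvex ℝ Y).isVonNBounded_iff] at hB
    push_neg at hB
    obtain ⟨V, ⟨hV, hVbal, hVconv⟩, hVabs⟩ := hB
    have hVabsorbent : Absorbent ℝ V := absorbent_nhds_zero hV
    set p : Seminorm ℝ Y := gaugeSeminorm hVbal hVconv hVabsorbent with hp
    set q : Seminorm ℝ H := p.comp T with hqdef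
    have hq : ∀ M : ℝ, ∃ z : H, ‖z‖ ≤ 1 ∧ M < q z := by
      by_contra hcon
      push_neg at hcon
      obtain ⟨M, hM⟩ := hcon
      refine hVabs (absorbs_iff_norm.mpr ⟨|M| + 1, ?_⟩)
      rintro c hc - ⟨z, hz, rfl⟩
      have hz1 : ‖z‖ ≤ 1 := by simpa [Metric.mem_closedBall, dist_zero_right] using hz
      have hgz : gauge V (T z) ≤ |M| := le_trans (hM z hz1) (le_abs_self M)
      have hc0 : c ≠ 0 := by
        intro h
        rw [h, norm_zero] at hc
        have := abs_nonneg M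
        linarith
      rw [Set.mem_smul_set_iff_inv_smul_mem₀ hc0]
      apply gauge_lt_one_subset_self hVconv (mem_of_mem_nhds hV) hVabsorbent
      have hg2 : gauge V (c⁻¹ • T z) = ‖c‖⁻¹ * gauge V (T z) := by
        rw [gauge_smul hVbal, norm_inv]
      have hcpos : (0 : ℝ) < ‖c‖ := by
        have := abs_nonneg M; linarith
      have : ‖c‖⁻¹ * gauge V (T z) < 1 := by
        rw [inv_mul_lt_iff₀ hcpos, mul_one]
        calc gauge V (T z) ≤ |M| := hgz
          _ < |M| + 1 := by linarith
          _ ≤ ‖c‖ := hc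
      rw [Set.mem_setOf_eq, hg2]
      exact this
    obtain ⟨x, hx, hgrow⟩ := exists_orthonormal_seq q hq
    have hbdd := hall x hx
    obtain ⟨r, hr⟩ := absorbs_iff_norm.mp (hbdd hV)
    set c : ℝ := max r 1 with hcdef
    have hcnorm : r ≤ ‖c‖ := le_trans (le_max_left r 1) (le_abs_self c)
    have hsub := hr c hcnorm
    obtain ⟨n, hn⟩ := exists_nat_gt c
    have hmem : T (x n) ∈ (c • V : Set Y) := hsub ⟨n, rfl⟩
    have hle : gauge V (T (x n)) ≤ c :=
      gauge_le_of_mem (le_trans zero_le_one (le_max_right r 1)) hmem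
    have hlt : (n : ℝ) < q (x n) := hgrow n
    have : q (x n) = gauge V (T (x n)) := rfl
    rw [this] at hlt
    linarith
end

section
/- Let H be an infinite-dimensional real Hilbert space, Y a locally convex topological vector space over ℝ, and T : H → Y a linear map. Then T(B_H) is von Neumann bounded in Y if and only if for every norm-bounded pairwise orthogonal sequence (x_n) in H the set {T x_n : n ∈ ℕ} is von Neumann bounded in Y. -/
open Set Bornology Metric Finset Pointwise

set_option linter.unusedSectionVars false
set_option linter.unusedVariables false
set_option maxHeartbeats 1000000

section aux
variable {H : Type*} [NormedAddCommGroup H] [InnerProductSpace ℝ H] [CompleteSpace H]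

private lemma seminorm_bound_on_fd (q : Seminorm ℝ H) (F : Submodule ℝ H) [FiniteDimensional ℝ F] :
    ∃ M : ℝ, ∀ y ∈ F, ‖y‖ ≤ 1 → q y ≤ M := by
  classical
  set b := stdOrthonormalBasis ℝ F with hb
  refine ⟨∑ i, q (b i : H), fun y hy hny => ?_⟩
  have hrep := b.sum_repr ⟨y, hy⟩
  have hy' : y = ∑ i, b.repr ⟨y, hy⟩ i • (b i : H) := by
    have := congrArg (Submodule.subtype F) hrep
    simpa using this.symm
  calc q y = q (∑ i, b.repr ⟨y, hy⟩ i • (b i : H)) := by rw [← hy']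
    _ ≤ ∑ i, q (b.repr ⟨y, hy⟩ i • (b i : H)) :=
        Finset.le_sum_of_subadditive q (map_zero q).le (map_add_le_add q) _ _
    _ ≤ ∑ i, q (b i : H) := by
        refine Finset.sum_le_sum fun i _ => ?_
        rw [map_smul_eq_mul]
        have h1 : |b.repr ⟨y, hy⟩ i| ≤ 1 := by
          have h2 := b.repr_apply_apply ⟨y, hy⟩ i
          have h3 : |(inner ℝ (b i) (⟨y, hy⟩ : F) : ℝ)| ≤ ‖b i‖ * ‖(⟨y, hy⟩ : F)‖ :=
            abs_real_inner_le_norm _ _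
          rw [b.orthonormal.1 i, one_mul] at h3
          have h4 : ‖(⟨y, hy⟩ : F)‖ = ‖y‖ := rfl
          rw [h2]
          calc |(inner ℝ (b i) (⟨y, hy⟩ : F) : ℝ)| ≤ ‖y‖ := by rw [← h4]; exact h3
            _ ≤ 1 := hny
        calc |b.repr ⟨y, hy⟩ i| * q (b i : H) ≤ 1 * q (b i : H) :=
              mul_le_mul_of_nonneg_right h1 (apply_nonneg q _)
          _ = q (b i : H) := one_mul _

private lemma exists_orth (q : Seminorm ℝ H) (hq : ∀ r : ℝ, ∃ x, ‖x‖ ≤ 1 ∧ r < q x)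
    (F : Submodule ℝ H) (hF : FiniteDimensional ℝ F) (r : ℝ) :
    ∃ z, ‖z‖ ≤ 1 ∧ z ∈ Fᗮ ∧ r < q z := by
  haveI := hF
  obtain ⟨M, hM⟩ := seminorm_bound_on_fd q F
  obtain ⟨x, hx1, hx2⟩ := hq (r + max M 0)
  set y := (F.orthogonalProjectionOnto x : H) with hy
  have hyF : y ∈ F := (F.orthogonalProjectionOnto x).2
  have hzF : x - y ∈ Fᗮ := F.sub_starProjection_mem_orthogonal x
  have hinner : inner ℝ (x - y) y = (0 : ℝ) := by rw [real_inner_comm]; exact hzF y hyF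
  have hpyth := norm_add_sq_real (x - y) y
  rw [sub_add_cancel, hinner] at hpyth
  have hny : ‖y‖ ≤ 1 := by nlinarith [norm_nonneg (x - y), norm_nonneg y, norm_nonneg x]
  have hnz : ‖x - y‖ ≤ 1 := by nlinarith [norm_nonneg (x - y), norm_nonneg y, norm_nonneg x]
  refine ⟨x - y, hnz, hzF, ?_⟩
  have hqy : q y ≤ M := hM y hyF hny
  have := map_add_le_add q (x - y) y
  rw [sub_add_cancel] at this
  have hMm : M ≤ max M 0 := le_max_left _ _
  linarith

private lemma exists_orthogonal_seq (q : Seminorm ℝ H) (hq : ∀ r : ℝ, ∃ x, ‖x‖ ≤ 1 ∧ r < q x) :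
    ∃ e : ℕ → H, (∀ n, ‖e n‖ ≤ 1) ∧ (∀ n m, n ≠ m → inner ℝ (e n) (e m) = (0 : ℝ)) ∧
      ∀ n : ℕ, (n : ℝ) < q (e n) := by
  choose f hf1 hf2 hf3 using exists_orth q hq
  let Fc : ℕ → {F : Submodule ℝ H // FiniteDimensional ℝ F} := fun n =>
    Nat.rec ⟨⊥, inferInstance⟩
      (fun n p => ⟨p.1 ⊔ (ℝ ∙ (f p.1 p.2 n)), by haveI := p.2; infer_instance⟩) n
  let e : ℕ → H := fun n => f (Fc n).1 (Fc n).2 n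
  have hFc : ∀ n, (Fc (n + 1)).1 = (Fc n).1 ⊔ (ℝ ∙ e n) := fun n => rfl
  have hmono : ∀ n, (Fc n).1 ≤ (Fc (n + 1)).1 := fun n => by
    rw [hFc]; exact le_sup_left
  have hmem : ∀ m n, m < n → e m ∈ (Fc n).1 := by
    intro m n hmn
    induction n with
    | zero => omega
    | succ k ih =>
      rcases Nat.lt_succ_iff_lt_or_eq.mp hmn with h | h
      · exact hmono k (ih h)
      · subst h
        rw [hFc]
        exact Submodule.mem_sup_right (Submodule.mem_span_singleton_self _)
  have horthF : ∀ n, e n ∈ ((Fc n).1)ᗮ := fun n => hf2 (Fc n).1 (Fc n).2 n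
  refine ⟨e, fun n => hf1 (Fc n).1 (Fc n).2 n, ?_, fun n => hf3 (Fc n).1 (Fc n).2 n⟩
  intro n m hnm
  rcases lt_or_gt_of_ne hnm with h | h
  · exact horthF m (e n) (hmem n m h)
  · rw [real_inner_comm]
    exact horthF n (e m) (hmem m n h)

end aux

/-- A linear map `T` from an infinite-dimensional real Hilbert space to a
locally convex TVS has `T(B_H)` von Neumann bounded iff `{T xₙ}` is von Neumann bounded
for every norm-bounded pairwise orthogonal sequence `(xₙ)`. -/
theorem operator_vonNBounded_iff_bounded_along_orthogonal
    {H : Type*} [NormedAddCommGroup H] [InnerProductSpace ℝ H] [CompleteSpace H]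
    (hH : ¬ FiniteDimensional ℝ H)
    {Y : Type*} [AddCommGroup Y] [Module ℝ Y] [TopologicalSpace Y]
    [IsTopologicalAddGroup Y] [ContinuousSMul ℝ Y] [LocallyConvexSpace ℝ Y]
    (T : H →ₗ[ℝ] Y) :
    Bornology.IsVonNBounded ℝ (T '' Metric.closedBall (0 : H) 1) ↔
      ∀ x : ℕ → H, (∀ n m, n ≠ m → inner ℝ (x n) (x m) = (0 : ℝ)) →
        (∃ C : ℝ, ∀ n, ‖x n‖ ≤ C) →
        Bornology.IsVonNBounded ℝ (Set.range fun n => T (x n)) := by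
  constructor
  · rintro hB x hx ⟨C, hC⟩
    set D := max C 1 with hD
    have hD0 : (0 : ℝ) < D := lt_of_lt_of_le one_pos (le_max_right _ _)
    have hbig : IsVonNBounded ℝ (D • (T '' Metric.closedBall (0 : H) 1)) := by
      have := hB.image (D • ContinuousLinearMap.id ℝ Y)
      simpa [Set.image_smul] using this
    refine hbig.subset ?_
    rintro _ ⟨n, rfl⟩
    refine ⟨T (D⁻¹ • x n), ⟨D⁻¹ • x n, ?_, rfl⟩, ?_⟩
    · rw [mem_closedBall_zero_iff, norm_smul, norm_inv, Real.norm_eq_abs, abs_of_pos hD0]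
      rw [inv_mul_le_one₀ hD0]
      exact le_trans (hC n) (le_max_left _ _)
    · show D • T (D⁻¹ • x n) = T (x n)
      rw [← T.map_smul, smul_inv_smul₀ hD0.ne']
  · intro hseq
    by_contra hnot
    rw [Filter.HasBasis.isVonNBounded_iff (nhds_hasBasis_absConvex ℝ Y)] at hnot
    push_neg at hnot
    obtain ⟨U, ⟨hU0, hUbal, hUconv⟩, hUabs⟩ := hnot
    set W : Set H := T ⁻¹' U with hW
    have hWbal : Balanced ℝ W := by
      intro a ha
      rintro _ ⟨w, hw, rfl⟩
      show T (a • w) ∈ U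
      rw [T.map_smul]
      exact hUbal a ha ⟨T w, hw, rfl⟩
    have hWconv : Convex ℝ W := hUconv.linear_preimage T
    have hmemWU : ∀ (c : ℝ), c ≠ 0 → ∀ x : H, (x ∈ c • W ↔ T x ∈ c • U) := by
      intro c hc x
      rw [Set.mem_smul_set_iff_inv_smul_mem₀ hc, Set.mem_smul_set_iff_inv_smul_mem₀ hc]
      show T (c⁻¹ • x) ∈ U ↔ _
      rw [T.map_smul]
    have hWabs : Absorbent ℝ W := by
      intro x
      have := (absorbent_nhds_zero (𝕜 := ℝ) hU0) (T x)
      rw [absorbs_iff_norm] at this ⊢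
      obtain ⟨r, hr⟩ := this
      refine ⟨max r 1, fun c hc => ?_⟩
      have hc0 : c ≠ 0 := by
        intro h
        rw [h, norm_zero] at hc
        have := le_trans (le_max_right r 1) hc
        linarith
      rw [Set.singleton_subset_iff, hmemWU c hc0]
      exact hr c (le_trans (le_max_left _ _) hc) rfl
    set q : Seminorm ℝ H := gaugeSeminorm hWbal hWconv hWabs with hq'
    have hqgauge : ∀ x, q x = gauge W x := fun x => rfl
    -- q is unbounded on the unit ball
    have hq : ∀ r : ℝ, ∃ x, ‖x‖ ≤ 1 ∧ r < q x := by
      intro r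
      by_contra h
      push_neg at h
      apply hUabs
      rw [absorbs_iff_norm]
      refine ⟨max r 0 + 1, ?_⟩
      rintro c hc _ ⟨x, hxB, rfl⟩
      have hcpos : (0 : ℝ) < ‖c‖ := lt_of_lt_of_le (by positivity) hc
      have hc0 : c ≠ 0 := by simpa using hcpos.ne'
      have hgx : gauge W x < ‖c‖ := by
        have := h x (mem_closedBall_zero_iff.mp hxB)
        rw [hqgauge] at this
        have : gauge W x ≤ max r 0 := le_trans this (le_max_left _ _)
        linarith
      obtain ⟨b, hb0, hbc, hxb⟩ := exists_lt_of_gauge_lt hWabs hgx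
      have : x ∈ c • W := by
        refine hWbal.smul_mono ?_ hxb
        rw [Real.norm_eq_abs, abs_of_pos hb0]
        exact le_of_lt (lt_of_lt_of_le hbc (le_refl _))
      rw [hmemWU c hc0] at this
      exact this
    obtain ⟨e, he1, he2, he3⟩ := exists_orthogonal_seq q hq
    have hb := hseq e he2 ⟨1, he1⟩
    have := hb hU0
    rw [absorbs_iff_norm] at this
    obtain ⟨r, hr⟩ := this
    set c := max r 1 with hc
    have hc1 : (1 : ℝ) ≤ c := le_max_right _ _
    have hc0 : c ≠ 0 := by positivity
    have hcnorm : r ≤ ‖c‖ := by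
      rw [Real.norm_eq_abs, abs_of_pos (by positivity)]
      exact le_max_left _ _
    set n := ⌈c⌉₊ + 1 with hn
    have hmem : T (e n) ∈ c • U := hr c hcnorm ⟨n, rfl⟩
    rw [← hmemWU c hc0] at hmem
    have hle : q (e n) ≤ c := by
      rw [hqgauge]
      exact gauge_le_of_mem (by positivity) hmem
    have hlt : c < (n : ℝ) := by
      have := Nat.le_ceil c
      push_cast [hn]
      linarith
    have := he3 n
    linarith
end

section
/- Let H be an infinite-dimensional real Hilbert space, F a real Fréchet space (a complete metrizable locally convex topological vector space over ℝ), and 𝒯 a set of continuous linear maps from H to F. Then the set ⋃_{T ∈ 𝒯} T(B_H) is relatively compact in F if and only if for every orthonormal sequence (x_n) in H the set {T x_n : T ∈ 𝒯, n ∈ ℕ} is relatively compact in F. -/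
open scoped RealInnerProductSpace
open Filter Topology Uniformity Set

set_option linter.unusedSectionVars false
set_option linter.unusedVariables false
set_option maxHeartbeats 1000000

section Aux

variable {H : Type*} [NormedAddCommGroup H] [InnerProductSpace ℝ H]

lemma exists_unit_orthogonal {E : Type*} [NormedAddCommGroup E] [InnerProductSpace ℝ E]
    (hE : ¬ FiniteDimensional ℝ E) (W : Submodule ℝ E) (hW : FiniteDimensional ℝ W) :
    ∃ e : E, ‖e‖ = 1 ∧ e ∈ Wᗮ := by
  have hne : Wᗮ ≠ ⊥ := by
    intro h
    have : W = ⊤ := Submodule.orthogonal_eq_bot_iff.mp h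
    subst this
    exact hE (Module.Finite.equiv (Submodule.topEquiv))
  obtain ⟨v, hv, hv0⟩ := Submodule.exists_mem_ne_zero_of_ne_bot hne
  exact ⟨‖v‖⁻¹ • v, norm_smul_inv_norm hv0, Submodule.smul_mem _ _ hv⟩

lemma exists_orthonormal_seq_s7 {E : Type*} [NormedAddCommGroup E] [InnerProductSpace ℝ E]
    (hE : ¬ FiniteDimensional ℝ E) : ∃ f : ℕ → E, Orthonormal ℝ f := by
  classical
  choose pick h1 h2 using fun (W : Submodule ℝ E) (hW : FiniteDimensional ℝ W) =>
    exists_unit_orthogonal hE W hW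
  let next : (Σ' W : Submodule ℝ E, FiniteDimensional ℝ W) →
      (Σ' W : Submodule ℝ E, FiniteDimensional ℝ W) := fun p =>
    ⟨p.1 ⊔ (ℝ ∙ pick p.1 p.2), by haveI := p.2; infer_instance⟩
  let s : ℕ → (Σ' W : Submodule ℝ E, FiniteDimensional ℝ W) := fun n =>
    next^[n] ⟨⊥, inferInstance⟩
  have hs : ∀ n, s (n + 1) = next (s n) := fun n => Function.iterate_succ_apply' _ _ _
  set f : ℕ → E := fun n => pick (s n).1 (s n).2 with hf
  have hmem : ∀ n, f n ∈ (s (n + 1)).1 := by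
    intro n
    rw [hs n]
    exact Submodule.mem_sup_right (Submodule.mem_span_singleton_self _)
  have hmono : ∀ m n, m ≤ n → (s m).1 ≤ (s n).1 := by
    intro m n hmn
    induction n with
    | zero => simp_all
    | succ k ih =>
      rcases Nat.lt_or_ge m (k+1) with h | h
      · refine le_trans (ih (Nat.lt_succ_iff.mp h)) ?_
        rw [hs k]; exact le_sup_left
      · have : m = k + 1 := le_antisymm hmn h
        subst this; exact le_rfl
  have horth : ∀ m n, m < n → ⟪f n, f m⟫ = 0 := by
    intro m n hmn
    have h1' : f m ∈ (s n).1 := hmono (m+1) n hmn (hmem m)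
    rw [real_inner_comm]
    exact (Submodule.mem_orthogonal _ _).mp (h2 (s n).1 (s n).2) (f m) h1'
  refine ⟨f, fun i => h1 _ _, fun {i j} hij => ?_⟩
  rcases Nat.lt_or_ge i j with h | h
  · rw [real_inner_comm]; exact horth i j h
  · exact horth j i (lt_of_le_of_ne h (Ne.symm hij))

lemma exists_orthonormal_seq_head {H : Type*} [NormedAddCommGroup H] [InnerProductSpace ℝ H]
    [CompleteSpace H] (hH : ¬ FiniteDimensional ℝ H) {x : H} (hx : ‖x‖ = 1) :
    ∃ f : ℕ → H, Orthonormal ℝ f ∧ f 0 = x := by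
  set K : Submodule ℝ H := (ℝ ∙ x)ᗮ with hK
  have hKfin : ¬ FiniteDimensional ℝ K := by
    intro hfin
    have hsup : (ℝ ∙ x) ⊔ (ℝ ∙ x)ᗮ = ⊤ := Submodule.sup_orthogonal_of_hasOrthogonalProjection
    have : FiniteDimensional ℝ ((ℝ ∙ x) ⊔ (ℝ ∙ x)ᗮ : Submodule ℝ H) := by
      infer_instance
    rw [hsup] at this
    exact hH (Module.Finite.equiv (Submodule.topEquiv))
  obtain ⟨g, hg⟩ := exists_orthonormal_seq_s7 hKfin
  refine ⟨fun n => Nat.casesOn n x (fun m => (g m : H)), ⟨?_, ?_⟩, rfl⟩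
  · intro i
    cases i with
    | zero => exact hx
    | succ m => exact hg.1 m
  · intro i j hij
    have key : ∀ m : ℕ, ⟪x, (g m : H)⟫ = 0 := by
      intro m
      have h2 : (g m : H) ∈ (ℝ ∙ x)ᗮ := (g m).2
      rw [Submodule.mem_orthogonal] at h2
      exact h2 x (Submodule.mem_span_singleton_self x)
    cases i with
    | zero =>
      cases j with
      | zero => exact absurd rfl hij
      | succ m => exact key m
    | succ m =>
      cases j with
      | zero => rw [real_inner_comm]; exact key m
      | succ m' =>
        have : m ≠ m' := by omega
        exact hg.2 this

lemma relCompact_single_vector {H : Type*} [NormedAddCommGroup H] [InnerProductSpace ℝ H]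
    [CompleteSpace H] (hH : ¬ FiniteDimensional ℝ H)
    {F : Type*} [AddCommGroup F] [Module ℝ F] [UniformSpace F] [IsUniformAddGroup F]
    [ContinuousSMul ℝ F] [T2Space F]
    (𝒯 : Set (H →L[ℝ] F))
    (hyp : ∀ x : ℕ → H, Orthonormal ℝ x →
      IsCompact (closure {y : F | ∃ T ∈ 𝒯, ∃ n : ℕ, y = T (x n)}))
    (v : H) : IsCompact (closure {y : F | ∃ T ∈ 𝒯, y = T v}) := by
  rcases eq_or_ne v 0 with rfl | hv
  · refine IsCompact.of_isClosed_subset (isCompact_singleton (x := (0:F))) isClosed_closure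
      (closure_minimal ?_ isClosed_singleton)
    rintro y ⟨T, -, rfl⟩
    simp
  · set u : H := ‖v‖⁻¹ • v with hu
    have hu1 : ‖u‖ = 1 := norm_smul_inv_norm hv
    obtain ⟨f, hf, hf0⟩ := exists_orthonormal_seq_head hH hu1
    have hA := hyp f hf
    have hsub : {y : F | ∃ T ∈ 𝒯, y = T v} ⊆
        (fun z : F => ‖v‖ • z) '' closure {y : F | ∃ T ∈ 𝒯, ∃ n : ℕ, y = T (f n)} := by
      rintro y ⟨T, hT, rfl⟩
      refine ⟨T u, subset_closure ⟨T, hT, 0, by rw [hf0]⟩, ?_⟩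
      simp only [← map_smul, hu, smul_inv_smul₀ (norm_ne_zero_iff.mpr hv)]
    have himg : IsCompact ((fun z : F => ‖v‖ • z) ''
        closure {y : F | ∃ T ∈ 𝒯, ∃ n : ℕ, y = T (f n)}) :=
      hA.image (continuous_const_smul _)
    exact IsCompact.of_isClosed_subset himg isClosed_closure
      (closure_minimal hsub himg.isClosed)

lemma equicont_of_pointwise {H : Type*} [NormedAddCommGroup H] [InnerProductSpace ℝ H]
    [CompleteSpace H]
    {F : Type*} [AddCommGroup F] [Module ℝ F] [UniformSpace F] [IsUniformAddGroup F]
    [ContinuousSMul ℝ F] [LocallyConvexSpace ℝ F]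
    (𝒯 : Set (H →L[ℝ] F))
    (hb : ∀ v : H, IsCompact (closure {y : F | ∃ T ∈ 𝒯, y = T v})) :
    ∀ W ∈ 𝓝 (0 : F), ∃ δ : ℝ, 0 < δ ∧ ∀ T ∈ 𝒯, ∀ v : H, ‖v‖ ≤ δ → T v ∈ W := by
  have hq : WithSeminorms (gaugeSeminormFamily ℝ F) := with_gaugeSeminormFamily
  set q := gaugeSeminormFamily ℝ F with hqdef
  have hbdd : ∀ k x, BddAbove (Set.range fun i : 𝒯 => q k ((i : H →L[ℝ] F) x)) := by
    intro k x
    have hcomp : IsCompact ((q k) '' closure {y : F | ∃ T ∈ 𝒯, y = T x}) :=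
      (hb x).image (hq.continuous_seminorm k)
    refine BddAbove.mono ?_ hcomp.bddAbove
    rintro r ⟨i, rfl⟩
    exact ⟨(i : H →L[ℝ] F) x, subset_closure ⟨i, i.2, rfl⟩, rfl⟩
  have hec : UniformEquicontinuous ((↑) ∘ (fun i : 𝒯 => (i : H →L[ℝ] F))) :=
    hq.banach_steinhaus hbdd
  intro W hW
  have hU : {p : F × F | p.2 - p.1 ∈ W} ∈ 𝓤 F := by
    rw [uniformity_eq_comap_nhds_zero F]
    exact Filter.preimage_mem_comap hW
  obtain ⟨δ, hδpos, hδ⟩ := Metric.uniformity_basis_dist.eventually_iff.mp (hec _ hU)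
  refine ⟨δ / 2, by positivity, ?_⟩
  intro T hT v hv
  have hd : dist (0 : H) v < δ := by
    rw [dist_comm, dist_zero_right]; linarith
  have := hδ (x := ((0 : H), v)) hd ⟨T, hT⟩
  simpa using this

lemma exists_separated_seq {F : Type*} [UniformSpace F] {S : Set F}
    (h : ¬ TotallyBounded S) :
    ∃ V ∈ 𝓤 F, ∃ g : ℕ → F, (∀ n, g n ∈ S) ∧ ∀ m n : ℕ, m ≠ n → (g m, g n) ∉ V := by
  classical
  rw [TotallyBounded] at h
  push_neg at h
  obtain ⟨V₀, hV₀, hcov⟩ := h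
  set V : Set (F × F) := SetRel.symmetrize V₀ with hV
  have hVmem : V ∈ 𝓤 F := symmetrize_mem_uniformity hV₀
  have hVsymm : ∀ a b : F, (a, b) ∈ V → (b, a) ∈ V := by
    intro a b hab
    exact SetRel.symm (R := SetRel.symmetrize V₀) hab
  have hVsub : V ⊆ V₀ := SetRel.symmetrize_subset_self
  have key : ∀ t : Finset F, ∃ x, x ∈ S ∧ ∀ y ∈ t, (x, y) ∉ V := by
    intro t
    by_contra hc
    push_neg at hc
    refine hcov (t : Set F) t.finite_toSet ?_
    intro x hx
    obtain ⟨y, hy, hxy⟩ := hc x hx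
    exact mem_biUnion hy (hVsub hxy)
  choose pick hpickS hpickV using key
  let s : ℕ → F × Finset F := fun n =>
    (fun p : F × Finset F => (pick p.2, insert (pick p.2) p.2))^[n] (pick ∅, {pick ∅})
  set g : ℕ → F := fun n => (s n).1 with hg
  have hs0 : s 0 = (pick ∅, {pick ∅}) := rfl
  have hsn : ∀ n, s (n + 1) = (pick (s n).2, insert (pick (s n).2) (s n).2) := fun n =>
    Function.iterate_succ_apply' _ _ _
  have hmem2 : ∀ n, g n ∈ (s n).2 := by
    intro n
    cases n with
    | zero => rw [hg]; simp [hs0]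
    | succ k => rw [hg]; simp [hsn k]
  have hmono : ∀ m n, m ≤ n → (s m).2 ⊆ (s n).2 := by
    intro m n hmn
    induction n with
    | zero =>
      have : m = 0 := Nat.le_zero.mp hmn
      subst this; exact subset_rfl
    | succ k ih =>
      rcases Nat.lt_or_ge m (k + 1) with hlt | hge
      · refine subset_trans (ih (Nat.lt_succ_iff.mp hlt)) ?_
        rw [hsn k]; exact Finset.subset_insert _ _
      · have : m = k + 1 := le_antisymm hmn hge
        subst this; exact subset_rfl
  have hgS : ∀ n, g n ∈ S := by
    intro n
    cases n with
    | zero => exact hpickS ∅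
    | succ k =>
      show (s (k + 1)).1 ∈ S
      rw [hsn k]; exact hpickS _
  have hsep : ∀ m n, m < n → (g n, g m) ∉ V := by
    intro m n hmn
    have hgm : g m ∈ (s n).2 := hmono (m) (n) (le_of_lt hmn) (hmem2 m)
    cases n with
    | zero => omega
    | succ k =>
      have heq : g (k+1) = pick (s k).2 := by
        show (s (k + 1)).1 = _
        rw [hsn k]
      rw [heq]
      have hgm' : g m ∈ (s k).2 := hmono m k (Nat.lt_succ_iff.mp hmn) (hmem2 m)
      exact hpickV _ _ hgm'
  refine ⟨V, hVmem, g, hgS, ?_⟩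
  intro m n hmn
  rcases Nat.lt_or_ge m n with hlt | hge
  · intro hc; exact hsep m n hlt (hVsymm _ _ hc)
  · exact hsep n m (lt_of_le_of_ne hge (Ne.symm hmn))

lemma exists_weak_limit_subseq [CompleteSpace H] (u : ℕ → H) (hu : ∀ k, ‖u k‖ ≤ 1) :
    ∃ (φ : ℕ → ℕ) (x : H), StrictMono φ ∧ ‖x‖ ≤ 1 ∧
      x ∈ (Submodule.span ℝ (Set.range u)).topologicalClosure ∧
      ∀ z ∈ (Submodule.span ℝ (Set.range u)).topologicalClosure,
        Filter.Tendsto (fun k => ⟪u (φ k), z⟫) Filter.atTop (𝓝 ⟪x, z⟫) := by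
  classical
  set M : ℕ → Submodule ℝ H := fun n => Submodule.span ℝ (u '' {i | i ≤ n}) with hM
  haveI hfin : ∀ n, FiniteDimensional ℝ (M n) := fun n =>
    FiniteDimensional.span_of_finite ℝ ((Set.finite_Iic n).image u)
  have hMmono : Monotone M := by
    intro a b hab
    exact Submodule.span_mono (Set.image_mono fun i (hi : i ≤ a) => le_trans hi hab)
  have hMle : ∀ n, M n ≤ Submodule.span ℝ (Set.range u) := fun n =>
    Submodule.span_mono (Set.image_subset_range u _)
  set N := (Submodule.span ℝ (Set.range u)).topologicalClosure with hN
  -- orthogonal projections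
  let P : ∀ n, H →L[ℝ] (M n) := fun n => Submodule.orthogonalProjectionOnto (M n)
  have hPnorm : ∀ n k, ‖P n (u k)‖ ≤ 1 := by
    intro n k
    calc ‖P n (u k)‖ ≤ ‖Submodule.orthogonalProjectionOnto (M n)‖ * ‖u k‖ := (P n).le_opNorm _
    _ ≤ 1 * 1 := by
        have := Submodule.orthogonalProjectionOnto_norm_le (M n)
        exact mul_le_mul this (hu k) (norm_nonneg _) zero_le_one
    _ = 1 := one_mul 1
  -- sequential compactness in the product of balls
  have hC : IsCompact (Set.univ.pi fun n => Metric.closedBall (0 : M n) 1) :=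
    isCompact_univ_pi fun n => ProperSpace.isCompact_closedBall _ _
  have hmem : ∀ k, (fun n => P n (u k)) ∈ (Set.univ.pi fun n => Metric.closedBall (0 : M n) 1) := by
    intro k n _
    simpa [Metric.mem_closedBall, dist_zero_right] using hPnorm n k
  obtain ⟨L, hLC, φ, hφ, hLtend⟩ := hC.isSeqCompact hmem
  have hLn : ∀ n, Tendsto (fun k => P n (u (φ k))) atTop (𝓝 (L n)) := by
    intro n
    exact (tendsto_pi_nhds.mp hLtend) n
  set xs : ℕ → H := fun n => (L n : H) with hxs
  have hxsn : ∀ n, ‖xs n‖ ≤ 1 := by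
    intro n
    have := hLC n (Set.mem_univ n)
    simpa [Metric.mem_closedBall, dist_zero_right] using this
  have hxsM : ∀ n, xs n ∈ M n := fun n => (L n).2
  have hcoe : ∀ n, Tendsto (fun k => ((P n (u (φ k))) : H)) atTop (𝓝 (xs n)) := by
    intro n
    exact (continuous_subtype_val.tendsto (L n)).comp (hLn n)
  -- consistency of projections
  have hPP : ∀ n m, n ≤ m → ∀ v : H, P n ((P m v : H)) = P n v := by
    intro n m hnm v
    have := Submodule.orthogonalProjectionOnto_starProjection_of_le (hMmono hnm) v
    rwa [Submodule.starProjection_apply] at this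
  have hproj : ∀ n m, n ≤ m → P n (xs m) = L n := by
    intro n m hnm
    have h1 : Tendsto (fun k => P n ((P m (u (φ k)) : H))) atTop (𝓝 (P n (xs m))) :=
      ((P n).continuous.tendsto (xs m)).comp (hcoe m)
    have h2 : (fun k => P n ((P m (u (φ k)) : H))) = fun k => P n (u (φ k)) := by
      funext k
      exact hPP n m hnm (u (φ k))
    rw [h2] at h1
    exact tendsto_nhds_unique h1 (hLn n)
  -- orthogonality of increments
  have horthog : ∀ n m, n ≤ m → xs m - xs n ∈ (M n)ᗮ := by
    intro n m hnm
    have h1 : P n (xs m - xs n) = 0 := by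
      rw [map_sub, hproj n m hnm]
      have : P n (xs n) = L n := by
        have := Submodule.orthogonalProjectionOnto_mem_subspace_eq_self (K := M n) (L n)
        exact this
      rw [this, sub_self]
    exact Submodule.orthogonalProjectionOnto_eq_zero_iff.mp h1
  -- Pythagoras and monotone norms
  have hpyth : ∀ n m, n ≤ m → ‖xs m‖ ^ 2 = ‖xs n‖ ^ 2 + ‖xs m - xs n‖ ^ 2 := by
    intro n m hnm
    have hz : ⟪xs n, xs m - xs n⟫ = 0 :=
      (Submodule.mem_orthogonal _ _).mp (horthog n m hnm) (xs n) (hxsM n)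
    have : xs m = xs n + (xs m - xs n) := by abel
    rw [this]
    rw [norm_add_sq_real, hz]
    ring_nf
    abel
  set r : ℕ → ℝ := fun n => ‖xs n‖ ^ 2 with hr
  have hrmono : Monotone r := by
    intro a b hab
    rw [hr]
    simp only []
    rw [hpyth a b hab]
    nlinarith [sq_nonneg ‖xs b - xs a‖]
  have hrbdd : ∀ n, r n ≤ 1 := by
    intro n
    show ‖xs n‖ ^ 2 ≤ 1
    have := hxsn n
    nlinarith [norm_nonneg (xs n)]
  have hrtend : Tendsto r atTop (𝓝 (⨆ n, r n)) :=
    tendsto_atTop_ciSup hrmono ⟨1, fun y ⟨n, hn⟩ => hn ▸ hrbdd n⟩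
  have hrle : ∀ n, r n ≤ ⨆ n, r n := fun n =>
    le_ciSup ⟨1, fun y ⟨m, hm⟩ => hm ▸ hrbdd m⟩ n
  have hcauchy : CauchySeq xs := by
    rw [Metric.cauchySeq_iff']
    intro ε hε
    have : ∀ᶠ n in atTop, (⨆ m, r m) - r n < ε ^ 2 := by
      have := hrtend (Metric.ball_mem_nhds _ (show (0:ℝ) < ε ^ 2 by positivity))
      filter_upwards [this] with n hn
      rw [Set.mem_preimage, Metric.mem_ball, Real.dist_eq, abs_sub_lt_iff] at hn
      linarith [hn.2]
    obtain ⟨Nn, hNn⟩ := this.exists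
    refine ⟨Nn, fun n hn => ?_⟩
    have h1 : ‖xs n - xs Nn‖ ^ 2 = r n - r Nn := by
      have := hpyth Nn n hn
      rw [hr]; simp only []; linarith
    have h2 : ‖xs n - xs Nn‖ ^ 2 < ε ^ 2 := by
      have := hrle n
      linarith
    rw [dist_eq_norm]
    exact lt_of_pow_lt_pow_left₀ 2 hε.le h2
  obtain ⟨x, hx⟩ := cauchySeq_tendsto_of_complete hcauchy
  have hxnorm : ‖x‖ ≤ 1 := by
    have : Tendsto (fun n => ‖xs n‖) atTop (𝓝 ‖x‖) := (continuous_norm.tendsto x).comp hx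
    exact le_of_tendsto this (Eventually.of_forall hxsn)
  have hxN : x ∈ N := by
    have hclosed : IsClosed (N : Set H) := Submodule.isClosed_topologicalClosure _
    refine hclosed.mem_of_tendsto hx (Eventually.of_forall fun n => ?_)
    exact Submodule.le_topologicalClosure _ (hMle n (hxsM n))
  -- inner products of x agree with xs n on M n
  have hxinner : ∀ n, ∀ z ∈ M n, ⟪x, z⟫ = ⟪xs n, z⟫ := by
    intro n z hz
    have h1 : Tendsto (fun m => ⟪xs m - xs n, z⟫) atTop (𝓝 ⟪x - xs n, z⟫) :=
      Tendsto.inner (hx.sub tendsto_const_nhds) tendsto_const_nhds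
    have h2 : ∀ᶠ m in atTop, ⟪xs m - xs n, z⟫ = (0:ℝ) := by
      filter_upwards [eventually_ge_atTop n] with m hm
      rw [real_inner_comm]
      exact (Submodule.mem_orthogonal _ _).mp (horthog n m hm) z hz
    have h3 : Tendsto (fun m => ⟪xs m - xs n, z⟫) atTop (𝓝 (0:ℝ)) := by
      rw [tendsto_congr' h2]
      exact tendsto_const_nhds
    have h4 : ⟪x - xs n, z⟫ = 0 := tendsto_nhds_unique h1 h3
    rw [inner_sub_left] at h4
    linarith
  -- convergence of inner products against elements of M n
  have hMconv : ∀ n, ∀ z ∈ M n, Tendsto (fun k => ⟪u (φ k), z⟫) atTop (𝓝 ⟪x, z⟫) := by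
    intro n z hz
    have heq : ∀ j, ⟪u j, z⟫ = ⟪((P n (u j)) : H), z⟫ := by
      intro j
      have h0 : ⟪z, u j - ((P n (u j)) : H)⟫ = 0 :=
        (Submodule.mem_orthogonal _ _).mp (by have := Submodule.sub_starProjection_mem_orthogonal (K := M n) (u j); rwa [Submodule.starProjection_apply] at this) z hz
      rw [inner_sub_right] at h0
      have e1 := real_inner_comm z (u j)
      have e2 := real_inner_comm z (((P n) (u j)) : H)
      linarith
    have h1 : Tendsto (fun k => ⟪((P n (u (φ k))) : H), z⟫) atTop (𝓝 ⟪xs n, z⟫) :=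
      Tendsto.inner (hcoe n) tendsto_const_nhds
    rw [hxinner n z hz]
    simpa only [← heq] using h1
  -- elements of the span lie in some M n
  have hspan : ∀ w ∈ Submodule.span ℝ (Set.range u), ∃ n, w ∈ M n := by
    intro w hw
    refine Submodule.span_induction ?_ ?_ ?_ ?_ hw
    · rintro y ⟨i, rfl⟩
      exact ⟨i, Submodule.subset_span (Set.mem_image_of_mem u (by simp : i ∈ {j | j ≤ i}))⟩
    · exact ⟨0, (M 0).zero_mem⟩
    · rintro a b - - ⟨n1, hn1⟩ ⟨n2, hn2⟩
      exact ⟨max n1 n2, (M (max n1 n2)).add_mem (hMmono (le_max_left n1 n2) hn1)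
        (hMmono (le_max_right n1 n2) hn2)⟩
    · rintro c a - ⟨n1, hn1⟩
      exact ⟨n1, (M n1).smul_mem c hn1⟩
  refine ⟨φ, x, hφ, hxnorm, hxN, ?_⟩
  intro z hz
  rw [Metric.tendsto_atTop]
  intro ε hε
  have hzc : z ∈ closure ((Submodule.span ℝ (Set.range u) : Submodule ℝ H) : Set H) := by
    rw [← Submodule.topologicalClosure_coe]
    exact hz
  obtain ⟨z', hz'mem, hz'close⟩ := Metric.mem_closure_iff.mp hzc (ε/3) (by positivity)
  obtain ⟨n, hz'Mn⟩ := hspan z' hz'mem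
  have hmid := hMconv n z' hz'Mn
  rw [Metric.tendsto_atTop] at hmid
  obtain ⟨K0, hK0⟩ := hmid (ε/3) (by positivity)
  refine ⟨K0, fun k hk => ?_⟩
  have h1 : |⟪u (φ k), z - z'⟫| ≤ ‖z - z'‖ := by
    calc |⟪u (φ k), z - z'⟫| ≤ ‖u (φ k)‖ * ‖z - z'‖ := abs_real_inner_le_norm _ _
    _ ≤ 1 * ‖z - z'‖ := by
        exact mul_le_mul_of_nonneg_right (hu (φ k)) (norm_nonneg _)
    _ = ‖z - z'‖ := one_mul _
  have h2 : |⟪x, z' - z⟫| ≤ ‖z' - z‖ := by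
    calc |⟪x, z' - z⟫| ≤ ‖x‖ * ‖z' - z‖ := abs_real_inner_le_norm _ _
    _ ≤ 1 * ‖z' - z‖ := mul_le_mul_of_nonneg_right hxnorm (norm_nonneg _)
    _ = ‖z' - z‖ := one_mul _
  have h3 : dist ⟪u (φ k), z'⟫ ⟪x, z'⟫ < ε/3 := hK0 k hk
  have hzz' : ‖z - z'‖ < ε/3 := by rwa [← dist_eq_norm]
  have hzz'' : ‖z' - z‖ < ε/3 := by rwa [norm_sub_rev]
  rw [Real.dist_eq] at h3 ⊢
  have hdecomp : ⟪u (φ k), z⟫ - ⟪x, z⟫ =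
      ⟪u (φ k), z - z'⟫ + (⟪u (φ k), z'⟫ - ⟪x, z'⟫) + ⟪x, z' - z⟫ := by
    rw [inner_sub_right, inner_sub_right]
    ring
  rw [hdecomp]
  calc |⟪u (φ k), z - z'⟫ + (⟪u (φ k), z'⟫ - ⟪x, z'⟫) + ⟪x, z' - z⟫|
      ≤ |⟪u (φ k), z - z'⟫| + |⟪u (φ k), z'⟫ - ⟪x, z'⟫| + |⟪x, z' - z⟫| := by
        exact (abs_add_le _ _).trans (add_le_add_left (abs_add_le _ _) _)
  _ < ε/3 + ε/3 + ε/3 := by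
      refine add_lt_add (add_lt_add_of_lt_of_lt (lt_of_le_of_lt h1 hzz') h3)
        (lt_of_le_of_lt h2 hzz'')
  _ = ε := by ring

lemma almost_orthogonal_step (N : Submodule ℝ H) (w : ℕ → H) (δ : ℝ)
    (hδ : 0 < δ) (hwN : ∀ k, w k ∈ N) (hwl : ∀ k, δ ≤ ‖w k‖) (hwu : ∀ k, ‖w k‖ ≤ 2)
    (hweak : ∀ z ∈ N, Tendsto (fun k => ⟪w k, z⟫) atTop (𝓝 0))
    (k₀ : ℕ) (W : Submodule ℝ H) (hWfin : FiniteDimensional ℝ W) (hWN : W ≤ N)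
    {ε : ℝ} (hε : 0 < ε) (hεδ : ε ≤ δ / 2) :
    ∃ (k : ℕ) (c : ℝ) (e : H), k₀ < k ∧ ‖e‖ = 1 ∧ e ∈ Wᗮ ∧ e ∈ N ∧
      δ / 2 ≤ c ∧ c ≤ 2 ∧ ‖w k - c • e‖ ≤ ε := by
  haveI := hWfin
  haveI : CompleteSpace W := FiniteDimensional.complete ℝ W
  set b := stdOrthonormalBasis ℝ W with hb
  have hQbound : ∀ j, ‖((W.orthogonalProjectionOnto (w j)) : H)‖ ≤
      ∑ i, |⟪w j, ((b i) : H)⟫| := by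
    intro j
    rw [b.orthogonalProjectionOnto_apply_eq_sum (w j)]
    push_cast
    refine (norm_sum_le _ _).trans ?_
    refine Finset.sum_le_sum fun i _ => ?_
    rw [norm_smul]
    have hbi : ‖(b i : H)‖ = 1 := by
      have := b.orthonormal.1 i
      exact this
    rw [hbi, mul_one, Real.norm_eq_abs, real_inner_comm]
  have hQ : Tendsto (fun j => ‖((W.orthogonalProjectionOnto (w j)) : H)‖) atTop (𝓝 0) := by
    have hsum : Tendsto (fun j => ∑ i, |⟪w j, ((b i) : H)⟫|) atTop (𝓝 0) := by
      have : Tendsto (fun j => ∑ i : Fin (Module.finrank ℝ W), |⟪w j, ((b i) : H)⟫|) atTop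
          (𝓝 (∑ i : Fin (Module.finrank ℝ W), (0:ℝ))) := by
        refine tendsto_finset_sum _ fun i _ => ?_
        exact (hweak ((b i) : H) (hWN (b i).2)).abs.congr (fun j => rfl) |>.mono_right
          (by rw [abs_zero])
      simpa using this
    exact squeeze_zero (fun j => norm_nonneg _) hQbound hsum
  have hev : ∀ᶠ j in atTop, ‖((W.orthogonalProjectionOnto (w j)) : H)‖ < ε ∧ k₀ < j :=
    (hQ.eventually_lt_const hε).and (eventually_gt_atTop k₀)
  obtain ⟨j, hjQ, hjk⟩ := hev.exists
  set Q : H := ((W.orthogonalProjectionOnto (w j)) : H) with hQdef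
  set v : H := w j - Q with hv
  have hvW : v ∈ Wᗮ := by
    have := Submodule.sub_starProjection_mem_orthogonal (K := W) (w j); rwa [Submodule.starProjection_apply] at this
  have hQW : Q ∈ W := (W.orthogonalProjectionOnto (w j)).2
  have hinner : ⟪v, Q⟫ = 0 := by
    rw [real_inner_comm]
    exact (Submodule.mem_orthogonal _ _).mp hvW Q hQW
  have hpyth : ‖w j‖ ^ 2 = ‖v‖ ^ 2 + ‖Q‖ ^ 2 := by
    have : w j = v + Q := by rw [hv]; abel
    rw [this, norm_add_sq_real, hinner]
    ring
  have hvlow : δ / 2 ≤ ‖v‖ := by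
    have h1 : ‖w j‖ - ‖Q‖ ≤ ‖v‖ := by
      have := norm_sub_norm_le (w j) Q
      rw [← hv] at this
      linarith [le_abs_self (‖w j‖ - ‖Q‖), this]
    linarith [hwl j]
  have hvhigh : ‖v‖ ≤ 2 := by
    nlinarith [hwu j, norm_nonneg v, norm_nonneg Q, norm_nonneg (w j)]
  have hvne : v ≠ 0 := by
    intro h
    rw [h, norm_zero] at hvlow
    linarith
  refine ⟨j, ‖v‖, ‖v‖⁻¹ • v, hjk, norm_smul_inv_norm hvne, Submodule.smul_mem _ _ hvW, ?_,
    hvlow, hvhigh, ?_⟩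
  · have hvN : v ∈ N := by
      rw [hv]
      exact N.sub_mem (hwN j) (hWN hQW)
    exact N.smul_mem _ hvN
  · rw [smul_inv_smul₀ (norm_ne_zero_iff.mpr hvne)]
    have : w j - v = Q := by rw [hv]; abel
    rw [this]
    exact hjQ.le

structure AOState (H : Type*) [NormedAddCommGroup H] [InnerProductSpace ℝ H] where
  n : ℕ
  k : ℕ
  c : ℝ
  e : H
  W : Submodule ℝ H

lemma almost_orthogonal_seq (N : Submodule ℝ H) (w : ℕ → H) (δ : ℝ)
    (hδ : 0 < δ) (hwN : ∀ k, w k ∈ N) (hwl : ∀ k, δ ≤ ‖w k‖) (hwu : ∀ k, ‖w k‖ ≤ 2)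
    (hweak : ∀ z ∈ N, Tendsto (fun k => ⟪w k, z⟫) atTop (𝓝 0))
    (εs : ℕ → ℝ) (hεs : ∀ n, 0 < εs n) (hεsδ : ∀ n, εs n ≤ δ / 2) :
    ∃ (k : ℕ → ℕ) (c : ℕ → ℝ) (e : ℕ → H), StrictMono k ∧ Orthonormal ℝ e ∧
      ∀ n, δ / 2 ≤ c n ∧ c n ≤ 2 ∧ ‖w (k n) - c n • e n‖ ≤ εs n := by
  classical
  set Inv : AOState H → Prop := fun s =>
    s.e ∈ s.W ∧ s.W ≤ N ∧ FiniteDimensional ℝ s.W ∧ ‖s.e‖ = 1 ∧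
      δ / 2 ≤ s.c ∧ s.c ≤ 2 ∧ ‖w s.k - s.c • s.e‖ ≤ εs s.n with hInv
  set Rel : AOState H → AOState H → Prop := fun s t =>
    t.n = s.n + 1 ∧ s.k < t.k ∧ t.W = s.W ⊔ (ℝ ∙ t.e) ∧ t.e ∈ s.Wᗮ with hRel
  have hstep : ∀ s : AOState H, Inv s → ∃ t : AOState H, Inv t ∧ Rel s t := by
    rintro s ⟨-, hWN, hWfin, -, -, -, -⟩
    obtain ⟨k', c', e', hk', he'1, he'W, he'N, hc'1, hc'2, happ⟩ :=
      almost_orthogonal_step N w δ hδ hwN hwl hwu hweak s.k s.W hWfin hWN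
        (hεs (s.n + 1)) (hεsδ (s.n + 1))
    refine ⟨⟨s.n + 1, k', c', e', s.W ⊔ (ℝ ∙ e')⟩, ?_, rfl, hk', rfl, he'W⟩
    refine ⟨Submodule.mem_sup_right (Submodule.mem_span_singleton_self _), ?_, ?_,
      he'1, hc'1, hc'2, happ⟩
    · exact sup_le hWN ((Submodule.span_singleton_le_iff_mem _ _).mpr he'N)
    · haveI := hWfin; infer_instance
  -- initial state
  obtain ⟨k₀, c₀, e₀, -, he01, -, he0N, hc01, hc02, happ0⟩ :=
    almost_orthogonal_step N w δ hδ hwN hwl hwu hweak 0 ⊥ inferInstance bot_le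
      (hεs 0) (hεsδ 0)
  have hInv0 : Inv ⟨0, k₀, c₀, e₀, ℝ ∙ e₀⟩ := by
    refine ⟨Submodule.mem_span_singleton_self _,
      (Submodule.span_singleton_le_iff_mem _ _).mpr he0N, inferInstance,
      he01, hc01, hc02, happ0⟩
  choose step hstep1 hstep2 using fun s : {s : AOState H // Inv s} => hstep s.1 s.2
  let next : {s : AOState H // Inv s} → {s : AOState H // Inv s} := fun s => ⟨step s, hstep1 s⟩
  set sq : ℕ → {s : AOState H // Inv s} := fun n => next^[n] ⟨_, hInv0⟩ with hsq
  have hsqs : ∀ n, sq (n + 1) = next (sq n) := fun n => Function.iterate_succ_apply' _ _ _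
  have hrel : ∀ n, Rel (sq n).1 (sq (n + 1)).1 := by
    intro n
    rw [hsqs n]
    exact hstep2 (sq n)
  have hWmono : ∀ m n, m ≤ n → ((sq m).1.W : Submodule ℝ H) ≤ (sq n).1.W := by
    intro m n hmn
    induction n with
    | zero => have : m = 0 := Nat.le_zero.mp hmn; subst this; exact le_rfl
    | succ p ih =>
      rcases Nat.lt_or_ge m (p + 1) with hlt | hge
      · refine le_trans (ih (Nat.lt_succ_iff.mp hlt)) ?_
        rw [(hrel p).2.2.1]; exact le_sup_left
      · have : m = p + 1 := le_antisymm hmn hge; subst this; exact le_rfl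
  have hnn : ∀ n, (sq n).1.n = n := by
    intro n
    induction n with
    | zero => rfl
    | succ p ih => rw [(hrel p).1, ih]
  refine ⟨fun n => (sq n).1.k, fun n => (sq n).1.c, fun n => (sq n).1.e,
    strictMono_nat_of_lt_succ fun n => (hrel n).2.1, ⟨fun n => (sq n).2.2.2.2.1, ?_⟩,
    fun n => ⟨(sq n).2.2.2.2.2.1, (sq n).2.2.2.2.2.2.1, by
      have := (sq n).2.2.2.2.2.2.2
      rwa [hnn n] at this⟩⟩
  intro i j hij
  have key : ∀ a b : ℕ, a < b → ⟪(sq b).1.e, (sq a).1.e⟫ = 0 := by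
    intro a b hab
    obtain ⟨p, rfl⟩ : ∃ p, b = p + 1 := ⟨b - 1, by omega⟩
    have heb : (sq (p+1)).1.e ∈ ((sq p).1.W)ᗮ := (hrel p).2.2.2
    have hea : (sq a).1.e ∈ (sq p).1.W := hWmono a p (by omega) (sq a).2.1
    rw [real_inner_comm]
    exact (Submodule.mem_orthogonal _ _).mp heb _ hea
  rcases Nat.lt_or_ge i j with h | h
  · rw [real_inner_comm]; exact key i j h
  · exact key j i (lt_of_le_of_ne h (Ne.symm hij))

end Aux

/-- For a set `𝒯` of continuous linear maps from an infinite-dimensional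
real Hilbert space to a real Fréchet space `F`, the set `⋃_{T ∈ 𝒯} T(B_H)` is
relatively compact iff `{T xₙ : T ∈ 𝒯, n ∈ ℕ}` is relatively compact for every
orthonormal sequence `(xₙ)`. -/
theorem set_of_operators_relCompact_iff_relCompact_along_orthonormal
    {H : Type*} [NormedAddCommGroup H] [InnerProductSpace ℝ H] [CompleteSpace H]
    (hH : ¬ FiniteDimensional ℝ H)
    {F : Type*} [AddCommGroup F] [Module ℝ F] [UniformSpace F] [IsUniformAddGroup F]
    [ContinuousSMul ℝ F] [LocallyConvexSpace ℝ F]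
    [FirstCountableTopology F] [T2Space F] [CompleteSpace F]
    (𝒯 : Set (H →L[ℝ] F)) :
    IsCompact (closure (⋃ T ∈ 𝒯, T '' Metric.closedBall (0 : H) 1)) ↔
      ∀ x : ℕ → H, Orthonormal ℝ x →
        IsCompact (closure {y : F | ∃ T ∈ 𝒯, ∃ n : ℕ, y = T (x n)}) := by
  constructor
  · intro hK x hx
    refine hK.of_isClosed_subset isClosed_closure (closure_mono ?_)
    rintro y ⟨T, hT, n, rfl⟩
    refine Set.mem_iUnion₂.mpr ⟨T, hT, x n, ?_, rfl⟩
    simp only [Metric.mem_closedBall, dist_zero_right, hx.1 n, le_refl]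
  · intro hyp
    have hone : ∀ v : H, IsCompact (closure {y : F | ∃ T ∈ 𝒯, y = T v}) :=
      relCompact_single_vector hH 𝒯 hyp
    have hec := equicont_of_pointwise 𝒯 hone
    have ECnull : ∀ (Tn : ℕ → H →L[ℝ] F) (vv : ℕ → H), (∀ n, Tn n ∈ 𝒯) →
        Tendsto (fun n => ‖vv n‖) atTop (𝓝 0) →
        Tendsto (fun n => Tn n (vv n)) atTop (𝓝 (0 : F)) := by
      intro Tn vv hTn hvv
      rw [Filter.tendsto_def]
      intro Wset hW
      obtain ⟨δ', hδ'pos, hδ'⟩ := hec Wset hW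
      have hev : ∀ᶠ n in atTop, ‖vv n‖ < δ' := hvv.eventually_lt_const hδ'pos
      filter_upwards [hev] with n hn
      exact hδ' (Tn n) (hTn n) (vv n) hn.le
    have seqF : ∀ (S : Set F), IsCompact (closure S) → ∀ p : ℕ → F, (∀ n, p n ∈ S) →
        ∃ (a : F) (χ : ℕ → ℕ), StrictMono χ ∧ Tendsto (p ∘ χ) atTop (𝓝 a) := by
      intro S hS p hp
      obtain ⟨a, -, χ, hχ, hconv⟩ := hS.isSeqCompact (fun n => subset_closure (hp n))
      exact ⟨a, χ, hχ, hconv⟩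
    refine isCompact_iff_totallyBounded_isComplete.mpr ⟨?_, isClosed_closure.isComplete⟩
    refine TotallyBounded.closure ?_
    by_contra hTB
    obtain ⟨V, hV, g, hgS, hgsep⟩ := exists_separated_seq hTB
    have contra : ∀ ι2 : ℕ → ℕ, StrictMono ι2 → ∀ L : F,
        Tendsto (fun n => g (ι2 n)) atTop (𝓝 L) → False := by
      intro ι2 hι2 L hL
      obtain ⟨Nc, hNc⟩ := cauchySeq_iff.mp hL.cauchySeq V hV
      exact hgsep (ι2 Nc) (ι2 (Nc + 1)) (hι2.injective.ne (by omega))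
        (hNc Nc le_rfl (Nc + 1) (by omega))
    have hunpack : ∀ n, ∃ T, T ∈ 𝒯 ∧ ∃ v, ‖v‖ ≤ 1 ∧ g n = T v := by
      intro n
      obtain ⟨T, hT, v, hv, hTv⟩ := Set.mem_iUnion₂.mp (hgS n)
      refine ⟨T, hT, v, ?_, hTv.symm⟩
      simpa only [Metric.mem_closedBall, dist_zero_right] using hv
    choose Ts hTs vs hvs hgv using hunpack
    obtain ⟨φ, x, hφ, hxnorm, hxN, hweak⟩ := exists_weak_limit_subseq vs hvs
    set N := (Submodule.span ℝ (Set.range vs)).topologicalClosure with hN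
    set y : ℕ → H := fun k => vs (φ k) - x with hy
    have hyN : ∀ k, y k ∈ N := fun k =>
      N.sub_mem (Submodule.le_topologicalClosure _ (Submodule.subset_span ⟨φ k, rfl⟩)) hxN
    have hynorm : ∀ k, ‖y k‖ ≤ 2 := by
      intro k
      calc ‖y k‖ ≤ ‖vs (φ k)‖ + ‖x‖ := norm_sub_le _ _
      _ ≤ 1 + 1 := add_le_add (hvs _) hxnorm
      _ = 2 := by norm_num
    have hyweak : ∀ z ∈ N, Tendsto (fun k => ⟪y k, z⟫) atTop (𝓝 0) := by
      intro z hz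
      have h1 := hweak z hz
      have heq : (fun k => ⟪y k, z⟫) = fun k => ⟪vs (φ k), z⟫ - ⟪x, z⟫ :=
        funext fun k => inner_sub_left _ _ _
      rw [heq]
      simpa using h1.sub_const ⟪x, z⟫
    obtain ⟨ρ, hρmem, ψ, hψ, hρ⟩ := tendsto_subseq_of_bounded
      (Metric.isBounded_Icc (0:ℝ) 2) (x := fun k => ‖y k‖)
      (fun k => ⟨norm_nonneg _, hynorm k⟩)
    rw [isClosed_Icc.closure_eq] at hρmem
    rcases eq_or_lt_of_le hρmem.1 with hρ0 | hρpos
    · -- vanishing case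
      set j : ℕ → ℕ := fun k => φ (ψ k) with hj
      obtain ⟨a, χ, hχ, hA⟩ := seqF {z : F | ∃ T ∈ 𝒯, z = T x} (hone x)
        (fun k => Ts (j k) x) (fun k => ⟨Ts (j k), hTs _, rfl⟩)
      have hB : Tendsto (fun k => Ts (j (χ k)) (y (ψ (χ k)))) atTop (𝓝 (0 : F)) := by
        refine ECnull _ _ (fun k => hTs _) ?_
        have : Tendsto (fun k => ‖y (ψ k)‖) atTop (𝓝 0) := by rw [hρ0]; exact hρ
        exact this.comp hχ.tendsto_atTop
      have hdecomp : ∀ k, g (j (χ k)) = Ts (j (χ k)) x + Ts (j (χ k)) (y (ψ (χ k))) := by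
        intro k
        rw [hgv (j (χ k))]
        have : vs (j (χ k)) = x + y (ψ (χ k)) := by rw [hy]; simp [hj]
        rw [this, map_add]
      refine contra (j ∘ χ) (hφ.comp (hψ.comp hχ)) (a + 0) ?_
      have := hA.add hB
      refine this.congr fun k => ?_
      simp only [Function.comp_apply]
      exact (hdecomp k).symm
    · -- non-vanishing case
      set δ : ℝ := ρ / 2 with hδdef
      have hδpos : 0 < δ := by positivity
      obtain ⟨K₁, hK₁⟩ := (hρ.eventually_const_lt (show δ < ρ by rw [hδdef]; linarith)).exists_forall_of_atTop
      set ψ' : ℕ → ℕ := fun k => ψ (k + K₁) with hψ'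
      have hψ'mono : StrictMono ψ' := fun a b hab => hψ (by omega)
      set w : ℕ → H := fun k => y (ψ' k) with hw
      have hwN : ∀ k, w k ∈ N := fun k => hyN _
      have hwl : ∀ k, δ ≤ ‖w k‖ := fun k => (hK₁ (k + K₁) (by omega)).le
      have hwu : ∀ k, ‖w k‖ ≤ 2 := fun k => hynorm _
      have hwweak : ∀ z ∈ N, Tendsto (fun k => ⟪w k, z⟫) atTop (𝓝 0) := by
        intro z hz
        exact (hyweak z hz).comp (hψ.tendsto_atTop.comp (tendsto_add_atTop_nat K₁))
      set εs : ℕ → ℝ := fun n => δ / 2 * (1 / (n + 1)) with hεsdef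
      have hεspos : ∀ n, 0 < εs n := by intro n; positivity
      have hεsδ : ∀ n, εs n ≤ δ / 2 := by
        intro n
        rw [hεsdef]
        have h1 : 1 / ((n : ℝ) + 1) ≤ 1 := by
          rw [div_le_one (by positivity)]
          linarith [Nat.cast_nonneg (α := ℝ) n]
        nlinarith
      have hεs0 : Tendsto εs atTop (𝓝 0) := by
        have := tendsto_one_div_add_atTop_nhds_zero_nat.const_mul (δ / 2)
        simpa [hεsdef] using this
      obtain ⟨kk, c, e, hkk, hON, happ⟩ :=
        almost_orthogonal_seq N w δ hδpos hwN hwl hwu hwweak εs hεspos hεsδ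
      set j : ℕ → ℕ := fun n => φ (ψ' (kk n)) with hj
      have hjmono : StrictMono j := hφ.comp (hψ'mono.comp hkk)
      -- first extraction : T x term
      obtain ⟨a, χ₁, hχ₁, hA⟩ := seqF {z : F | ∃ T ∈ 𝒯, z = T x} (hone x)
        (fun n => Ts (j n) x) (fun n => ⟨Ts (j n), hTs _, rfl⟩)
      -- second: scalars
      obtain ⟨cL, -, χ₂, hχ₂, hcL⟩ := tendsto_subseq_of_bounded
        (Metric.isBounded_Icc (δ / 2) 2) (x := fun n => c (χ₁ n))
        (fun n => ⟨(happ _).1, (happ _).2.1⟩)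
      -- third: T e term
      obtain ⟨qL, χ₃, hχ₃, hE⟩ := seqF {z : F | ∃ T ∈ 𝒯, ∃ m, z = T (e m)} (hyp e hON)
        (fun n => Ts (j (χ₁ (χ₂ n))) (e (χ₁ (χ₂ n))))
        (fun n => ⟨Ts (j (χ₁ (χ₂ n))), hTs _, χ₁ (χ₂ n), rfl⟩)
      set τ : ℕ → ℕ := fun n => χ₁ (χ₂ (χ₃ n)) with hτ
      have hτmono : StrictMono τ := hχ₁.comp (hχ₂.comp hχ₃)
      have hB : Tendsto (fun n => Ts (j (τ n)) (w (kk (τ n)) - c (τ n) • e (τ n)))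
          atTop (𝓝 (0 : F)) := by
        refine ECnull _ _ (fun n => hTs _) ?_
        refine squeeze_zero (fun n => norm_nonneg _) (fun n => (happ (τ n)).2.2) ?_
        exact hεs0.comp hτmono.tendsto_atTop
      have hAτ : Tendsto (fun n => Ts (j (τ n)) x) atTop (𝓝 a) := by
        have : (fun n => Ts (j (τ n)) x) = (fun n => Ts (j (χ₁ n)) x) ∘ (fun n => χ₂ (χ₃ n)) :=
          rfl
        rw [this]
        exact hA.comp (hχ₂.comp hχ₃).tendsto_atTop
      have hcτ : Tendsto (fun n => c (τ n)) atTop (𝓝 cL) := by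
        have : (fun n => c (τ n)) = (fun n => c (χ₁ (χ₂ n))) ∘ χ₃ := rfl
        rw [this]
        exact hcL.comp hχ₃.tendsto_atTop
      have hC : Tendsto (fun n => c (τ n) • Ts (j (τ n)) (e (τ n))) atTop (𝓝 (cL • qL)) :=
        hcτ.smul hE
      have hdecomp : ∀ n, g (j n) = Ts (j n) x +
          (Ts (j n) (w (kk n) - c n • e n) + c n • Ts (j n) (e n)) := by
        intro n
        rw [hgv (j n)]
        have h1 : vs (j n) = x + w (kk n) := by rw [hw, hy]; simp [hj]
        have h2 : w (kk n) = (w (kk n) - c n • e n) + c n • e n := by abel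
        rw [h1, map_add]
        congr 1
        conv_lhs => rw [h2]
        rw [map_add, map_smul]
      refine contra (j ∘ τ) (hjmono.comp hτmono) (a + (0 + cL • qL)) ?_
      have := hAτ.add (hB.add hC)
      refine this.congr fun n => ?_
      rw [Function.comp_apply, hdecomp (τ n)]
end

section
/- Let H be an infinite-dimensional real Hilbert space, F a real Fréchet space (a complete metrizable locally convex topological vector space over ℝ), and 𝒯 a set of continuous linear maps from H to F. Then the set ⋃_{T ∈ 𝒯} T(B_H) is relatively compact in F if and only if for every norm-bounded pairwise orthogonal sequence (x_n) in H the set {T x_n : T ∈ 𝒯, n ∈ ℕ} is relatively compact in F. -/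
open Filter Topology Set RealInnerProductSpace

section GS
variable {H : Type*} [NormedAddCommGroup H] [InnerProductSpace ℝ H]

open scoped Classical in
/-- State-based Gram–Schmidt-with-index-selection recursion.
`(gsState w η i).1` is the index selected at step `i - 1` (`0` for `i = 0`), and
`(gsState w η i).2 j` for `j < i` is the `j`-th Gram–Schmidt vector. -/
noncomputable def gsState (w : ℕ → H) (η : ℕ → ℝ) : ℕ → ℕ × (ℕ → H)
  | 0 => (0, fun _ => 0)
  | (i+1) =>
    let s := gsState w η i
    let k : ℕ := if h : ∃ k, s.1 < k ∧ ∀ j < i, |⟪s.2 j, w k⟫| ≤ η i then h.choose else 0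
    (k, fun j => if j = i then w k - ∑ l ∈ Finset.range i, (⟪s.2 l, w k⟫ / (‖s.2 l‖ ^ 2)) • s.2 l
        else s.2 j)

variable (w : ℕ → H) (η : ℕ → ℝ)

noncomputable def gsIdx (i : ℕ) : ℕ := (gsState w η (i+1)).1
noncomputable def gsVec (i : ℕ) : H := (gsState w η (i+1)).2 i

lemma gsState_snd_eq (i j : ℕ) (h : j < i) : (gsState w η i).2 j = gsVec w η j := by
  induction i with
  | zero => omega
  | succ i ih =>
    rcases Nat.lt_succ_iff_lt_or_eq.1 h with h' | h'
    · have : (gsState w η (i+1)).2 j = (gsState w η i).2 j := by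
        simp only [gsState]
        rw [if_neg (by omega)]
      rw [this, ih h']
    · subst h'; rfl

lemma gsVec_eq (i : ℕ) :
    gsVec w η i = w (gsIdx w η i) -
      ∑ l ∈ Finset.range i, (⟪gsVec w η l, w (gsIdx w η i)⟫ / (‖gsVec w η l‖ ^ 2)) • gsVec w η l := by
  have h : gsVec w η i = w ((gsState w η (i+1)).1) -
      ∑ l ∈ Finset.range i,
        (⟪(gsState w η i).2 l, w ((gsState w η (i+1)).1)⟫ / (‖(gsState w η i).2 l‖ ^ 2)) •
          (gsState w η i).2 l := by
    simp only [gsVec, gsIdx, gsState]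
    simp
  rw [h]
  show _ = w ((gsState w η (i+1)).1) - _
  congr 1
  apply Finset.sum_congr rfl
  intro l hl
  rw [gsState_snd_eq w η i l (Finset.mem_range.1 hl)]
  rfl

lemma gsIdx_spec (i : ℕ)
    (hex : ∃ k, (gsState w η i).1 < k ∧ ∀ j < i, |⟪gsVec w η j, w k⟫| ≤ η i) :
    (gsState w η i).1 < gsIdx w η i ∧ ∀ j < i, |⟪gsVec w η j, w (gsIdx w η i)⟫| ≤ η i := by
  classical
  have hex' : ∃ k, (gsState w η i).1 < k ∧ ∀ j < i, |⟪(gsState w η i).2 j, w k⟫| ≤ η i := by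
    obtain ⟨k, h1, h2⟩ := hex
    exact ⟨k, h1, fun j hj => (gsState_snd_eq w η i j hj) ▸ h2 j hj⟩
  have hidx : gsIdx w η i = hex'.choose := by
    simp only [gsIdx, gsState]
    rw [dif_pos hex']
  rw [hidx]
  obtain ⟨h1, h2⟩ := hex'.choose_spec
  exact ⟨h1, fun j hj => (gsState_snd_eq w η i j hj) ▸ h2 j hj⟩

end GS

lemma gs_extract {H : Type*} [NormedAddCommGroup H] [InnerProductSpace ℝ H]
    (w : ℕ → H) (c B δ : ℝ) (hc : 0 < c) (hδ : 0 < δ) (hδc : δ ≤ c/2)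
    (hlow : ∀ k, c ≤ ‖w k‖) (hup : ∀ k, ‖w k‖ ≤ B)
    (htend : ∀ v : H, Tendsto (fun k => ⟪v, w k⟫) atTop (𝓝 0)) :
    ∃ (σ : ℕ → ℕ) (u : ℕ → H), StrictMono σ ∧
      (∀ i j, i ≠ j → ⟪u i, u j⟫ = 0) ∧
      (∀ i, ‖u i‖ ≤ B + δ) ∧ (∀ i, ‖w (σ i) - u i‖ ≤ δ) := by
  set η : ℕ → ℝ := fun i => δ * (c/2) / (i+1) with hη
  have hηpos : ∀ i, 0 < η i := by
    intro i
    apply div_pos (mul_pos hδ (by linarith)) (by positivity)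
  set σ : ℕ → ℕ := gsIdx w η with hσdef
  set u : ℕ → H := gsVec w η with hudef
  -- The invariant, proved by strong induction.
  have Inv : ∀ i, (∀ j, j < i → ⟪u i, u j⟫ = 0) ∧ ‖w (σ i) - u i‖ ≤ δ ∧
      (gsState w η i).1 < σ i := by
    intro i
    induction i using Nat.strong_induction_on with
    | _ i IH =>
    -- previous vectors: norm bounds and pairwise orthogonality
    have hnormlow : ∀ j, j < i → c/2 ≤ ‖u j‖ := by
      intro j hj
      have h1 := (IH j hj).2.1
      have h2 := hlow (σ j)
      have : ‖w (σ j)‖ - ‖w (σ j) - u j‖ ≤ ‖u j‖ := by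
        have := norm_sub_norm_le (w (σ j)) (u j)
        have h3 : ‖w (σ j)‖ - ‖u j‖ ≤ ‖w (σ j) - u j‖ := this
        linarith
      linarith
    have horthprev : ∀ l j, l < i → j < i → l ≠ j → ⟪u l, u j⟫ = 0 := by
      intro l j hl hj hne
      rcases hne.lt_or_gt with h | h
      · rw [real_inner_comm]; exact (IH j hj).1 l h
      · exact (IH l hl).1 j h
    -- the selection succeeds
    have hex : ∃ k, (gsState w η i).1 < k ∧ ∀ j < i, |⟪u j, w k⟫| ≤ η i := by
      have hev : ∀ᶠ k in atTop, ∀ j ∈ Finset.range i, |⟪u j, w k⟫| ≤ η i := by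
        rw [Filter.eventually_all_finset]
        intro j _
        have := (htend (u j)).abs
        simp only [abs_zero] at this
        exact this.eventually_le_const (hηpos i)
      have hgt : ∀ᶠ k in atTop, (gsState w η i).1 < k := eventually_gt_atTop _
      obtain ⟨k, hk1, hk2⟩ := (hgt.and hev).exists
      exact ⟨k, hk1, fun j hj => hk2 j (Finset.mem_range.2 hj)⟩
    obtain ⟨hlt, hsmall⟩ := gsIdx_spec w η i hex
    -- the residual
    set r : H := ∑ l ∈ Finset.range i, (⟪u l, w (σ i)⟫ / (‖u l‖ ^ 2)) • u l with hr
    have hui : u i = w (σ i) - r := gsVec_eq w η i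
    have hwr : w (σ i) - u i = r := by rw [hui]; abel
    have hrnorm : ‖r‖ ≤ δ := by
      have hb : ∀ l ∈ Finset.range i, ‖(⟪u l, w (σ i)⟫ / (‖u l‖ ^ 2)) • u l‖ ≤ η i / (c/2) := by
        intro l hl
        have hl' := Finset.mem_range.1 hl
        have h1 : c/2 ≤ ‖u l‖ := hnormlow l hl'
        have h2 : (0:ℝ) < ‖u l‖ := lt_of_lt_of_le (by linarith) h1
        rw [norm_smul, Real.norm_eq_abs, abs_div, abs_of_nonneg (sq_nonneg ‖u l‖)]
        have h3 : |⟪u l, w (σ i)⟫| / ‖u l‖ ^ 2 * ‖u l‖ = |⟪u l, w (σ i)⟫| / ‖u l‖ := by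
          rw [sq]
          field_simp
        rw [h3]
        exact div_le_div₀ (hηpos i).le (hsmall l hl') (by linarith) h1
      have h4 : ‖r‖ ≤ ∑ _l ∈ Finset.range i, η i / (c/2) := norm_sum_le_of_le _ hb
      have h5 : ∑ _l ∈ Finset.range i, η i / (c/2) = (i : ℝ) * (η i / (c/2)) := by
        rw [Finset.sum_const, Finset.card_range, nsmul_eq_mul]
      have h6 : η i / (c/2) = δ / (i+1) := by
        show δ * (c/2) / (i+1) / (c/2) = δ / (i+1)
        rw [div_div, mul_comm ((i:ℝ)+1) (c/2), ← div_div, mul_div_assoc,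
          div_self (by linarith : c/2 ≠ 0), mul_one]
      have h7 : (i : ℝ) * (δ / (i+1)) ≤ δ := by
        rw [div_eq_inv_mul, ← mul_assoc]
        have hi1 : (0:ℝ) < (i:ℝ) + 1 := by positivity
        have : (i:ℝ) * ((i:ℝ)+1)⁻¹ ≤ 1 := by
          rw [mul_inv_le_iff₀ hi1, one_mul]
          linarith
        nlinarith
      rw [h5, h6] at h4
      linarith
    have horthnew : ∀ j, j < i → ⟪u i, u j⟫ = 0 := by
      intro j hj
      have h2 : (0:ℝ) < ‖u j‖ := lt_of_lt_of_le (by linarith) (hnormlow j hj)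
      have hrj : ⟪r, u j⟫ = ⟪u j, w (σ i)⟫ := by
        rw [hr, sum_inner]
        rw [Finset.sum_eq_single_of_mem j (Finset.mem_range.2 hj)]
        · rw [real_inner_smul_left, real_inner_self_eq_norm_sq]
          field_simp
        · intro l hlmem hlj
          rw [real_inner_smul_left, horthprev l j (Finset.mem_range.1 hlmem) hj hlj, mul_zero]
      rw [hui, inner_sub_left, hrj, real_inner_comm, sub_self]
    exact ⟨horthnew, by rw [hwr]; exact hrnorm, hlt⟩
  refine ⟨σ, u, ?_, ?_, ?_, fun i => (Inv i).2.1⟩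
  · exact strictMono_nat_of_lt_succ fun i => (Inv (i+1)).2.2
  · intro i j hne
    rcases hne.lt_or_gt with h | h
    · rw [real_inner_comm]; exact (Inv j).1 i h
    · exact (Inv i).1 j h
  · intro i
    have : u i = w (σ i) - (w (σ i) - u i) := by abel
    rw [this]
    exact (norm_sub_le _ _).trans (add_le_add (hup _) (Inv i).2.1)

lemma exists_weak_limit {H : Type*} [NormedAddCommGroup H] [InnerProductSpace ℝ H]
    [CompleteSpace H] (x : ℕ → H) (hx : ∀ n, ‖x n‖ ≤ 1) :
    ∃ (φ : ℕ → ℕ) (z : H), StrictMono φ ∧ ‖z‖ ≤ 1 ∧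
      ∀ v : H, Tendsto (fun k => ⟪v, x (φ k)⟫) atTop (𝓝 ⟪v, z⟫) := by
  -- Step 1: extract a subsequence along which all inner products `⟪x j, x k⟫` converge.
  have hbound : ∀ j k, |⟪x j, x k⟫| ≤ 1 := by
    intro j k
    refine (abs_real_inner_le_norm _ _).trans ?_
    calc ‖x j‖ * ‖x k‖ ≤ 1 * 1 := by
          apply mul_le_mul (hx j) (hx k) (norm_nonneg _) zero_le_one
      _ = 1 := one_mul 1
  have hK : IsCompact (Set.pi Set.univ fun _ : ℕ => Icc (-1:ℝ) 1) :=
    isCompact_univ_pi fun _ => isCompact_Icc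
  have hmem : ∀ k, (fun j => ⟪x j, x k⟫) ∈ (Set.pi Set.univ fun _ : ℕ => Icc (-1:ℝ) 1) := by
    intro k j _
    exact abs_le.1 (hbound j k)
  obtain ⟨a, -, φ, hφ, hconv⟩ := hK.isSeqCompact hmem
  have hptconv : ∀ j, Tendsto (fun k => ⟪x j, x (φ k)⟫) atTop (𝓝 (a j)) := by
    rw [tendsto_pi_nhds] at hconv
    exact fun j => hconv j
  -- Step 2: the set of `v` for which `⟪v, x (φ k)⟫` converges is all of `H`.
  set T : Set H := {v | ∃ L, Tendsto (fun k => ⟪v, x (φ k)⟫) atTop (𝓝 L)} with hT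
  have hTx : ∀ j, x j ∈ T := fun j => ⟨a j, hptconv j⟩
  have hTspan : ∀ v ∈ Submodule.span ℝ (Set.range x), v ∈ T := by
    intro v hv
    induction hv using Submodule.span_induction with
    | mem v hvr => obtain ⟨j, rfl⟩ := hvr; exact hTx j
    | zero => exact ⟨0, by simpa [inner_zero_left] using tendsto_const_nhds⟩
    | add v w _ _ hvT hwT =>
        obtain ⟨L1, h1⟩ := hvT
        obtain ⟨L2, h2⟩ := hwT
        exact ⟨L1 + L2, by simpa [inner_add_left] using h1.add h2⟩
    | smul r v _ hvT =>
        obtain ⟨L, h⟩ := hvT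
        exact ⟨r * L, by simpa [real_inner_smul_left] using h.const_mul r⟩
  have hTclosure : ∀ v ∈ closure ((Submodule.span ℝ (Set.range x) : Submodule ℝ H) : Set H),
      v ∈ T := by
    intro v hv
    have hC : CauchySeq (fun k => ⟪v, x (φ k)⟫) := by
      rw [Metric.cauchySeq_iff]
      intro ε hε
      obtain ⟨v', hv'mem, hv'd⟩ := Metric.mem_closure_iff.1 hv (ε/3) (by linarith)
      obtain ⟨L, hL⟩ := hTspan v' hv'mem
      obtain ⟨N, hN⟩ := Metric.cauchySeq_iff.1 hL.cauchySeq (ε/3) (by linarith)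
      refine ⟨N, fun m hm n hn => ?_⟩
      have key : ∀ k, |⟪v, x (φ k)⟫ - ⟪v', x (φ k)⟫| ≤ ‖v - v'‖ := by
        intro k
        rw [← inner_sub_left]
        refine (abs_real_inner_le_norm _ _).trans ?_
        calc ‖v - v'‖ * ‖x (φ k)‖ ≤ ‖v - v'‖ * 1 :=
              mul_le_mul_of_nonneg_left (hx _) (norm_nonneg _)
          _ = ‖v - v'‖ := mul_one _
      have hd : ‖v - v'‖ < ε/3 := by rwa [← dist_eq_norm]
      have h2 := hN m hm n hn
      rw [Real.dist_eq] at h2 ⊢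
      have e1 := key m
      have e2 := key n
      have : ⟪v, x (φ m)⟫ - ⟪v, x (φ n)⟫ =
          (⟪v, x (φ m)⟫ - ⟪v', x (φ m)⟫) + (⟪v', x (φ m)⟫ - ⟪v', x (φ n)⟫)
            + (⟪v', x (φ n)⟫ - ⟪v, x (φ n)⟫) := by ring
      rw [this]
      calc |_ + _ + _| ≤ |⟪v, x (φ m)⟫ - ⟪v', x (φ m)⟫| + |⟪v', x (φ m)⟫ - ⟪v', x (φ n)⟫|
            + |⟪v', x (φ n)⟫ - ⟪v, x (φ n)⟫| := abs_add_three _ _ _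
        _ < ε/3 + ε/3 + ε/3 := by
            have e2' : |⟪v', x (φ n)⟫ - ⟪v, x (φ n)⟫| ≤ ‖v - v'‖ := by
              rw [abs_sub_comm]; exact e2
            have := lt_of_le_of_lt e1 hd
            have := lt_of_le_of_lt e2' hd
            linarith
        _ = ε := by ring
    obtain ⟨L, hL⟩ := cauchySeq_tendsto_of_complete hC
    exact ⟨L, hL⟩
  have hS : ∀ v : H, ∃ L, Tendsto (fun k => ⟪v, x (φ k)⟫) atTop (𝓝 L) := by
    intro v
    set K : Submodule ℝ H := (Submodule.span ℝ (Set.range x)).topologicalClosure with hKdef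
    haveI : CompleteSpace K :=
      (Submodule.isClosed_topologicalClosure _).completeSpace_coe
    have hxK : ∀ n, x n ∈ K :=
      fun n => (Submodule.le_topologicalClosure _) (Submodule.subset_span ⟨n, rfl⟩)
    have hPmem : ((K.orthogonalProjectionOnto v : K) : H) ∈ T := by
      apply hTclosure
      rw [← Submodule.topologicalClosure_coe]
      exact (K.orthogonalProjectionOnto v).2
    obtain ⟨L1, hL1⟩ := hPmem
    have hperp : ∀ k, ⟪v - ((K.orthogonalProjectionOnto v : K) : H), x (φ k)⟫ = 0 := by
      intro k
      have := Submodule.sub_starProjection_mem_orthogonal (K := K) v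
      rw [Submodule.mem_orthogonal] at this
      rw [real_inner_comm]
      exact this _ (hxK _)
    refine ⟨L1, ?_⟩
    refine hL1.congr (fun k => ?_)
    have hsplit : ⟪v, x (φ k)⟫
        = ⟪((K.orthogonalProjectionOnto v : K) : H), x (φ k)⟫
          + ⟪v - ((K.orthogonalProjectionOnto v : K) : H), x (φ k)⟫ := by
      rw [← inner_add_left]
      congr 1
      abel
    rw [hsplit, hperp k, add_zero]
  -- Step 3: package the limit as an element of `H` via the Riesz representation.
  have habs : ∀ v : H, |(hS v).choose| ≤ 1 * ‖v‖ := by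
    intro v
    rw [one_mul]
    refine le_of_tendsto (hS v).choose_spec.abs (Eventually.of_forall fun k => ?_)
    refine (abs_real_inner_le_norm _ _).trans ?_
    calc ‖v‖ * ‖x (φ k)‖ ≤ ‖v‖ * 1 := mul_le_mul_of_nonneg_left (hx _) (norm_nonneg _)
      _ = ‖v‖ := mul_one _
  set gl : H →ₗ[ℝ] ℝ :=
    { toFun := fun v => (hS v).choose
      map_add' := by
        intro v w
        refine tendsto_nhds_unique ((hS (v + w)).choose_spec) ?_
        have := (hS v).choose_spec.add (hS w).choose_spec
        refine this.congr fun k => ?_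
        rw [inner_add_left]
      map_smul' := by
        intro r v
        refine tendsto_nhds_unique ((hS (r • v)).choose_spec) ?_
        have := (hS v).choose_spec.const_mul r
        refine this.congr fun k => ?_
        rw [real_inner_smul_left] } with hgl
  set G : H →L[ℝ] ℝ := gl.mkContinuous 1 (fun v => habs v) with hG
  set z : H := (InnerProductSpace.toDual ℝ H).symm G with hz
  refine ⟨φ, z, hφ, ?_, ?_⟩
  · have h1 : ‖z‖ = ‖G‖ := LinearIsometryEquiv.norm_map _ _
    rw [h1]
    exact LinearMap.mkContinuous_norm_le _ zero_le_one _
  · intro v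
    have h2 : ⟪z, v⟫ = G v := InnerProductSpace.toDual_symm_apply
    rw [real_inner_comm, h2]
    exact (hS v).choose_spec

lemma exists_seminorm_nhds {F : Type*} [AddCommGroup F] [Module ℝ F] [TopologicalSpace F]
    [IsTopologicalAddGroup F] [ContinuousSMul ℝ F] [LocallyConvexSpace ℝ F]
    {V : Set F} (hV : V ∈ 𝓝 (0 : F)) :
    ∃ p : Seminorm ℝ F, Continuous p ∧ {y | p y < 1} ⊆ V := by
  obtain ⟨s, ⟨hs0, hsopen, hsbal, hsconv⟩, hsV⟩ :=
    (nhds_hasBasis_absConvex_open ℝ F).mem_iff.1 hV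
  have hsnhds : s ∈ 𝓝 (0 : F) := hsopen.mem_nhds hs0
  have habs : Absorbent ℝ s := absorbent_nhds_zero hsnhds
  refine ⟨gaugeSeminorm hsbal hsconv habs, ?_, ?_⟩
  · have : (gaugeSeminorm hsbal hsconv habs : F → ℝ) = gauge s := rfl
    rw [this]
    exact continuous_gauge hsconv hsnhds
  · have := gaugeSeminorm_ball_one (hs₀ := hsbal) (hs₁ := hsconv) (hs₂ := habs) hsopen
    rw [Seminorm.ball_zero_eq] at this
    rw [this]
    exact hsV

lemma exists_separated_seq_s8 {F : Type*} [AddCommGroup F] [Module ℝ F] (p : Seminorm ℝ F) {U : Set F} {ε : ℝ}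
    (h : ∀ t : Finset F, ¬ U ⊆ ⋃ y ∈ t, {z | p (z - y) < ε}) :
    ∃ g : ℕ → F, (∀ n, g n ∈ U) ∧ ∀ m n, m < n → ε ≤ p (g n - g m) := by
  classical
  have hch : ∀ t : Finset F, ∃ z, z ∈ U ∧ ∀ y ∈ t, ε ≤ p (z - y) := by
    intro t
    have := h t
    rw [Set.not_subset] at this
    obtain ⟨z, hzU, hz⟩ := this
    refine ⟨z, hzU, fun y hy => ?_⟩
    by_contra hcon
    push_neg at hcon
    exact hz (Set.mem_biUnion hy hcon)
  choose c hcU hcsep using hch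
  let t : ℕ → Finset F := fun n => Nat.rec ∅ (fun m tm => insert (c tm) tm) n
  have ht : ∀ n, t (n+1) = insert (c (t n)) (t n) := fun n => rfl
  have hmono : Monotone t := monotone_nat_of_le_succ fun n => by
    rw [ht]; exact Finset.subset_insert _ _
  refine ⟨fun n => c (t n), fun n => hcU _, fun m n hmn => ?_⟩
  have : c (t m) ∈ t n := by
    have h1 : c (t m) ∈ t (m+1) := by rw [ht]; exact Finset.mem_insert_self _ _
    exact hmono hmn h1
  exact hcsep (t n) _ this

lemma equicont_of_pointwise_s8 {H : Type*} [NormedAddCommGroup H] [InnerProductSpace ℝ H]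
    [CompleteSpace H]
    {F : Type*} [AddCommGroup F] [Module ℝ F] [TopologicalSpace F] [IsTopologicalAddGroup F]
    [ContinuousSMul ℝ F]
    (𝒯 : Set (H →L[ℝ] F)) (p : Seminorm ℝ F) (hp : Continuous p)
    (hbdd : ∀ y : H, BddAbove (range fun A : 𝒯 => p ((A : H →L[ℝ] F) y))) :
    ∃ M : ℝ, 0 < M ∧ ∀ A ∈ 𝒯, ∀ y : H, p (A y) ≤ M * ‖y‖ := by
  set q : 𝒯 → Seminorm ℝ H := fun A => p.comp (A : H →L[ℝ] F).toLinearMap with hq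
  have hqapp : ∀ (A : 𝒯) (y : H), q A y = p ((A : H →L[ℝ] F) y) := fun A y => rfl
  have hbdd' : BddAbove (range q) := by
    rw [Seminorm.bddAbove_range_iff]
    intro y
    exact hbdd y
  have hqc : ∀ A : 𝒯, Continuous (q A) := by
    intro A
    have : (q A : H → ℝ) = fun y => p ((A : H →L[ℝ] F) y) := rfl
    rw [this]
    exact hp.comp (A : H →L[ℝ] F).continuous
  have hsupc : Continuous (⨆ A, q A : Seminorm ℝ H) := by
    have h := Seminorm.continuous_iSup q hqc hbdd'
    rwa [← Seminorm.coe_iSup_eq hbdd'] at h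
  obtain ⟨M, hM, hMle⟩ := Seminorm.bound_of_continuous_normedSpace _ hsupc
  refine ⟨M, hM, fun A hA y => ?_⟩
  have h1 : p (A y) ≤ (⨆ B, q B) y := by
    rw [Seminorm.iSup_apply hbdd']
    exact le_ciSup (hbdd y) ⟨A, hA⟩
  exact h1.trans (hMle y)

/-- For a set `𝒯` of continuous linear maps from an infinite-dimensional
real Hilbert space to a real Fréchet space `F`, the set `⋃_{T ∈ 𝒯} T(B_H)` is
relatively compact iff `{T xₙ : T ∈ 𝒯, n ∈ ℕ}` is relatively compact for every
norm-bounded pairwise orthogonal sequence `(xₙ)`. -/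
theorem set_of_operators_relCompact_iff_relCompact_along_orthogonal
    {H : Type*} [NormedAddCommGroup H] [InnerProductSpace ℝ H] [CompleteSpace H]
    (hH : ¬ FiniteDimensional ℝ H)
    {F : Type*} [AddCommGroup F] [Module ℝ F] [UniformSpace F] [IsUniformAddGroup F]
    [ContinuousSMul ℝ F] [LocallyConvexSpace ℝ F]
    [FirstCountableTopology F] [T2Space F] [CompleteSpace F]
    (𝒯 : Set (H →L[ℝ] F)) :
    IsCompact (closure (⋃ T ∈ 𝒯, T '' Metric.closedBall (0 : H) 1)) ↔
      ∀ x : ℕ → H, (∀ n m, n ≠ m → inner ℝ (x n) (x m) = (0 : ℝ)) →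
        (∃ C : ℝ, ∀ n, ‖x n‖ ≤ C) →
        IsCompact (closure {y : F | ∃ T ∈ 𝒯, ∃ n : ℕ, y = T (x n)}) := by
  constructor
  · intro hU x _ hC
    obtain ⟨C, hC⟩ := hC
    set C' : ℝ := max C 1 with hC'def
    have hC'pos : 0 < C' := lt_of_lt_of_le one_pos (le_max_right _ _)
    set U := ⋃ T ∈ 𝒯, T '' Metric.closedBall (0 : H) 1 with hUdef
    have hsub : {y : F | ∃ T ∈ 𝒯, ∃ n : ℕ, y = T (x n)} ⊆ (C' • ·) '' closure U := by
      rintro y ⟨T, hT, n, rfl⟩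
      refine ⟨T ((C'⁻¹ : ℝ) • x n), subset_closure ?_, ?_⟩
      · refine Set.mem_biUnion hT ⟨(C'⁻¹ : ℝ) • x n, ?_, rfl⟩
        rw [Metric.mem_closedBall, dist_zero_right, norm_smul, norm_inv, Real.norm_of_nonneg hC'pos.le]
        rw [inv_mul_le_one₀ hC'pos]
        exact (hC n).trans (le_max_left _ _)
      · show C' • T ((C'⁻¹ : ℝ) • x n) = T (x n)
        rw [← map_smul, smul_inv_smul₀ hC'pos.ne']
    have hcomp : IsCompact ((C' • ·) '' closure U) := hU.image (continuous_const_smul C')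
    exact hcomp.of_isClosed_subset isClosed_closure
      (closure_minimal hsub hcomp.isClosed)
    
  · intro hyp
    set U := ⋃ T ∈ 𝒯, (T : H →L[ℝ] F) '' Metric.closedBall (0 : H) 1 with hUdef
    have htb : TotallyBounded U := by
      rw [totallyBounded_iff_subset_finite_iUnion_nhds_zero]
      intro V hV
      obtain ⟨p, hpc, hpV⟩ := exists_seminorm_nhds hV
      suffices hnet : ∃ t : Finset F, U ⊆ ⋃ y ∈ t, {z | p (z - y) < 1} by
        obtain ⟨t, ht⟩ := hnet
        refine ⟨(t : Set F), t.finite_toSet, ht.trans ?_⟩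
        intro w hw
        simp only [Set.mem_iUnion] at hw ⊢
        obtain ⟨y, hy, hpy⟩ := hw
        refine ⟨y, hy, ?_⟩
        rw [Set.mem_vadd_set_iff_neg_vadd_mem]
        have : -y +ᵥ w = w - y := by
          simp [vadd_eq_add]
          abel
        rw [this]
        exact hpV hpy
      by_contra hcon
      push_neg at hcon
      obtain ⟨g, hgU, hgsep⟩ := exists_separated_seq_s8 p (fun t => by
        intro hsub
        exact (hcon t) hsub)
      -- unpack g n = Tn n (xx n)
      have hunpack : ∀ n, ∃ T, T ∈ 𝒯 ∧ ∃ xv : H, ‖xv‖ ≤ 1 ∧ g n = T xv := by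
        intro n
        have := hgU n
        rw [hUdef, Set.mem_iUnion₂] at this
        obtain ⟨T, hT, xv, hxv, hTxv⟩ := this
        exact ⟨T, hT, xv, by
          rwa [Metric.mem_closedBall, dist_zero_right] at hxv, hTxv.symm⟩
      choose Tn hTn xx hxx1 hgn using hunpack
      -- pointwise boundedness of `p ∘ A` over `A ∈ 𝒯`
      have hbdd : ∀ y : H, BddAbove (range fun A : 𝒯 => p ((A : H →L[ℝ] F) y)) := by
        intro y
        set zs : ℕ → H := fun n => if n = 0 then y else 0 with hzs
        have horth : ∀ n m, n ≠ m → ⟪zs n, zs m⟫ = 0 := by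
          intro n m hnm
          by_cases hn : n = 0 <;> by_cases hm : m = 0 <;>
            simp [hzs, hn, hm, inner_zero_left, inner_zero_right]
          exact absurd (hn ▸ hm ▸ rfl : n = m) hnm
        have hbd : ∃ C, ∀ n, ‖zs n‖ ≤ C := ⟨‖y‖, fun n => by
          by_cases hn : n = 0 <;> simp [hzs, hn]⟩
        have hcomp := hyp zs horth hbd
        have himg : (range fun A : 𝒯 => p ((A : H →L[ℝ] F) y)) ⊆
            p '' closure {w : F | ∃ T ∈ 𝒯, ∃ n : ℕ, w = T (zs n)} := by
          rintro b ⟨A, rfl⟩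
          exact ⟨(A : H →L[ℝ] F) y, subset_closure ⟨A, A.2, 0, by simp [hzs]⟩, rfl⟩
        exact ((hcomp.image hpc).bddAbove).mono himg
      obtain ⟨M, hM0, hMp⟩ := equicont_of_pointwise_s8 𝒯 p hpc hbdd
      -- weak limit of (xx)
      obtain ⟨φ, z, hφ, hz1, hweak⟩ := exists_weak_limit xx hxx1
      -- compactness of {T z}
      have hTz : IsCompact (closure {w : F | ∃ T ∈ 𝒯, ∃ n : ℕ, w = T
          ((fun n => if n = 0 then z else 0) n)}) := by
        apply hyp
        · intro n m hnm
          by_cases hn : n = 0 <;> by_cases hm : m = 0 <;>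
            simp [hn, hm, inner_zero_left, inner_zero_right]
          exact absurd (hn ▸ hm ▸ rfl : n = m) hnm
        · exact ⟨‖z‖, fun n => by by_cases hn : n = 0 <;> simp [hn]⟩
      have hmemz : ∀ k, Tn (φ k) z ∈ closure {w : F | ∃ T ∈ 𝒯, ∃ n : ℕ, w = T
          ((fun n => if n = 0 then z else 0) n)} :=
        fun k => subset_closure ⟨Tn (φ k), hTn _, 0, by simp⟩
      obtain ⟨v, -, ψ, hψ, hvconv⟩ := hTz.isSeqCompact hmemz
      -- p-convergence of T_{θ m} z to v
      set θ : ℕ → ℕ := fun m => φ (ψ m) with hθ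
      have hθmono : StrictMono θ := hφ.comp hψ
      have hpv : Tendsto (fun m => p (Tn (θ m) z - v)) atTop (𝓝 0) := by
        have h1 : Tendsto (fun m => Tn (θ m) z - v) atTop (𝓝 (v - v)) :=
          hvconv.sub tendsto_const_nhds
        rw [sub_self] at h1
        have h2 := (hpc.tendsto 0).comp h1
        rwa [map_zero] at h2
      obtain ⟨M₁, hM₁⟩ := (eventually_atTop.1 (hpv.eventually_le_const (by norm_num : (0:ℝ) < 1/8)))
      -- separation of b m := Tn (θ m) (xx (θ m) - z)
      set b : ℕ → F := fun m => Tn (θ m) (xx (θ m) - z) with hb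
      have hsep34 : ∀ m m', M₁ ≤ m → M₁ ≤ m' → m ≠ m' → 3/4 ≤ p (b m - b m') := by
        intro m m' hm hm' hmm
        have hbg : ∀ k, b k = g (θ k) - Tn (θ k) z := by
          intro k
          rw [hb]
          simp only [map_sub]
          rw [hgn (θ k)]
        have hone : 1 ≤ p (g (θ m) - g (θ m')) := by
          rcases hmm.lt_or_gt with h | h
          · rw [map_sub_rev]
            exact hgsep _ _ (hθmono h)
          · exact hgsep _ _ (hθmono h)
        have hdecomp : g (θ m) - g (θ m')
            = (b m - b m') + (Tn (θ m) z - v) - (Tn (θ m') z - v) := by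
          rw [hbg m, hbg m']
          abel
        have hptri : p (g (θ m) - g (θ m')) ≤ p (b m - b m') + p (Tn (θ m) z - v)
            + p (Tn (θ m') z - v) := by
          rw [hdecomp]
          calc p ((b m - b m') + (Tn (θ m) z - v) - (Tn (θ m') z - v))
              ≤ p ((b m - b m') + (Tn (θ m) z - v)) + p (Tn (θ m') z - v) :=
                map_sub_le_add p _ _
            _ ≤ p (b m - b m') + p (Tn (θ m) z - v) + p (Tn (θ m') z - v) := by
                have := map_add_le_add p (b m - b m') (Tn (θ m) z - v)
                linarith
        have h8 := hM₁ m hm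
        have h8' := hM₁ m' hm'
        linarith
      -- norms of W m := xx (θ m) - z converge along a subsequence
      set W : ℕ → H := fun m => xx (θ m) - z with hW
      have hWle : ∀ m, ‖W m‖ ≤ 2 := by
        intro m
        rw [hW]
        calc ‖xx (θ m) - z‖ ≤ ‖xx (θ m)‖ + ‖z‖ := norm_sub_le _ _
          _ ≤ 1 + 1 := add_le_add (hxx1 _) hz1
          _ = 2 := by norm_num
      obtain ⟨c, -, ρ, hρ, hcconv⟩ := tendsto_subseq_of_bounded (Metric.isBounded_Icc (0:ℝ) 2)
        (x := fun m => ‖W (m + M₁)‖) (fun m => ⟨norm_nonneg _, hWle _⟩ :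
          ∀ m, ‖W (m + M₁)‖ ∈ Icc (0:ℝ) 2)
      set WW : ℕ → H := fun i => W (ρ i + M₁) with hWW
      set AA : ℕ → (H →L[ℝ] F) := fun i => Tn (θ (ρ i + M₁)) with hAA
      have hWWnorm : Tendsto (fun i => ‖WW i‖) atTop (𝓝 c) := hcconv
      have htendWW : ∀ v' : H, Tendsto (fun i => ⟪v', WW i⟫) atTop (𝓝 0) := by
        intro v'
        have hbase : Tendsto (fun k => ⟪v', xx (φ k) - z⟫) atTop (𝓝 0) := by
          have h1 := (hweak v').sub_const ⟪v', z⟫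
          rw [sub_self] at h1
          refine h1.congr fun k => ?_
          rw [inner_sub_right]
        have hcomp : Tendsto (fun i => ψ (ρ i + M₁)) atTop atTop :=
          hψ.tendsto_atTop.comp ((tendsto_add_atTop_nat M₁).comp hρ.tendsto_atTop)
        exact hbase.comp hcomp
      have hsepWW : ∀ i j, i ≠ j → 3/4 ≤ p (AA i (WW i) - AA j (WW j)) := by
        intro i j hij
        refine hsep34 _ _ (Nat.le_add_left _ _) (Nat.le_add_left _ _) ?_
        intro hconeq
        exact hij (hρ.injective (by omega))
      -- c is bounded below
      have hc38 : 3/8 ≤ M * c := by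
        by_contra hcon'
        push_neg at hcon'
        have hMc : Tendsto (fun i => M * ‖WW i‖) atTop (𝓝 (M * c)) := hWWnorm.const_mul M
        obtain ⟨i0, hi0⟩ := eventually_atTop.1 (hMc.eventually_lt_const hcon')
        have h1 := hsepWW i0 (i0+1) (by omega)
        have h2 : p (AA i0 (WW i0) - AA (i0+1) (WW (i0+1)))
            ≤ M * ‖WW i0‖ + M * ‖WW (i0+1)‖ := by
          calc p (AA i0 (WW i0) - AA (i0+1) (WW (i0+1)))
              ≤ p (AA i0 (WW i0)) + p (AA (i0+1) (WW (i0+1))) := map_sub_le_add p _ _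
            _ ≤ M * ‖WW i0‖ + M * ‖WW (i0+1)‖ :=
                add_le_add (hMp _ (hTn _) _) (hMp _ (hTn _) _)
        have h3 := hi0 i0 le_rfl
        have h4 := hi0 (i0+1) (by omega)
        linarith
      have hcpos : 0 < c := by nlinarith
      -- tail where norms are ≥ c/2
      have hev2 : ∀ᶠ i in atTop, c/2 ≤ ‖WW i‖ :=
        hWWnorm.eventually (eventually_ge_nhds (by linarith))
      obtain ⟨N₂, hN₂⟩ := eventually_atTop.1 hev2
      set w' : ℕ → H := fun i => WW (i + N₂) with hw'
      set A' : ℕ → (H →L[ℝ] F) := fun i => AA (i + N₂) with hA'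
      set δ : ℝ := min (c/4) (3/(32*M)) with hδdef
      have hδpos : 0 < δ := lt_min (by linarith) (by positivity)
      obtain ⟨σ, u, hσm, huorth, hubnd, hres⟩ := gs_extract w' (c/2) 2 δ
        (by linarith) hδpos (by
          rw [hδdef]
          calc min (c/4) (3/(32*M)) ≤ c/4 := min_le_left _ _
            _ = (c/2)/2 := by ring)
        (fun k => hN₂ _ (Nat.le_add_left _ _))
        (fun k => hWle _)
        (fun v' => (htendWW v').comp (tendsto_add_atTop_nat N₂))
      -- apply the hypothesis to the orthogonal sequence u
      have hSu := hyp u huorth ⟨2 + δ, hubnd⟩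
      have hdm : ∀ i, A' (σ i) (u i) ∈ closure {y : F | ∃ T ∈ 𝒯, ∃ n : ℕ, y = T (u n)} :=
        fun i => subset_closure ⟨A' (σ i), hTn _, i, rfl⟩
      obtain ⟨y₀, -, γ, hγ, hdconv⟩ := hSu.isSeqCompact hdm
      -- separation of d i := A' (σ i) (u i)
      have hdsep : ∀ i j, i ≠ j → 9/16 ≤ p (A' (σ i) (u i) - A' (σ j) (u j)) := by
        intro i j hij
        have hsep' : 3/4 ≤ p (A' (σ i) (w' (σ i)) - A' (σ j) (w' (σ j))) := by
          apply hsepWW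
          intro hcontra
          exact hij (hσm.injective (by omega))
        have hsmall : ∀ l, p (A' (σ l) (w' (σ l) - u l)) ≤ 3/32 := by
          intro l
          calc p (A' (σ l) (w' (σ l) - u l)) ≤ M * ‖w' (σ l) - u l‖ := hMp _ (hTn _) _
            _ ≤ M * δ := mul_le_mul_of_nonneg_left (hres l) hM0.le
            _ ≤ M * (3/(32*M)) := mul_le_mul_of_nonneg_left (min_le_right _ _) hM0.le
            _ = 3/32 := by field_simp
        have hdec : A' (σ i) (w' (σ i)) - A' (σ j) (w' (σ j))
            = (A' (σ i) (u i) - A' (σ j) (u j)) + A' (σ i) (w' (σ i) - u i)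
              - A' (σ j) (w' (σ j) - u j) := by
          simp only [map_sub]
          abel
        have htri : p (A' (σ i) (w' (σ i)) - A' (σ j) (w' (σ j)))
            ≤ p (A' (σ i) (u i) - A' (σ j) (u j)) + p (A' (σ i) (w' (σ i) - u i))
              + p (A' (σ j) (w' (σ j) - u j)) := by
          rw [hdec]
          calc p (_ + _ - _) ≤ p ((A' (σ i) (u i) - A' (σ j) (u j)) + A' (σ i) (w' (σ i) - u i))
                + p (A' (σ j) (w' (σ j) - u j)) := map_sub_le_add p _ _
            _ ≤ _ := by
                have := map_add_le_add p (A' (σ i) (u i) - A' (σ j) (u j))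
                  (A' (σ i) (w' (σ i) - u i))
                linarith
        have h1 := hsmall i
        have h2 := hsmall j
        linarith
      -- contradiction with convergence
      have hpd : Tendsto (fun m => p (A' (σ (γ m)) (u (γ m)) - y₀)) atTop (𝓝 0) := by
        have h1 : Tendsto (fun m => A' (σ (γ m)) (u (γ m)) - y₀) atTop (𝓝 (y₀ - y₀)) :=
          hdconv.sub tendsto_const_nhds
        rw [sub_self] at h1
        have h2 := (hpc.tendsto 0).comp h1
        rwa [map_zero] at h2
      obtain ⟨m0, hm0⟩ := eventually_atTop.1 (hpd.eventually_lt_const (by norm_num : (0:ℝ) < 9/32))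
      have hfin1 := hdsep (γ m0) (γ (m0+1)) (fun h => by
        have := hγ.injective h
        omega)
      have hfin2 : p (A' (σ (γ m0)) (u (γ m0)) - A' (σ (γ (m0+1))) (u (γ (m0+1))))
          ≤ p (A' (σ (γ m0)) (u (γ m0)) - y₀) + p (A' (σ (γ (m0+1))) (u (γ (m0+1))) - y₀) := by
        have hdec : A' (σ (γ m0)) (u (γ m0)) - A' (σ (γ (m0+1))) (u (γ (m0+1)))
            = (A' (σ (γ m0)) (u (γ m0)) - y₀) - (A' (σ (γ (m0+1))) (u (γ (m0+1))) - y₀) := by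
          abel
        rw [hdec]
        exact map_sub_le_add p _ _
      have h5 := hm0 m0 le_rfl
      have h6 := hm0 (m0+1) (by omega)
      linarith
    exact htb.closure.isCompact_of_isClosed isClosed_closure
end

section
/- Let H be an infinite-dimensional real Hilbert space, F a real Fréchet space (a complete metrizable locally convex topological vector space over ℝ), and T : H → F a continuous linear map. Then T(B_H) is relatively compact in F if and only if T maps every orthonormal sequence of H to a sequence converging to 0 in F. -/
open Filter Set Metric Submodule Topology

/-- A continuous linear map `T` from an infinite-dimensional real Hilbert
space to a real Fréchet space `F` has `T(B_H)` relatively compact iff `T` maps every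
orthonormal sequence to a null sequence in `F`. -/
theorem operator_relCompact_iff_null_along_orthonormal
    {H : Type*} [NormedAddCommGroup H] [InnerProductSpace ℝ H] [CompleteSpace H]
    (hH : ¬ FiniteDimensional ℝ H)
    {F : Type*} [AddCommGroup F] [Module ℝ F] [UniformSpace F] [IsUniformAddGroup F]
    [ContinuousSMul ℝ F] [LocallyConvexSpace ℝ F]
    [FirstCountableTopology F] [T2Space F] [CompleteSpace F]
    (T : H →L[ℝ] F) :
    IsCompact (closure (T '' Metric.closedBall (0 : H) 1)) ↔
      ∀ x : ℕ → H, Orthonormal ℝ x →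
        Filter.Tendsto (fun n => T (x n)) Filter.atTop (nhds 0) := by
  constructor
  · -- forward direction: compactness implies null along orthonormal sequences
    intro hK x hx
    have weak : ∀ y : H, Tendsto (fun n => (inner ℝ (x n) y : ℝ)) atTop (𝓝 0) := by
      intro y
      have hs : Summable fun i => ‖(inner ℝ (x i) y : ℝ)‖ ^ 2 := hx.inner_products_summable y
      have h2 : Tendsto (fun n => ‖(inner ℝ (x n) y : ℝ)‖ ^ 2) atTop (𝓝 0) :=
        hs.tendsto_atTop_zero
      have h3 : Tendsto (fun n => ‖(inner ℝ (x n) y : ℝ)‖) atTop (𝓝 0) := by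
        have := (Real.continuous_sqrt.tendsto 0).comp h2
        simpa [Function.comp_def, Real.sqrt_sq_eq_abs] using this
      exact tendsto_zero_iff_norm_tendsto_zero.mpr h3
    refine tendsto_of_subseq_tendsto fun ns hns => ?_
    have hmem : ∀ n, T (x (ns n)) ∈ closure (T '' Metric.closedBall (0 : H) 1) :=
      fun n => subset_closure ⟨x (ns n), by simp [mem_closedBall_zero_iff, hx.1 (ns n)], rfl⟩
    obtain ⟨a, -, φ, hφ, hconv⟩ := hK.isSeqCompact hmem
    have ha : a = 0 := by
      by_contra h
      obtain ⟨f, hf⟩ := SeparatingDual.exists_ne_zero (R := ℝ) h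
      set y := (InnerProductSpace.toDual ℝ H).symm (f.comp T) with hy
      have hyz : ∀ z : H, (inner ℝ y z : ℝ) = f (T z) := fun z =>
        InnerProductSpace.toDual_symm_apply
      have h1 : Tendsto (fun n => f (T (x (ns (φ n))))) atTop (𝓝 0) := by
        have hw := (weak y).comp (hns.comp hφ.tendsto_atTop)
        have heq : (fun n => (inner ℝ (x (ns (φ n))) y : ℝ))
            = fun n => f (T (x (ns (φ n)))) :=
          funext fun n => by rw [real_inner_comm, hyz]
        simpa [Function.comp_def, heq] using hw
      have h2 : Tendsto (fun n => f (T (x (ns (φ n))))) atTop (𝓝 (f a)) :=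
        (f.continuous.tendsto a).comp hconv
      exact hf (tendsto_nhds_unique h2 h1)
    exact ⟨φ, by simpa [Function.comp_def, ha] using hconv⟩
  · -- backward direction, by contradiction
    intro hnull
    by_contra hK
    have hTB : ¬ TotallyBounded (T '' Metric.closedBall (0 : H) 1) := fun h =>
      hK (h.closure.isCompact_of_isClosed isClosed_closure)
    rw [totallyBounded_iff_subset_finite_iUnion_nhds_zero] at hTB
    push_neg at hTB
    obtain ⟨V, hV, hVcov⟩ := hTB
    obtain ⟨W, ⟨hW0, hWbal, hWconv⟩, hWV⟩ :=
      (nhds_hasBasis_absConvex ℝ F).mem_iff.1 hV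
    have habs : Absorbent ℝ W := absorbent_nhds_zero hW0
    have hcont : Continuous (gauge W) := continuous_gauge hWconv hW0
    have hU' : {y : F | gauge W y < 1/4} ∈ 𝓝 (0 : F) := by
      have hop : IsOpen {y : F | gauge W y < 1/4} := isOpen_lt hcont continuous_const
      exact hop.mem_nhds (by simp [gauge_zero])
    -- the key claim
    have claim : ∀ E : Submodule ℝ H, FiniteDimensional ℝ E →
        ∃ z : H, ‖z‖ = 1 ∧ z ∈ Eᗮ ∧ 1/4 ≤ gauge W (T z) := by
      by_contra hc
      push_neg at hc
      obtain ⟨E, hEfd, hE⟩ := hc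
      haveI := hEfd
      have bound : ∀ z : H, z ∈ Eᗮ → gauge W (T z) ≤ 1/4 * ‖z‖ := by
        intro z hz
        rcases eq_or_ne z 0 with rfl | h0
        · simp [gauge_zero]
        · have hu : ‖(‖z‖⁻¹ • z)‖ = 1 := by
            rw [norm_smul, norm_inv, norm_norm, inv_mul_cancel₀ (norm_ne_zero_iff.2 h0)]
          have humem : ‖z‖⁻¹ • z ∈ Eᗮ := Eᗮ.smul_mem _ hz
          have hlt := hE _ hu humem
          have hTz : T z = ‖z‖ • T (‖z‖⁻¹ • z) := by
            rw [← map_smul, smul_smul, mul_inv_cancel₀ (norm_ne_zero_iff.2 h0), one_smul]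
          rw [hTz, gauge_smul_of_nonneg (norm_nonneg z), smul_eq_mul]
          calc ‖z‖ * gauge W (T (‖z‖⁻¹ • z)) ≤ ‖z‖ * (1/4) :=
                mul_le_mul_of_nonneg_left hlt.le (norm_nonneg z)
            _ = 1/4 * ‖z‖ := mul_comm _ _
      have key : ∀ v : H, ‖((orthogonalProjection E v : E) : H)‖ ^ 2
          + ‖v - (orthogonalProjection E v : H)‖ ^ 2 = ‖v‖ ^ 2 := by
        intro v
        have hperp : (inner ℝ ((orthogonalProjection E v : E) : H)
            (v - (orthogonalProjection E v : H)) : ℝ) = 0 :=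
          (sub_starProjection_mem_orthogonal v) _ (Submodule.coe_mem _)
        have hid := norm_add_sq_real ((orthogonalProjection E v : E) : H)
          (v - (orthogonalProjection E v : H))
        rw [add_sub_cancel, hperp] at hid
        linarith
      have hsubnorm : ∀ v : H, ‖v - (orthogonalProjection E v : H)‖ ≤ ‖v‖ := by
        intro v
        nlinarith [key v, norm_nonneg v, norm_nonneg (v - (orthogonalProjection E v : H)),
          norm_nonneg ((orthogonalProjection E v : E) : H)]
      have hPnorm : ∀ v : H, ‖((orthogonalProjection E v : E) : H)‖ ≤ ‖v‖ := by
        intro v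
        nlinarith [key v, norm_nonneg v, norm_nonneg (v - (orthogonalProjection E v : H)),
          norm_nonneg ((orthogonalProjection E v : E) : H)]
      have hCcomp : IsCompact (T '' (Subtype.val '' (Metric.closedBall (0 : E) 1))) :=
        ((isCompact_closedBall (0 : E) 1).image continuous_subtype_val).image T.continuous
      obtain ⟨t, ht, hcov⟩ :=
        (totallyBounded_iff_subset_finite_iUnion_nhds_zero.1 hCcomp.totallyBounded)
          {y : F | gauge W y < 1/4} hU'
      refine hVcov t ht ?_
      rintro w ⟨v, hv, rfl⟩
      have hv1 : ‖v‖ ≤ 1 := by simpa [mem_closedBall_zero_iff] using hv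
      have hPvmem : T ((orthogonalProjection E v : E) : H)
          ∈ T '' (Subtype.val '' (Metric.closedBall (0 : E) 1)) := by
        refine ⟨_, ⟨orthogonalProjection E v, ?_, rfl⟩, rfl⟩
        have : ‖(orthogonalProjection E v : E)‖ ≤ 1 := le_trans (hPnorm v) hv1
        simpa [mem_closedBall_zero_iff] using this
      obtain ⟨c, hct, hcU⟩ := mem_iUnion₂.1 (hcov hPvmem)
      have hc2 : gauge W (T ((orthogonalProjection E v : E) : H) - c) < 1/4 := by
        rw [mem_vadd_set_iff_neg_vadd_mem] at hcU
        simpa [neg_add_eq_sub] using hcU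
      have h1 : gauge W (T (v - (orthogonalProjection E v : H))) ≤ 1/4
            * ‖v - (orthogonalProjection E v : H)‖ :=
        bound _ (sub_starProjection_mem_orthogonal v)
      have h2 : ‖v - (orthogonalProjection E v : H)‖ ≤ 1 := le_trans (hsubnorm v) hv1
      have hsplit : T v - c = T (v - (orthogonalProjection E v : H))
          + (T ((orthogonalProjection E v : E) : H) - c) := by
        rw [map_sub]; abel
      have hlt1 : gauge W (T v - c) < 1 := by
        rw [hsplit]
        calc gauge W _ ≤ gauge W (T (v - (orthogonalProjection E v : H)))
              + gauge W (T ((orthogonalProjection E v : E) : H) - c) :=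
              gauge_add_le hWconv habs _ _
          _ < 1 := by nlinarith
      have hmemV : T v - c ∈ V :=
        hWV (gauge_lt_one_subset_self hWconv (mem_of_mem_nhds hW0) habs hlt1)
      exact mem_iUnion₂.2 ⟨c, hct, by rwa [mem_vadd_set_iff_neg_vadd_mem, vadd_eq_add, neg_add_eq_sub]⟩
    -- construct the orthonormal sequence
    choose g hg1 hg2 hg3 using fun l : List H =>
      claim (Submodule.span ℝ {y | y ∈ l}) (FiniteDimensional.span_of_finite ℝ l.finite_toSet)
    let L : ℕ → List H := fun n => Nat.rec [] (fun _ ih => g ih :: ih) n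
    set xs : ℕ → H := fun n => g (L n) with hxs
    have hL : ∀ n, L (n + 1) = xs n :: L n := fun n => rfl
    have hmemL : ∀ m n, m < n → xs m ∈ L n := by
      intro m n
      induction n with
      | zero => omega
      | succ n ih =>
        intro hmn
        rw [hL n, List.mem_cons]
        rcases Nat.lt_succ_iff_lt_or_eq.1 hmn with h | h
        · exact Or.inr (ih h)
        · exact Or.inl (by rw [h])
    have hn1 : ∀ n, ‖xs n‖ = 1 := fun n => hg1 (L n)
    have hzero : ∀ m n, m < n → (inner ℝ (xs m) (xs n) : ℝ) = 0 := by
      intro m n hmn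
      have hm : xs m ∈ Submodule.span ℝ {y | y ∈ L n} :=
        Submodule.subset_span (hmemL m n hmn)
      exact (Submodule.mem_orthogonal _ _).1 (hg2 (L n)) _ hm
    have horth : Orthonormal ℝ xs := by
      rw [orthonormal_iff_ite]
      intro i j
      by_cases h : i = j
      · rw [if_pos h, h, real_inner_self_eq_norm_mul_norm, hn1, one_mul]
      · rw [if_neg h]
        rcases Nat.lt_or_ge i j with hij | hij
        · exact hzero i j hij
        · have hji : j < i := lt_of_le_of_ne hij (Ne.symm h)
          rw [real_inner_comm]
          exact hzero j i hji
    have htend := hnull xs horth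
    obtain ⟨n, hn⟩ := (htend.eventually_mem hU').exists
    exact absurd (hg3 (L n)) (not_le.2 hn)
end

section
/- Let H be an infinite-dimensional real Hilbert space, F a real Fréchet space (a complete metrizable locally convex topological vector space over ℝ), and T : H → F a continuous linear map. Then T(B_H) is relatively compact in F if and only if T maps every norm-bounded pairwise orthogonal sequence of H to a sequence converging to 0 in F. -/
open Filter Set Metric
open scoped Topology Pointwise

/-- Auxiliary: a norm-bounded pairwise orthogonal sequence is weakly null. -/
lemma aux_weak_null {H : Type*} [NormedAddCommGroup H] [InnerProductSpace ℝ H]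
    (x : ℕ → H) (hx : ∀ n m, n ≠ m → inner ℝ (x n) (x m) = (0 : ℝ))
    {C : ℝ} (hC : ∀ n, ‖x n‖ ≤ C) (y : H) :
    Tendsto (fun n => (inner ℝ (x n) y : ℝ)) atTop (𝓝 0) := by
  set s : Set ℕ := {n | x n ≠ 0} with hs
  set v : s → H := fun n => (‖x n.1‖⁻¹ : ℝ) • x n.1 with hv
  have hon : Orthonormal ℝ v := by
    constructor
    · intro i
      have hxi : ‖x i.1‖ ≠ 0 := norm_ne_zero_iff.2 i.2
      simp [hv, norm_smul, inv_mul_cancel₀ hxi]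
    · intro i j hij
      have hij' : (i : ℕ) ≠ (j : ℕ) := fun h => hij (Subtype.ext h)
      simp [hv, real_inner_smul_left, real_inner_smul_right, hx _ _ hij']
  have hsum : Summable (fun i : s => ‖(inner ℝ (v i) y : ℝ)‖ ^ 2) :=
    hon.inner_products_summable y
  have key : ∀ i : s, ‖(inner ℝ (x i.1) y : ℝ)‖ ^ 2 ≤ C ^ 2 * ‖(inner ℝ (v i) y : ℝ)‖ ^ 2 := by
    intro i
    have hxi : ‖x i.1‖ ≠ 0 := norm_ne_zero_iff.2 i.2
    have h1 : (inner ℝ (x i.1) y : ℝ) = ‖x i.1‖ * inner ℝ (v i) y := by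
      rw [hv]
      simp only [real_inner_smul_left]
      rw [← mul_assoc, mul_inv_cancel₀ hxi, one_mul]
    calc ‖(inner ℝ (x i.1) y : ℝ)‖ ^ 2
        = (‖x i.1‖ * ‖(inner ℝ (v i) y : ℝ)‖) ^ 2 := by
          rw [h1, norm_mul, norm_norm]
      _ = ‖x i.1‖ ^ 2 * ‖(inner ℝ (v i) y : ℝ)‖ ^ 2 := by ring
      _ ≤ C ^ 2 * ‖(inner ℝ (v i) y : ℝ)‖ ^ 2 :=
          mul_le_mul_of_nonneg_right
            (pow_le_pow_left₀ (norm_nonneg _) (hC _) 2) (by positivity)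
  have hsub : Summable ((fun n : ℕ => ‖(inner ℝ (x n) y : ℝ)‖ ^ 2) ∘ ((↑) : s → ℕ)) :=
    Summable.of_nonneg_of_le (fun i => pow_nonneg (norm_nonneg _) 2) key (hsum.mul_left _)
  have hsupp : Function.support (fun n : ℕ => ‖(inner ℝ (x n) y : ℝ)‖ ^ 2) ⊆ s := by
    intro n hn
    simp only [Function.mem_support, ne_eq] at hn
    show x n ≠ 0
    intro h0
    exact hn (by simp [h0])
  have hsumℕ : Summable (fun n : ℕ => ‖(inner ℝ (x n) y : ℝ)‖ ^ 2) := by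
    have := summable_subtype_iff_indicator.mp hsub
    rwa [Set.indicator_eq_self.2 hsupp] at this
  have h2 : Tendsto (fun n => ‖(inner ℝ (x n) y : ℝ)‖ ^ 2) atTop (𝓝 0) :=
    hsumℕ.tendsto_atTop_zero
  have h3 : Tendsto (fun n => ‖(inner ℝ (x n) y : ℝ)‖) atTop (𝓝 0) := by
    have := (Real.continuous_sqrt.tendsto 0).comp h2
    simp only [Function.comp_def, Real.sqrt_sq (norm_nonneg _), Real.sqrt_zero] at this
    exact this
  exact tendsto_zero_iff_norm_tendsto_zero.2 h3

/-- A continuous linear map `T` from an infinite-dimensional real Hilbert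
space to a real Fréchet space `F` has `T(B_H)` relatively compact iff `T` maps every
norm-bounded pairwise orthogonal sequence to a null sequence in `F`. -/
theorem operator_relCompact_iff_null_along_orthogonal
    {H : Type*} [NormedAddCommGroup H] [InnerProductSpace ℝ H] [CompleteSpace H]
    (hH : ¬ FiniteDimensional ℝ H)
    {F : Type*} [AddCommGroup F] [Module ℝ F] [UniformSpace F] [IsUniformAddGroup F]
    [ContinuousSMul ℝ F] [LocallyConvexSpace ℝ F]
    [FirstCountableTopology F] [T2Space F] [CompleteSpace F]
    (T : H →L[ℝ] F) :
    IsCompact (closure (T '' Metric.closedBall (0 : H) 1)) ↔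
      ∀ x : ℕ → H, (∀ n m, n ≠ m → inner ℝ (x n) (x m) = (0 : ℝ)) →
        (∃ C : ℝ, ∀ n, ‖x n‖ ≤ C) →
        Filter.Tendsto (fun n => T (x n)) Filter.atTop (nhds 0) := by
  constructor
  · -- compact → null along bounded orthogonal sequences
    intro hK x hx hCex
    obtain ⟨C, hC⟩ := hCex
    set C' : ℝ := max C 1 with hC'def
    have hC'pos : (0 : ℝ) < C' := lt_of_lt_of_le one_pos (le_max_right _ _)
    have hxC' : ∀ n, ‖x n‖ ≤ C' := fun n => (hC n).trans (le_max_left _ _)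
    set K' : Set F := (fun y => C' • y) '' closure (T '' Metric.closedBall (0 : H) 1)
      with hK'def
    have hK'c : IsCompact K' := hK.image (continuous_const_smul C')
    have hmem : ∀ n, T (x n) ∈ K' := by
      intro n
      refine ⟨T (C'⁻¹ • x n), subset_closure ⟨C'⁻¹ • x n, ?_, rfl⟩, ?_⟩
      · rw [Metric.mem_closedBall, dist_zero_right, norm_smul, norm_inv,
          Real.norm_of_nonneg hC'pos.le, inv_mul_le_iff₀ hC'pos, mul_one]
        exact hxC' n
      · show C' • T (C'⁻¹ • x n) = T (x n)
        rw [← map_smul, smul_inv_smul₀ hC'pos.ne']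
    have hweak : ∀ f : F →L[ℝ] ℝ, Tendsto (fun n => f (T (x n))) atTop (𝓝 0) := by
      intro f
      set g : H →L[ℝ] ℝ := f.comp T with hgdef
      set z : H := (InnerProductSpace.toDual ℝ H).symm g with hzdef
      have hg : ∀ w, (inner ℝ z w : ℝ) = f (T w) := by
        intro w
        have hz : InnerProductSpace.toDual ℝ H z = g :=
          (InnerProductSpace.toDual ℝ H).apply_symm_apply g
        rw [← InnerProductSpace.toDual_apply_apply, hz]
        rfl
      have h1 := aux_weak_null x hx hxC' z
      have h2 : Tendsto (fun n => (inner ℝ z (x n) : ℝ)) atTop (𝓝 0) := by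
        simpa [real_inner_comm] using h1
      simpa [hg] using h2
    apply tendsto_of_subseq_tendsto
    intro ns hns
    obtain ⟨a, _haK, φ, hφ, hconv⟩ :=
      hK'c.tendsto_subseq (x := fun k => T (x (ns k))) (fun k => hmem _)
    have ha0 : a = 0 := by
      by_contra h
      obtain ⟨f, hf⟩ := SeparatingDual.exists_ne_zero (R := ℝ) h
      have h1 : Tendsto (fun k => f (T (x (ns (φ k))))) atTop (𝓝 0) :=
        (hweak f).comp (hns.comp hφ.tendsto_atTop)
      have h2 : Tendsto (fun k => f (T (x (ns (φ k))))) atTop (𝓝 (f a)) :=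
        (f.continuous.tendsto a).comp hconv
      exact hf (tendsto_nhds_unique h2 h1)
    exact ⟨φ, ha0 ▸ hconv⟩
  · -- null along bounded orthogonal sequences → totally bounded → compact closure
    intro hseq
    have hTB : TotallyBounded (T '' Metric.closedBall (0 : H) 1) := by
      rw [totallyBounded_iff_subset_finite_iUnion_nhds_zero]
      intro W hW
      by_contra hcon
      push_neg at hcon
      obtain ⟨U₀, hU₀, hhalf⟩ := exists_nhds_zero_half hW
      obtain ⟨U, ⟨hU0, hUopen, hUbal, hUconv⟩, hUsub⟩ :=
        (nhds_hasBasis_absConvex_open ℝ F).mem_iff.1 hU₀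
      -- key claim: for every finite set there is a unit vector orthogonal to it
      -- whose image avoids U
      have claim : ∀ s : Finset H, (∀ y ∈ s, ‖y‖ = 1 ∧ T y ∉ U) →
          ∃ z, (‖z‖ = 1 ∧ T z ∉ U) ∧ ∀ y ∈ s, (inner ℝ y z : ℝ) = 0 := by
        intro s _hs
        set V : Submodule ℝ H := Submodule.span ℝ (s : Set H) with hVdef
        haveI : FiniteDimensional ℝ V := inferInstance
        by_contra hno
        push_neg at hno
        have hU' : ∀ w : H, w ∈ Vᗮ → ‖w‖ ≤ 1 → T w ∈ U := by
          intro w hw hw1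
          rcases eq_or_ne w 0 with rfl | hw0
          · simpa using hU0
          · set z : H := (‖w‖⁻¹ : ℝ) • w with hz
            have hnw : ‖w‖ ≠ 0 := norm_ne_zero_iff.2 hw0
            have hz1 : ‖z‖ = 1 := by
              rw [hz, norm_smul, norm_inv, Real.norm_of_nonneg (norm_nonneg w),
                inv_mul_cancel₀ hnw]
            have hzV : z ∈ Vᗮ := Submodule.smul_mem _ _ hw
            have hzU : T z ∈ U := by
              by_contra hzU
              obtain ⟨y, hy, hyz⟩ := hno z ⟨hz1, hzU⟩
              exact hyz ((Submodule.mem_orthogonal _ _).1 hzV y (Submodule.subset_span hy))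
            have hTw : T w = ‖w‖ • T z := by
              rw [← map_smul, hz, smul_smul, mul_inv_cancel₀ hnw, one_smul]
            rw [hTw]
            exact hUbal ‖w‖ (by rwa [Real.norm_of_nonneg (norm_nonneg w)])
              (Set.smul_mem_smul_set hzU)
        -- decompose and cover
        haveI : CompleteSpace V := FiniteDimensional.complete ℝ V
        set K₀ : Set F := (fun v : V => T v) '' Metric.closedBall 0 1 with hK₀def
        have hK₀c : IsCompact K₀ :=
          (isCompact_closedBall _ _).image (T.continuous.comp continuous_subtype_val)
        have hcover : K₀ ⊆ ⋃ y : F, y +ᵥ U := by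
          intro w _
          exact Set.mem_iUnion.2 ⟨w, ⟨0, hU0, by simp⟩⟩
        obtain ⟨t, ht⟩ := hK₀c.elim_finite_subcover (fun y : F => y +ᵥ U)
          (fun y => hUopen.vadd y) hcover
        refine hcon ↑t t.finite_toSet ?_
        rintro _ ⟨xh, hxB, rfl⟩
        have hxn : ‖xh‖ ≤ 1 := by rwa [Metric.mem_closedBall, dist_zero_right] at hxB
        set p : V := Submodule.orthogonalProjection V xh with hpdef
        have hp1 : ‖(p : H)‖ ≤ 1 := by
          calc ‖(p : H)‖ = ‖p‖ := rfl
            _ ≤ ‖Submodule.orthogonalProjection V‖ * ‖xh‖ := (Submodule.orthogonalProjection V).le_opNorm xh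
            _ ≤ 1 * 1 := by
                apply mul_le_mul (Submodule.orthogonalProjectionOnto_norm_le V) hxn (norm_nonneg _)
                exact zero_le_one
            _ = 1 := one_mul 1
        set q : H := xh - (p : H) with hqdef
        have hqV : q ∈ Vᗮ := Submodule.sub_starProjection_mem_orthogonal xh
        have hq1 : ‖q‖ ≤ 1 := by
          have hqeq : q = (Submodule.orthogonalProjection Vᗮ xh : H) := by
            exact (Submodule.starProjection_orthogonal_val xh).symm
          calc ‖q‖ = ‖Submodule.orthogonalProjection Vᗮ xh‖ := by rw [hqeq]; rfl
            _ ≤ ‖Submodule.orthogonalProjection Vᗮ‖ * ‖xh‖ := (Submodule.orthogonalProjection Vᗮ).le_opNorm xh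
            _ ≤ 1 * 1 := by
                apply mul_le_mul (Submodule.orthogonalProjectionOnto_norm_le Vᗮ) hxn (norm_nonneg _)
                exact zero_le_one
            _ = 1 := one_mul 1
        have hTq : T q ∈ U := hU' q hqV hq1
        have hTp : T (p : H) ∈ K₀ := ⟨p, by
          rw [Metric.mem_closedBall, dist_zero_right]; exact hp1, rfl⟩
        obtain ⟨y, hyt, u₁, hu₁, hyu₁⟩ : ∃ y ∈ t, ∃ u₁ ∈ U, y + u₁ = T (p : H) := by
          have := ht hTp
          simp only [Set.mem_iUnion] at this
          obtain ⟨y, hy, hmem'⟩ := this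
          obtain ⟨u₁, hu₁, hvadd⟩ := hmem'
          exact ⟨y, hy, u₁, hu₁, hvadd⟩
        refine Set.mem_iUnion₂.2 ⟨y, hyt, ?_⟩
        refine ⟨u₁ + T q, hhalf u₁ (hUsub hu₁) (T q) (hUsub hTq), ?_⟩
        have hxsum : xh = (p : H) + q := by rw [hqdef]; abel
        show y + (u₁ + T q) = T xh
        rw [hxsum, map_add, ← hyu₁]
        abel
      -- build the orthonormal sequence avoiding U
      haveI hsym : Std.Symm (fun a b : H => (inner ℝ a b : ℝ) = 0) :=
        ⟨fun a b h => by rwa [real_inner_comm]⟩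
      obtain ⟨e, he, horth⟩ := exists_seq_of_forall_finset_exists'
        (fun y : H => ‖y‖ = 1 ∧ T y ∉ U) (fun a b : H => (inner ℝ a b : ℝ) = 0) claim
      have hnull := hseq e (fun n m hnm => horth hnm) ⟨1, fun n => (he n).1.le⟩
      have hev : ∀ᶠ n in atTop, T (e n) ∈ U :=
        hnull.eventually_mem (hUopen.mem_nhds hU0)
      obtain ⟨n, hn⟩ := hev.exists
      exact (he n).2 hn
    exact TotallyBounded.isCompact_of_isClosed hTB.closure isClosed_closure
end

section
/- Let H be an infinite-dimensional real Hilbert space, F a real Fréchet space (a complete metrizable locally convex topological vector space over ℝ), and T : H → F a continuous linear map. If for every maximal orthonormal set S in H (an orthonormal subset of H whose closed linear span is all of H) the image T(S) is relatively compact in F, then T maps every orthonormal sequence of H to a sequence converging to 0 in F. -/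
open Filter Finset Submodule Topology Pointwise RealInnerProductSpace

private def myC : ℕ → ℕ
  | 0 => 0
  | m + 1 => myC m + (m + 1)

private lemma myC_succ (m : ℕ) : myC (m + 1) = myC m + (m + 1) := rfl

private lemma myC_mono : Monotone myC :=
  monotone_nat_of_le_succ fun n => by rw [myC_succ]; omega

private lemma myC_ge (m : ℕ) : m ≤ myC m := by
  induction m with
  | zero => simp [myC]
  | succ n ih => rw [myC_succ]; omega

private lemma exists_extension {H : Type*} [NormedAddCommGroup H] [InnerProductSpace ℝ H]
    [CompleteSpace H] {A : Set H} (hA : Orthonormal ℝ ((↑) : A → H)) :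
    ∃ S : Set H, A ⊆ S ∧ Orthonormal ℝ ((↑) : S → H) ∧
      (Submodule.span ℝ S).topologicalClosure = ⊤ := by
  obtain ⟨w, b, hsub, hb⟩ := hA.exists_hilbertBasis_extension
  refine ⟨w, hsub, ?_, ?_⟩
  · have := b.orthonormal; rwa [hb] at this
  · have := b.dense_span; rwa [hb, Subtype.range_coe] at this

private lemma limit_eq_zero
    {H : Type*} [NormedAddCommGroup H] [InnerProductSpace ℝ H] [CompleteSpace H]
    {F : Type*} [AddCommGroup F] [Module ℝ F] [UniformSpace F] [IsUniformAddGroup F]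
    [ContinuousSMul ℝ F] [LocallyConvexSpace ℝ F]
    [FirstCountableTopology F] [T2Space F] [CompleteSpace F]
    (T : H →L[ℝ] F)
    (hbases : ∀ S : Set H, Orthonormal ℝ ((↑) : S → H) →
      (Submodule.span ℝ S).topologicalClosure = ⊤ →
      IsCompact (closure (T '' S)))
    (x : ℕ → H) (hx : Orthonormal ℝ x) {y : F}
    (hy : Tendsto (fun n => T (x n)) atTop (𝓝 y)) : y = 0 := by
  classical
  by_contra hy0
  -- blocks of consecutive indices, block `m` has size `m + 1`
  set B : ℕ → Finset ℕ := fun m => Finset.Ico (myC m) (myC (m + 1)) with hB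
  have hBcard : ∀ m, (B m).card = m + 1 := by
    intro m; simp [hB, myC_succ]
  have hBdisj : ∀ {m n : ℕ}, m ≠ n → Disjoint (B m) (B n) := by
    intro m n hmn
    rw [Finset.disjoint_left]
    intro i him hin
    simp only [hB, Finset.mem_Ico] at him hin
    rcases lt_or_gt_of_ne hmn with h | h
    · have : myC (m + 1) ≤ myC n := myC_mono h
      omega
    · have : myC (n + 1) ≤ myC m := myC_mono h
      omega
  have hBge : ∀ m, ∀ i ∈ B m, m ≤ i := by
    intro m i hi
    simp only [hB, Finset.mem_Ico] at hi
    exact le_trans (myC_ge m) hi.1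
  set r : ℕ → ℝ := fun m => (Real.sqrt (m + 1))⁻¹ with hr
  have hsq : ∀ m : ℕ, Real.sqrt (m + 1) * Real.sqrt (m + 1) = (m : ℝ) + 1 := by
    intro m
    exact Real.mul_self_sqrt (by positivity)
  have hsqpos : ∀ m : ℕ, 0 < Real.sqrt (m + 1) := by
    intro m; rw [Real.sqrt_pos]; positivity
  set w : ℕ → H := fun m => r m • ∑ i ∈ B m, x i with hw
  have hxi : ∀ i j, ⟪x i, x j⟫ = if i = j then (1 : ℝ) else 0 := orthonormal_iff_ite.mp hx
  have hwo : Orthonormal ℝ w := by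
    rw [orthonormal_iff_ite]
    intro m n
    have hdsum : ∑ i ∈ B m, ∑ j ∈ B n, ⟪x i, x j⟫ = if m = n then ((m : ℝ) + 1) else 0 := by
      have h1 : ∀ i ∈ B m, ∑ j ∈ B n, ⟪x i, x j⟫ = if i ∈ B n then (1 : ℝ) else 0 := by
        intro i _
        simp only [hxi]
        exact Finset.sum_ite_eq (B n) i (fun _ => (1 : ℝ))
      rw [Finset.sum_congr rfl h1]
      by_cases hmn : m = n
      · subst hmn
        simp [Finset.sum_ite_of_true, hBcard m]
      · rw [if_neg hmn]
        apply Finset.sum_eq_zero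
        intro i hi
        rw [if_neg (Finset.disjoint_left.mp (hBdisj hmn) hi)]
    have key : ⟪∑ i ∈ B m, x i, ∑ j ∈ B n, x j⟫ = ∑ i ∈ B m, ∑ j ∈ B n, ⟪x i, x j⟫ := by
      rw [sum_inner]
      exact Finset.sum_congr rfl fun i _ => inner_sum _ _ _
    have hwmn : ⟪w m, w n⟫ = r m * (r n * (∑ i ∈ B m, ∑ j ∈ B n, ⟪x i, x j⟫)) := by
      show ⟪r m • ∑ i ∈ B m, x i, r n • ∑ j ∈ B n, x j⟫ = _
      rw [real_inner_smul_left, real_inner_smul_right, key]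
    rw [hwmn, hdsum]
    by_cases hmn : m = n
    · subst hmn
      rw [if_pos rfl, if_pos rfl, hr]
      have hne : Real.sqrt ((m : ℝ) + 1) ≠ 0 := ne_of_gt (hsqpos m)
      rw [← hsq m]
      field_simp
    · rw [if_neg hmn, if_neg hmn, mul_zero, mul_zero]
  -- averages
  set a : ℕ → F := fun m => ((m : ℝ) + 1)⁻¹ • ∑ i ∈ B m, T (x i) with ha
  have hTw : ∀ m, T (w m) = Real.sqrt (m + 1) • a m := by
    intro m
    have h1 : T (w m) = r m • ∑ i ∈ B m, T (x i) := by
      simp [hw, map_smul, map_sum]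
    have hne : Real.sqrt ((m : ℝ) + 1) ≠ 0 := ne_of_gt (hsqpos m)
    have hscal : r m = Real.sqrt ((m : ℝ) + 1) * ((m : ℝ) + 1)⁻¹ := by
      show (Real.sqrt ((m : ℝ) + 1))⁻¹ = _
      rw [show ((m : ℝ) + 1)⁻¹ = (Real.sqrt ((m : ℝ) + 1))⁻¹ * (Real.sqrt ((m : ℝ) + 1))⁻¹ from by
        rw [← mul_inv, hsq m], ← mul_assoc, mul_inv_cancel₀ hne, one_mul]
    rw [h1, hscal, mul_smul]
  have hay : Tendsto a atTop (𝓝 y) := by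
    rw [(LocallyConvexSpace.convex_basis (𝕜 := ℝ) y).tendsto_right_iff]
    rintro s ⟨hs, hconv⟩
    have h1 : ∀ᶠ n in atTop, T (x n) ∈ s := hy.eventually_mem hs
    obtain ⟨N, hN⟩ := eventually_atTop.mp h1
    filter_upwards [eventually_ge_atTop N] with m hm
    have heq : a m = ∑ i ∈ B m, ((m : ℝ) + 1)⁻¹ • T (x i) := by
      rw [ha]; exact Finset.smul_sum
    rw [heq]
    refine hconv.sum_mem (fun i _ => by positivity) ?_ (fun i hi => hN i ?_)
    · rw [Finset.sum_const, hBcard m, nsmul_eq_mul]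
      push_cast
      field_simp
    · exact le_trans hm (hBge m i hi)
  -- extend range w to a maximal orthonormal set
  have hwinj : Function.Injective w := hwo.linearIndependent.injective
  obtain ⟨S, hSsub, hSo, hSd⟩ := exists_extension ((orthonormal_subtype_range hwinj).mpr hwo)
  have hK : IsCompact (closure (T '' S)) := hbases S hSo hSd
  have hbdd : Bornology.IsVonNBounded ℝ (closure (T '' S)) :=
    hK.totallyBounded.isVonNBounded ℝ
  have hVmem : ({y}ᶜ : Set F) ∈ 𝓝 (0 : F) :=
    IsOpen.mem_nhds isOpen_compl_singleton (by simpa using Ne.symm hy0)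
  obtain ⟨U, hU, hUadd⟩ := exists_nhds_zero_half hVmem
  obtain ⟨W, ⟨hWmem, hWbal⟩, hWU⟩ := (nhds_basis_balanced ℝ F).mem_iff.mp hU
  obtain ⟨ρ, hρ⟩ := absorbs_iff_norm.mp (hbdd hWmem)
  have h1 : ∀ᶠ m in atTop, a m - y ∈ W := by
    have ht : Tendsto (fun m => a m - y) atTop (𝓝 0) := by
      simpa using hay.sub_const y
    exact ht.eventually_mem hWmem
  have h2 : ∀ᶠ m : ℕ in atTop, ρ ≤ Real.sqrt (m + 1) := by
    filter_upwards [eventually_ge_atTop ⌈ρ ^ 2⌉₊] with m hm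
    have h3 : ρ ≤ Real.sqrt (ρ ^ 2) := by
      rw [Real.sqrt_sq_eq_abs]; exact le_abs_self ρ
    refine h3.trans (Real.sqrt_le_sqrt ?_)
    have h4 : (ρ : ℝ) ^ 2 ≤ (⌈ρ ^ 2⌉₊ : ℝ) := Nat.le_ceil _
    have h5 : ((⌈ρ ^ 2⌉₊ : ℕ) : ℝ) ≤ (m : ℝ) := Nat.cast_le.mpr hm
    linarith
  obtain ⟨m, hm1, hm2⟩ := (h1.and h2).exists
  have hTwK : T (w m) ∈ closure (T '' S) :=
    subset_closure ⟨w m, hSsub ⟨m, rfl⟩, rfl⟩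
  have hcs : T (w m) ∈ Real.sqrt ((m : ℝ) + 1) • W := by
    refine hρ _ ?_ hTwK
    rw [Real.norm_of_nonneg (le_of_lt (hsqpos m))]
    exact hm2
  have ham : a m ∈ W := by
    rw [hTw m] at hcs
    exact (Set.smul_mem_smul_set_iff₀ (ne_of_gt (hsqpos m)) W (a m)).mp hcs
  have hmem : a m + -(a m - y) ∈ ({y}ᶜ : Set F) :=
    hUadd _ (hWU ham) _ (hWU (hWbal.neg_mem_iff.mpr hm1))
  have heq : a m + -(a m - y) = y := by abel
  rw [heq] at hmem
  simp at hmem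

/-- If a continuous linear map `T` from an infinite-dimensional real
Hilbert space to a real Fréchet space maps every maximal orthonormal set (orthonormal
set whose closed linear span is all of `H`) into a relatively compact set, then `T`
maps every orthonormal sequence to a null sequence in `F`. -/
theorem null_along_orthonormal_of_relCompact_on_bases
    {H : Type*} [NormedAddCommGroup H] [InnerProductSpace ℝ H] [CompleteSpace H]
    (hH : ¬ FiniteDimensional ℝ H)
    {F : Type*} [AddCommGroup F] [Module ℝ F] [UniformSpace F] [IsUniformAddGroup F]
    [ContinuousSMul ℝ F] [LocallyConvexSpace ℝ F]
    [FirstCountableTopology F] [T2Space F] [CompleteSpace F]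
    (T : H →L[ℝ] F)
    (hbases : ∀ S : Set H, Orthonormal ℝ ((↑) : S → H) →
      (Submodule.span ℝ S).topologicalClosure = ⊤ →
      IsCompact (closure (T '' S))) :
    ∀ x : ℕ → H, Orthonormal ℝ x →
      Filter.Tendsto (fun n => T (x n)) Filter.atTop (nhds 0) := by
  intro x hx
  have hxinj : Function.Injective x := hx.linearIndependent.injective
  obtain ⟨S, hSsub, hSo, hSd⟩ := exists_extension ((orthonormal_subtype_range hxinj).mpr hx)
  have hK : IsCompact (closure (T '' S)) := hbases S hSo hSd
  by_contra hcon
  obtain ⟨U, hU, hfreq⟩ : ∃ U ∈ 𝓝 (0 : F), ∃ᶠ n in atTop, T (x n) ∉ U := by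
    by_contra h
    push_neg at h
    apply hcon
    intro s hs
    have := h s hs
    simpa using this
  obtain ⟨φ, hφ, hφU⟩ := extraction_of_frequently_atTop hfreq
  obtain ⟨z, hz, ψ, hψ, hψt⟩ := hK.tendsto_subseq
    (x := fun n => T (x (φ n)))
    (fun n => subset_closure ⟨x (φ n), hSsub ⟨φ n, rfl⟩, rfl⟩)
  have hz0 : z = 0 := by
    refine limit_eq_zero T hbases (x ∘ (φ ∘ ψ))
      (hx.comp (φ ∘ ψ) (hφ.injective.comp hψ.injective)) ?_
    exact hψt
  rw [hz0] at hψt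
  obtain ⟨n, hn⟩ := (hψt.eventually_mem hU).exists
  exact hφU (ψ n) hn
end

section
/- Let H be a real Hilbert space and let (z_n) be a sequence in H converging weakly to 0 such that ‖z_n‖ ≥ C > 0 for all n and |⟨z_n, z_m⟩| → 0 as n ≠ m and n, m → ∞ (for every ε > 0 there is N with |⟨z_n, z_m⟩| < ε whenever n ≠ m and n, m ≥ N). Then there exist a strictly increasing sequence of indices (n_i) and a pairwise orthogonal sequence (x_i) in H such that ‖x_i − z_{n_i}‖ → 0 as i → ∞. -/
open scoped RealInnerProductSpace

open Filter in
lemma proj_tendsto_of_weakly_null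
    {H : Type*} [NormedAddCommGroup H] [InnerProductSpace ℝ H] [CompleteSpace H]
    (z : ℕ → H)
    (hw : ∀ y : H, Filter.Tendsto (fun n => ⟪z n, y⟫) Filter.atTop (nhds 0))
    (V : Submodule ℝ H) [FiniteDimensional ℝ V] :
    Filter.Tendsto (fun n => ((Submodule.orthogonalProjectionOnto V (z n)) : H)) Filter.atTop (nhds 0) := by
  let b := stdOrthonormalBasis ℝ V
  have hrep : ∀ n, ((Submodule.orthogonalProjectionOnto V (z n)) : H)
      = ∑ i, ⟪(b i : H), z n⟫ • (b i : H) := by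
    intro n
    rw [b.orthogonalProjectionOnto_apply_eq_sum]
    push_cast
    rfl
  simp only [hrep]
  have : Filter.Tendsto (fun n => ∑ i, ⟪(b i : H), z n⟫ • (b i : H))
      Filter.atTop (nhds (∑ i : Fin (Module.finrank ℝ V), (0 : H))) := by
    refine tendsto_finset_sum _ (fun i _ => ?_)
    have h1 : Filter.Tendsto (fun n => ⟪(b i : H), z n⟫) Filter.atTop (nhds 0) := by
      simpa only [real_inner_comm] using hw (b i : H)
    simpa using h1.smul_const (b i : H)
  simpa using this

/-- A weakly null sequence `(zₙ)` in a real Hilbert space with norms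
bounded below by `C > 0` and vanishing off-diagonal inner products admits indices
`n₁ < n₂ < ⋯` and a pairwise orthogonal sequence `(xᵢ)` with `‖xᵢ − z_{nᵢ}‖ → 0`. -/
theorem orthogonal_approximation_of_weakly_null
    {H : Type*} [NormedAddCommGroup H] [InnerProductSpace ℝ H] [CompleteSpace H]
    (z : ℕ → H) (C : ℝ) (hC : 0 < C) (hnorm : ∀ n : ℕ, C ≤ ‖z n‖)
    (hw : ∀ y : H, Filter.Tendsto (fun n => ⟪z n, y⟫) Filter.atTop (nhds 0))
    (hoff : ∀ ε > 0, ∃ N : ℕ, ∀ n m : ℕ, n ≠ m → N ≤ n → N ≤ m → |⟪z n, z m⟫| < ε) :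
    ∃ (φ : ℕ → ℕ) (x : ℕ → H), StrictMono φ ∧
      (∀ i j : ℕ, i ≠ j → ⟪x i, x j⟫ = 0) ∧
      Filter.Tendsto (fun i => ‖x i - z (φ i)‖) Filter.atTop (nhds 0) := by
  classical
  set V : ℕ → Submodule ℝ H := fun k => Submodule.span ℝ (z '' Set.Iic k) with hV
  have hfd : ∀ k, FiniteDimensional ℝ (V k) := fun k =>
    FiniteDimensional.span_of_finite ℝ ((Set.finite_Iic k).image z)
  have hVmono : ∀ {k l : ℕ}, k ≤ l → V k ≤ V l := fun {k l} h =>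
    Submodule.span_mono (Set.image_mono (f := z) (Set.Iic_subset_Iic.mpr h))
  have hzmem : ∀ {m k : ℕ}, m ≤ k → z m ∈ V k := fun {m k} h =>
    Submodule.subset_span ⟨m, h, rfl⟩
  have step : ∀ k i : ℕ, ∃ n : ℕ, k < n ∧
      haveI := hfd k
      ‖((Submodule.orthogonalProjectionOnto (V k)) (z n) : H)‖ < 1 / (i + 1) := by
    intro k i
    haveI := hfd k
    have h1 : Filter.Tendsto (fun n => ‖((Submodule.orthogonalProjectionOnto (V k)) (z n) : H)‖)
        Filter.atTop (nhds 0) :=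
      by simpa using (proj_tendsto_of_weakly_null z hw (V k)).norm
    have h2 : ∀ᶠ n in Filter.atTop,
        ‖((Submodule.orthogonalProjectionOnto (V k)) (z n) : H)‖ < 1 / (i + 1) :=
      h1.eventually (gt_mem_nhds (by positivity))
    exact ((Filter.eventually_gt_atTop k).and h2).exists
  choose f hf1 hf2 using step
  set ψ : ℕ → ℕ := fun i => Nat.rec 0 (fun i prev => f prev i) i with hψ
  have hψsucc : ∀ i, ψ (i + 1) = f (ψ i) i := fun i => rfl
  have hψmono : StrictMono ψ := strictMono_nat_of_lt_succ (fun i => hf1 (ψ i) i)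
  set x : ℕ → H := fun i =>
    haveI := hfd (ψ i)
    z (ψ (i + 1)) - ((Submodule.orthogonalProjectionOnto (V (ψ i))) (z (ψ (i + 1))) : H) with hx
  refine ⟨fun i => ψ (i + 1), x, fun a b h => hψmono (Nat.succ_lt_succ h), ?_, ?_⟩
  · have key : ∀ i j : ℕ, j < i → ⟪x j, x i⟫ = 0 := by
      intro i j hji
      haveI := hfd (ψ i)
      haveI := hfd (ψ j)
      have hxi : x i ∈ (V (ψ i))ᗮ := Submodule.sub_starProjection_mem_orthogonal _
      have hxj : x j ∈ V (ψ i) := by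
        have h1 : z (ψ (j + 1)) ∈ V (ψ i) := hzmem (hψmono.le_iff_le.mpr hji)
        have h2 : ((Submodule.orthogonalProjectionOnto (V (ψ j))) (z (ψ (j + 1))) : H) ∈ V (ψ i) :=
          hVmono (hψmono.le_iff_le.mpr (Nat.le_of_lt hji)) (by
            exact SetLike.coe_mem _)
        exact Submodule.sub_mem _ h1 h2
      exact (Submodule.mem_orthogonal _ _).mp hxi _ hxj
    intro i j hij
    rcases lt_or_gt_of_ne hij with h | h
    · exact key j i h
    · rw [real_inner_comm]; exact key i j h
  · have hbound : ∀ i : ℕ, ‖x i - z (ψ (i + 1))‖ < 1 / (i + 1) := by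
      intro i
      haveI := hfd (ψ i)
      have : x i - z (ψ (i + 1))
          = -((Submodule.orthogonalProjectionOnto (V (ψ i))) (z (ψ (i + 1))) : H) := by
        simp [hx]
      rw [this, norm_neg]
      have h3 := hf2 (ψ i) i
      rwa [← hψsucc i] at h3
    refine tendsto_of_tendsto_of_tendsto_of_le_of_le tendsto_const_nhds
      tendsto_one_div_add_atTop_nhds_zero_nat (fun i => norm_nonneg _)
      (fun i => (hbound i).le)
end

section
/- Let E be a real Banach lattice, F a real Fréchet space (a complete metrizable locally convex topological vector space over ℝ), and 𝒯 a set of linear maps from E to F each of which maps the closed unit ball B_E to a von Neumann bounded subset of F. If the set {T x : T ∈ 𝒯, x ∈ D} is relatively compact in F for every pairwise disjoint set D of norm-one positive elements of E, then the set {T x : T ∈ 𝒯, x ∈ D} is relatively compact in F for every pairwise disjoint norm-bounded subset D of E. -/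
section Aux

variable {E : Type*} [NormedAddCommGroup E] [Lattice E] [HasSolidNorm E]
  [IsOrderedAddMonoid E] [NormedSpace ℝ E]

private lemma aux_pow2 {α : Type*} [Lattice α] [AddCommGroup α]
    [CovariantClass α α (· + ·) (· ≤ ·)] :
    ∀ (k : ℕ) (y : α), 0 ≤ (2 ^ k) • y → 0 ≤ y := by
  intro k
  induction k with
  | zero => intro y h; simpa using h
  | succ k ih =>
    intro y h
    have h2 : (0:α) ≤ (2 ^ k) • (2 • y) := by
      rwa [← mul_nsmul, ← pow_succ']
    have := ih (2 • y) h2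
    exact nsmul_two_semiclosed this

private lemma aux_smul_nonneg {c : ℝ} (hc : 0 ≤ c) {x : E} (hx : 0 ≤ x) : 0 ≤ c • x := by
  have hcont : Continuous fun t : ℝ => t • x := continuous_id.smul continuous_const
  have hS : IsClosed {t : ℝ | (0:E) ≤ t • x} := isClosed_nonneg.preimage hcont
  have hdy : ∀ (m k : ℕ), (0:E) ≤ ((m : ℝ) / 2 ^ k) • x := by
    intro m k
    apply aux_pow2 k
    have h1 : (2 ^ k) • (((m:ℝ) / 2 ^ k) • x) = (m : ℝ) • x := by
      rw [← Nat.cast_smul_eq_nsmul ℝ, smul_smul]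
      congr 1
      push_cast
      field_simp
    rw [h1, Nat.cast_smul_eq_nsmul]
    exact nsmul_nonneg hx m
  have htend : Filter.Tendsto (fun k : ℕ => ((⌊c * 2 ^ k⌋₊ : ℝ) / 2 ^ k))
      Filter.atTop (nhds c) := by
    have hup : ∀ k : ℕ, ((⌊c * 2 ^ k⌋₊ : ℝ) / 2 ^ k) ≤ c := by
      intro k
      rw [div_le_iff₀ (by positivity)]
      exact Nat.floor_le (by positivity)
    have hlow : ∀ k : ℕ, c - (1/2) ^ k ≤ ((⌊c * 2 ^ k⌋₊ : ℝ) / 2 ^ k) := by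
      intro k
      have h2k : (0:ℝ) < 2 ^ k := by positivity
      have hfl : c * 2 ^ k ≤ ⌊c * 2 ^ k⌋₊ + 1 := (Nat.lt_floor_add_one _).le
      have h2 : ((1:ℝ)/2) ^ k = 1 / 2 ^ k := by rw [div_pow]; norm_num
      rw [h2, sub_le_iff_le_add, ← add_div, le_div_iff₀ h2k]
      linarith
    have h0 : Filter.Tendsto (fun k : ℕ => c - (1/2:ℝ) ^ k) Filter.atTop (nhds c) := by
      have := tendsto_pow_atTop_nhds_zero_of_lt_one (by norm_num : (0:ℝ) ≤ 1/2)
        (by norm_num : (1/2:ℝ) < 1)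
      simpa using (tendsto_const_nhds (x := c)).sub this
    exact tendsto_of_tendsto_of_tendsto_of_le_of_le h0 tendsto_const_nhds hlow hup
  have hc' : c ∈ {t : ℝ | (0:E) ≤ t • x} :=
    hS.mem_of_tendsto htend (Filter.Eventually.of_forall fun k => hdy _ k)
  exact hc'

private lemma aux_smul_mono {c : ℝ} (hc : 0 ≤ c) {u v : E} (huv : u ≤ v) :
    c • u ≤ c • v := by
  have := aux_smul_nonneg hc (sub_nonneg.2 huv)
  rwa [smul_sub, sub_nonneg] at this

private lemma aux_smul_mono' {s t : ℝ} (hst : s ≤ t) {x : E} (hx : 0 ≤ x) :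
    s • x ≤ t • x := by
  have := aux_smul_nonneg (sub_nonneg.2 hst) hx
  rwa [sub_smul, sub_nonneg] at this

private lemma aux_disj {x y : E} (hx : 0 ≤ x) (hy : 0 ≤ y) (hxy : x ⊓ y = 0)
    {a b : ℝ} (ha : 0 < a) (hb : 0 < b) : (a • x) ⊓ (b • y) = 0 := by
  set w : E := (a • x) ⊓ (b • y) with hwdef
  set d : ℝ := min a⁻¹ b⁻¹ with hd
  have hd0 : 0 < d := lt_min (inv_pos.2 ha) (inv_pos.2 hb)
  have hw0 : 0 ≤ w := le_inf (aux_smul_nonneg ha.le hx) (aux_smul_nonneg hb.le hy)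
  have h1 : d • w ≤ x := by
    calc d • w ≤ d • (a • x) := aux_smul_mono hd0.le inf_le_left
    _ = (d * a) • x := (smul_smul _ _ _)
    _ ≤ (1:ℝ) • x := aux_smul_mono'
        (by rw [hd]
            calc min a⁻¹ b⁻¹ * a ≤ a⁻¹ * a := by
                  apply mul_le_mul_of_nonneg_right (min_le_left _ _) ha.le
            _ = 1 := inv_mul_cancel₀ ha.ne') hx
    _ = x := one_smul _ _
  have h2 : d • w ≤ y := by
    calc d • w ≤ d • (b • y) := aux_smul_mono hd0.le inf_le_right
    _ = (d * b) • y := (smul_smul _ _ _)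
    _ ≤ (1:ℝ) • y := aux_smul_mono'
        (by rw [hd]
            calc min a⁻¹ b⁻¹ * b ≤ b⁻¹ * b := by
                  apply mul_le_mul_of_nonneg_right (min_le_right _ _) hb.le
            _ = 1 := inv_mul_cancel₀ hb.ne') hy
    _ = y := one_smul _ _
  have hle : d • w ≤ 0 := by rw [← hxy]; exact le_inf h1 h2
  have hz : d • w = 0 := le_antisymm hle (aux_smul_nonneg hd0.le hw0)
  have : w = d⁻¹ • (d • w) := by
    rw [smul_smul, inv_mul_cancel₀ hd0.ne', one_smul]
  rw [this, hz, smul_zero]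

private lemma aux_posPart_le_abs (x : E) : x⁺ ≤ |x| :=
  sup_le (le_abs_self x) (abs_nonneg x)

private lemma aux_negPart_le_abs (x : E) : x⁻ ≤ |x| :=
  sup_le (neg_le_abs x) (abs_nonneg x)

end Aux

/-- For a set `𝒯` of topologically bounded linear maps from a real Banach
lattice `E` to a real Fréchet space `F`: if `{T x : T ∈ 𝒯, x ∈ D}` is relatively compact
for every pairwise disjoint set `D` of norm-one positive elements, then it is relatively
compact for every pairwise disjoint norm-bounded subset `D` of `E`. -/
theorem relCompact_on_disjoint_bounded_of_relCompact_on_disjoint_normalized_positive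
    {E : Type*} [NormedAddCommGroup E] [Lattice E] [HasSolidNorm E]
      [IsOrderedAddMonoid E] [NormedSpace ℝ E] [CompleteSpace E]
    {F : Type*} [AddCommGroup F] [Module ℝ F] [UniformSpace F] [IsUniformAddGroup F]
    [ContinuousSMul ℝ F] [LocallyConvexSpace ℝ F]
    [FirstCountableTopology F] [T2Space F] [CompleteSpace F]
    (𝒯 : Set (E →ₗ[ℝ] F))
    (hbdd : ∀ T ∈ 𝒯, Bornology.IsVonNBounded ℝ (T '' Metric.closedBall (0 : E) 1))
    (hpos : ∀ D : Set E, (∀ x ∈ D, 0 ≤ x ∧ ‖x‖ = 1) →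
      (D.Pairwise fun x y => |x| ⊓ |y| = 0) →
      IsCompact (closure {z : F | ∃ T ∈ 𝒯, ∃ x ∈ D, z = T x})) :
    ∀ D : Set E, (D.Pairwise fun x y => |x| ⊓ |y| = 0) →
      (∃ C : ℝ, ∀ x ∈ D, ‖x‖ ≤ C) →
      IsCompact (closure {z : F | ∃ T ∈ 𝒯, ∃ x ∈ D, z = T x}) := by
  intro D hdisj ⟨C, hC⟩
  set C' : ℝ := max C 0 with hC'
  -- the normalized disjoint positive set
  set D' : Set E := {u | ∃ x ∈ D, (x⁺ ≠ 0 ∧ u = ‖x⁺‖⁻¹ • x⁺) ∨ (x⁻ ≠ 0 ∧ u = ‖x⁻‖⁻¹ • x⁻)}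
    with hD'
  -- facts about parts
  have hpart_le : ∀ x ∈ D, x⁺ ≤ |x| ∧ x⁻ ≤ |x| := fun x _ =>
    ⟨aux_posPart_le_abs x, aux_negPart_le_abs x⟩
  have hmem : ∀ u ∈ D', 0 ≤ u ∧ ‖u‖ = 1 := by
    rintro u ⟨x, hx, (⟨hne, rfl⟩ | ⟨hne, rfl⟩)⟩
    · refine ⟨aux_smul_nonneg (by positivity) (posPart_nonneg x), ?_⟩
      rw [norm_smul, norm_inv, norm_norm, inv_mul_cancel₀ (norm_ne_zero_iff.2 hne)]
    · refine ⟨aux_smul_nonneg (by positivity) (negPart_nonneg x), ?_⟩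
      rw [norm_smul, norm_inv, norm_norm, inv_mul_cancel₀ (norm_ne_zero_iff.2 hne)]
  -- pairwise disjointness of D'
  have hdisj' : D'.Pairwise fun u v => |u| ⊓ |v| = 0 := by
    rintro u ⟨x, hx, hu⟩ v ⟨y, hy, hv⟩ huv
    have key : ∀ (p q : E), 0 ≤ p → 0 ≤ q → p ⊓ q = 0 → (hp : p ≠ 0) → (hq : q ≠ 0) →
        |(‖p‖⁻¹ • p)| ⊓ |(‖q‖⁻¹ • q)| = 0 := by
      intro p q hp hq hpq hp0 hq0
      rw [abs_of_nonneg (aux_smul_nonneg (by positivity) hp),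
        abs_of_nonneg (aux_smul_nonneg (by positivity) hq)]
      exact aux_disj hp hq hpq (inv_pos.2 (norm_pos_iff.mpr hp0)) (inv_pos.2 (norm_pos_iff.mpr hq0))
    have hdxy : x ≠ y → |x| ⊓ |y| = 0 := fun hne => hdisj hx hy hne
    have base : ∀ (p q : E), p ≤ |x| → q ≤ |y| → 0 ≤ p → 0 ≤ q → x ≠ y → p ⊓ q = 0 := by
      intro p q hpa hqa hp hq hne
      refine le_antisymm ?_ (le_inf hp hq)
      rw [← hdxy hne]
      exact inf_le_inf hpa hqa
    rcases hu with ⟨hup, rfl⟩ | ⟨hup, rfl⟩ <;> rcases hv with ⟨hvp, rfl⟩ | ⟨hvp, rfl⟩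
    · by_cases hxy : x = y
      · exact absurd (by rw [hxy]) huv
      · exact key _ _ (posPart_nonneg x) (posPart_nonneg y)
          (base _ _ (hpart_le x hx).1 (hpart_le y hy).1 (posPart_nonneg x)
            (posPart_nonneg y) hxy) hup hvp
    · by_cases hxy : x = y
      · subst hxy
        exact key _ _ (posPart_nonneg x) (negPart_nonneg x)
          (posPart_inf_negPart_eq_zero x) hup hvp
      · exact key _ _ (posPart_nonneg x) (negPart_nonneg y)
          (base _ _ (hpart_le x hx).1 (hpart_le y hy).2 (posPart_nonneg x)
            (negPart_nonneg y) hxy) hup hvp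
    · by_cases hxy : x = y
      · subst hxy
        exact key _ _ (negPart_nonneg x) (posPart_nonneg x)
          (by rw [inf_comm]; exact posPart_inf_negPart_eq_zero x) hup hvp
      · exact key _ _ (negPart_nonneg x) (posPart_nonneg y)
          (base _ _ (hpart_le x hx).2 (hpart_le y hy).1 (negPart_nonneg x)
            (posPart_nonneg y) hxy) hup hvp
    · by_cases hxy : x = y
      · exact absurd (by rw [hxy]) huv
      · exact key _ _ (negPart_nonneg x) (negPart_nonneg y)
          (base _ _ (hpart_le x hx).2 (hpart_le y hy).2 (negPart_nonneg x)
            (negPart_nonneg y) hxy) hup hvp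
  -- the compact set from the hypothesis
  have hK : IsCompact (closure {z : F | ∃ T ∈ 𝒯, ∃ x ∈ D', z = T x}) := hpos D' hmem hdisj'
  set K : Set F := closure {z : F | ∃ T ∈ 𝒯, ∃ x ∈ D', z = T x} with hKdef
  -- the big compact set
  have hcont : Continuous fun p : ℝ × ℝ × F × F => p.1 • p.2.2.1 - p.2.1 • p.2.2.2 := by
    exact (continuous_fst.smul (continuous_snd.comp continuous_snd).fst).sub
      ((continuous_fst.comp continuous_snd).smul (continuous_snd.comp continuous_snd).snd)
  set S : Set F := (fun p : ℝ × ℝ × F × F => p.1 • p.2.2.1 - p.2.1 • p.2.2.2) ''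
    ((Set.Icc 0 C') ×ˢ ((Set.Icc 0 C') ×ˢ ((insert 0 K) ×ˢ (insert 0 K)))) with hSdef
  have hScomp : IsCompact S := by
    exact (isCompact_Icc.prod (isCompact_Icc.prod ((hK.insert 0).prod (hK.insert 0)))).image hcont
  -- inclusion
  have hsub : {z : F | ∃ T ∈ 𝒯, ∃ x ∈ D, z = T x} ⊆ S := by
    rintro z ⟨T, hT, x, hx, rfl⟩
    have hxC : ‖x‖ ≤ C' := (hC x hx).trans (le_max_left _ _)
    have hdecomp : ∀ (p : E), 0 ≤ p → p ≤ |x| → (p ≠ 0 → ‖p‖⁻¹ • p ∈ D') →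
        ∃ s : ℝ, ∃ a ∈ insert (0:F) K, s ∈ Set.Icc (0:ℝ) C' ∧ T p = s • a := by
      intro p hp hple hmemD'
      by_cases hp0 : p = 0
      · refine ⟨0, 0, Set.mem_insert _ _, ⟨le_refl _, le_max_right _ _⟩, ?_⟩
        rw [hp0, map_zero, zero_smul]
      · refine ⟨‖p‖, T (‖p‖⁻¹ • p),
          Set.mem_insert_iff.2 (Or.inr (subset_closure ⟨T, hT, _, hmemD' hp0, rfl⟩)),
          ⟨norm_nonneg _, ?_⟩, ?_⟩
        · calc ‖p‖ ≤ ‖x‖ := norm_le_norm_of_abs_le_abs (by rwa [abs_of_nonneg hp])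
          _ ≤ C' := hxC
        · rw [map_smul, smul_smul, mul_inv_cancel₀ (norm_ne_zero_iff.2 hp0), one_smul]
    obtain ⟨s, a, haK, hsI, hTp⟩ := hdecomp x⁺ (posPart_nonneg x) (aux_posPart_le_abs x)
      (fun h => ⟨x, hx, Or.inl ⟨h, rfl⟩⟩)
    obtain ⟨t, b, hbK, htI, hTn⟩ := hdecomp x⁻ (negPart_nonneg x) (aux_negPart_le_abs x)
      (fun h => ⟨x, hx, Or.inr ⟨h, rfl⟩⟩)
    refine ⟨(s, t, a, b), ⟨hsI, htI, haK, hbK⟩, ?_⟩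
    simp only
    rw [← hTp, ← hTn, ← map_sub, posPart_sub_negPart]
  refine IsCompact.of_isClosed_subset hScomp isClosed_closure
    (closure_minimal hsub hScomp.isClosed)
end

section
/- Let E be a real Banach lattice, F a real Fréchet space (a complete metrizable locally convex topological vector space over ℝ), and 𝒯 a set of linear maps from E to F each of which maps the closed unit ball B_E to a von Neumann bounded subset of F. If for every pairwise disjoint norm-bounded sequence (x_n) of positive elements of E the set {T x_n : T ∈ 𝒯, n ∈ ℕ} is relatively compact in F, then the set {T x : T ∈ 𝒯, x ∈ D} is relatively compact in F for every pairwise disjoint set D of norm-one positive elements of E. -/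
open Set Filter UniformSpace

/-- If every sequence in `s` has a Cauchy subsequence, then `s` is totally bounded. -/
lemma totallyBounded_of_subseq_cauchy {X : Type*} [UniformSpace X] {s : Set X}
    (h : ∀ u : ℕ → X, (∀ n, u n ∈ s) → ∃ φ : ℕ → ℕ, StrictMono φ ∧ CauchySeq (u ∘ φ)) :
    TotallyBounded s := by
  intro V V_in
  by_contra hsub
  push_neg at hsub
  obtain ⟨u, u_in, hu⟩ :
      ∃ u : ℕ → X, (∀ n, u n ∈ s) ∧ ∀ n m, m < n → (u n, u m) ∉ V := by
    have h' : ∀ t : Set X, t.Finite → ∃ c, c ∈ s ∧ ∀ y ∈ t, (c, y) ∉ V := by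
      intro t ht
      have := hsub t ht
      rw [Set.not_subset] at this
      obtain ⟨c, hcs, hc⟩ := this
      refine ⟨c, hcs, fun y hy hmem => hc ?_⟩
      exact Set.mem_biUnion hy hmem
    obtain ⟨u, hu⟩ := seq_of_forall_finite_exists h'
    exact ⟨u, fun n => (hu n).1, fun n m hmn => (hu n).2 (u m) ⟨m, hmn, rfl⟩⟩
  obtain ⟨φ, hφ, hcau⟩ := h u u_in
  obtain ⟨N, hN⟩ : ∃ N, ∀ p q, p ≥ N → q ≥ N → (u (φ p), u (φ q)) ∈ V :=
    hcau.mem_entourage V_in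
  exact hu (φ (N + 1)) (φ N) (hφ (Nat.lt_add_one N)) (hN (N + 1) N N.le_succ le_rfl)

/-- For a set `𝒯` of topologically bounded linear maps from a real Banach
lattice `E` to a real Fréchet space `F`: if `{T xₙ : T ∈ 𝒯, n ∈ ℕ}` is relatively
compact for every pairwise disjoint norm-bounded sequence `(xₙ)` of positive elements,
then `{T x : T ∈ 𝒯, x ∈ D}` is relatively compact for every pairwise disjoint set `D`
of norm-one positive elements. -/
theorem relCompact_on_disjoint_normalized_positive_of_relCompact_on_disjoint_positive_seq
    {E : Type*} [NormedAddCommGroup E] [Lattice E] [HasSolidNorm E] [IsOrderedAddMonoid E] [NormedSpace ℝ E] [CompleteSpace E]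
    {F : Type*} [AddCommGroup F] [Module ℝ F] [UniformSpace F] [IsUniformAddGroup F]
    [ContinuousSMul ℝ F] [LocallyConvexSpace ℝ F]
    [FirstCountableTopology F] [T2Space F] [CompleteSpace F]
    (𝒯 : Set (E →ₗ[ℝ] F))
    (hbdd : ∀ T ∈ 𝒯, Bornology.IsVonNBounded ℝ (T '' Metric.closedBall (0 : E) 1))
    (hseq : ∀ x : ℕ → E, (∀ n, 0 ≤ x n) →
      (∀ n m, n ≠ m → |x n| ⊓ |x m| = 0) → (∃ C : ℝ, ∀ n, ‖x n‖ ≤ C) →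
      IsCompact (closure {z : F | ∃ T ∈ 𝒯, ∃ n : ℕ, z = T (x n)})) :
    ∀ D : Set E, (∀ x ∈ D, 0 ≤ x ∧ ‖x‖ = 1) →
      (D.Pairwise fun x y => |x| ⊓ |y| = 0) →
      IsCompact (closure {z : F | ∃ T ∈ 𝒯, ∃ x ∈ D, z = T x}) := by
  intro D hD hDdisj
  haveI : (uniformity F).IsCountablyGenerated :=
    IsUniformAddGroup.uniformity_countably_generated
  set S : Set F := {z : F | ∃ T ∈ 𝒯, ∃ x ∈ D, z = T x} with hS
  have hTB : TotallyBounded S := by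
    apply totallyBounded_of_subseq_cauchy
    intro u hu
    -- each u n = Tₙ xₙ with xₙ ∈ D; extract data
    choose T hT x hx hux using hu
    -- X := range x is a countable subset of D
    obtain ⟨f, hf⟩ : ∃ f : E → ℕ, Set.InjOn f (Set.range x) :=
      Set.countable_iff_exists_injOn.1 (Set.countable_range x)
    -- enumerate range x padded with zeros
    classical
    set e : ℕ → E := fun n => if h : ∃ y ∈ Set.range x, f y = n then h.choose else 0 with he
    have he_mem : ∀ n, e n = 0 ∨ e n ∈ Set.range x := by
      intro n
      by_cases h : ∃ y ∈ Set.range x, f y = n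
      · right; rw [he]; simp only [dif_pos h]; exact h.choose_spec.1
      · left; rw [he]; simp only [dif_neg h]
    have he_inv : ∀ y ∈ Set.range x, e (f y) = y := by
      intro y hy
      have h : ∃ y' ∈ Set.range x, f y' = f y := ⟨y, hy, rfl⟩
      rw [he]; simp only [dif_pos h]
      exact hf h.choose_spec.1 hy h.choose_spec.2
    have hpos : ∀ n, 0 ≤ e n := by
      intro n
      rcases he_mem n with h | ⟨k, hk⟩
      · rw [h]
      · rw [← hk]; exact (hD _ (hx k)).1
    have hdisj : ∀ n m, n ≠ m → |e n| ⊓ |e m| = 0 := by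
      have key : ∀ a b : E, 0 ≤ a → a = 0 → |a| ⊓ |b| = 0 := by
        intro a b _ ha; rw [ha, abs_zero]
        exact inf_eq_left.2 (abs_nonneg b)
      intro n m hnm
      rcases eq_or_ne (e n) 0 with h | hn
      · exact key _ _ (hpos n) h
      rcases eq_or_ne (e m) 0 with h | hm
      · rw [inf_comm]; exact key _ _ (hpos m) h
      rcases he_mem n with h | hn'
      · exact absurd h hn
      rcases he_mem m with h | hm'
      · exact absurd h hm
      -- both in range x; show they are distinct elements of D
      have hne : e n ≠ e m := by
        intro heq
        apply hnm
        have h1 := he_inv _ hn'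
        have h2 := he_inv _ hm'
        -- f (e n) = n and f (e m) = m ?
        have hfn : ∃ y ∈ Set.range x, f y = n := by
          by_contra h
          exact hn (by rw [he]; simp only [dif_neg h])
        have hfm : ∃ y ∈ Set.range x, f y = m := by
          by_contra h
          exact hm (by rw [he]; simp only [dif_neg h])
        have hn2 : f (e n) = n := by
          conv_lhs => rw [he]
          simp only [dif_pos hfn]
          exact hfn.choose_spec.2
        have hm2 : f (e m) = m := by
          conv_lhs => rw [he]
          simp only [dif_pos hfm]
          exact hfm.choose_spec.2
        rw [← hn2, ← hm2, heq]
      have hnD : e n ∈ D := by obtain ⟨k, hk⟩ := hn'; rw [← hk]; exact hx k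
      have hmD : e m ∈ D := by obtain ⟨k, hk⟩ := hm'; rw [← hk]; exact hx k
      exact hDdisj hnD hmD hne
    have hbd : ∃ C : ℝ, ∀ n, ‖e n‖ ≤ C := by
      refine ⟨1, fun n => ?_⟩
      rcases he_mem n with h | ⟨k, hk⟩
      · rw [h]; simp
      · rw [← hk, (hD _ (hx k)).2]
    have hK := hseq e hpos hdisj hbd
    have husub : ∀ n, u n ∈ closure {z : F | ∃ T ∈ 𝒯, ∃ k : ℕ, z = T (e k)} := by
      intro n
      apply subset_closure
      exact ⟨T n, hT n, f (x n), by rw [he_inv _ ⟨n, rfl⟩, hux n]⟩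
    obtain ⟨p, -, φ, hφ, hconv⟩ := hK.isSeqCompact husub
    exact ⟨φ, hφ, hconv.cauchySeq⟩
  exact TotallyBounded.isCompact_of_isClosed hTB.closure isClosed_closure
end
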